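/- arXiv:2603.29017 — 10 statements merged into one kernel-verified Lean document; each statement's English description precedes it below -/
import Mathlib

section
/- Let Θ : ℝ × (ℝ∖{0}) → ℝ be three times continuously differentiable. Then for all (s,z) with z ≠ 0 one has (1/z²)·Ψ(z²·Ψ(z²·Ψ(Θ/z²)))(s,z) = −2·Ψ(z²·Ψ(Θ/z²))(s,z) − (s/z)·Ψ(z²·Ψ(Θ_s/z))(s,z) − Ψ(z²·Ψ(Θ_z/z))(s,z). -/
/-- The operator `Ψ(Θ)(s,z) = -s·Θ_s(s,z) - z·Θ_z(s,z)`. -/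
noncomputable def Psi (Θ : ℝ → ℝ → ℝ) (s z : ℝ) : ℝ :=
  -s * deriv (fun s' => Θ s' z) s - z * deriv (fun z' => Θ s z') z

open Filter

namespace Stmt3Aux

variable (Θ : ℝ → ℝ → ℝ)

noncomputable def FF : ℝ × ℝ → ℝ := Function.uncurry Θ
noncomputable def F1 : ℝ × ℝ → ℝ := fun q => fderiv ℝ (FF Θ) q (1, 0)
noncomputable def F2 : ℝ × ℝ → ℝ := fun q => fderiv ℝ (FF Θ) q (0, 1)
noncomputable def F11 : ℝ × ℝ → ℝ := fun q => fderiv ℝ (F1 Θ) q (1, 0)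
noncomputable def F12 : ℝ × ℝ → ℝ := fun q => fderiv ℝ (F1 Θ) q (0, 1)
noncomputable def F22 : ℝ × ℝ → ℝ := fun q => fderiv ℝ (F2 Θ) q (0, 1)
noncomputable def F111 : ℝ × ℝ → ℝ := fun q => fderiv ℝ (F11 Θ) q (1, 0)
noncomputable def F112 : ℝ × ℝ → ℝ := fun q => fderiv ℝ (F11 Θ) q (0, 1)
noncomputable def F122 : ℝ × ℝ → ℝ := fun q => fderiv ℝ (F12 Θ) q (0, 1)
noncomputable def F222 : ℝ × ℝ → ℝ := fun q => fderiv ℝ (F22 Θ) q (0, 1)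

lemma isOpenU : IsOpen {p : ℝ × ℝ | p.2 ≠ 0} := isOpen_ne.preimage continuous_snd

variable {Θ}

/-- generic: derivative along the s-line -/
lemma lineS {g : ℝ × ℝ → ℝ} {a b : ℝ} (h : DifferentiableAt ℝ g (a, b)) :
    HasDerivAt (fun x => g (x, b)) (fderiv ℝ g (a, b) (1, 0)) a := by
  have h1 : HasDerivAt (fun x : ℝ => ((x, b) : ℝ × ℝ)) (1, 0) a :=
    (hasDerivAt_id a).prodMk (hasDerivAt_const a b)
  exact (h.hasFDerivAt.comp_hasDerivAt a h1 : _)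

lemma lineZ {g : ℝ × ℝ → ℝ} {a b : ℝ} (h : DifferentiableAt ℝ g (a, b)) :
    HasDerivAt (fun y => g (a, y)) (fderiv ℝ g (a, b) (0, 1)) b := by
  have h1 : HasDerivAt (fun y : ℝ => ((a, y) : ℝ × ℝ)) (0, 1) b :=
    (hasDerivAt_const b a).prodMk (hasDerivAt_id b)
  exact (h.hasFDerivAt.comp_hasDerivAt b h1 : _)

/-- pulling a constant-vector application out of an fderiv -/
lemma fderiv_apply_const {g : ℝ × ℝ → (ℝ × ℝ) →L[ℝ] ℝ} {q : ℝ × ℝ}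
    (h : DifferentiableAt ℝ g q) (v w : ℝ × ℝ) :
    fderiv ℝ (fun p => g p v) q w = fderiv ℝ g q w v := by
  rw [fderiv_clm_apply h (differentiableAt_const v)]
  simp

variable (hΘ : ContDiffOn ℝ 3 (Function.uncurry Θ) {p : ℝ × ℝ | p.2 ≠ 0})

section
include hΘ

lemma cF {q : ℝ × ℝ} (hq : q.2 ≠ 0) : ContDiffAt ℝ 3 (FF Θ) q :=
  hΘ.contDiffAt ((isOpenU).mem_nhds hq)

lemma cG {q : ℝ × ℝ} (hq : q.2 ≠ 0) : ContDiffAt ℝ 2 (fderiv ℝ (FF Θ)) q :=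
  (cF hΘ hq).fderiv_right (by norm_num)

lemma cF1 {q : ℝ × ℝ} (hq : q.2 ≠ 0) : ContDiffAt ℝ 2 (F1 Θ) q :=
  (cG hΘ hq).clm_apply contDiffAt_const

lemma cF2 {q : ℝ × ℝ} (hq : q.2 ≠ 0) : ContDiffAt ℝ 2 (F2 Θ) q :=
  (cG hΘ hq).clm_apply contDiffAt_const

lemma cG1 {q : ℝ × ℝ} (hq : q.2 ≠ 0) : ContDiffAt ℝ 1 (fderiv ℝ (F1 Θ)) q :=
  (cF1 hΘ hq).fderiv_right (by norm_num)

lemma cG2 {q : ℝ × ℝ} (hq : q.2 ≠ 0) : ContDiffAt ℝ 1 (fderiv ℝ (F2 Θ)) q :=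
  (cF2 hΘ hq).fderiv_right (by norm_num)

lemma cF11 {q : ℝ × ℝ} (hq : q.2 ≠ 0) : ContDiffAt ℝ 1 (F11 Θ) q :=
  (cG1 hΘ hq).clm_apply contDiffAt_const

lemma cF12 {q : ℝ × ℝ} (hq : q.2 ≠ 0) : ContDiffAt ℝ 1 (F12 Θ) q :=
  (cG1 hΘ hq).clm_apply contDiffAt_const

lemma cF22 {q : ℝ × ℝ} (hq : q.2 ≠ 0) : ContDiffAt ℝ 1 (F22 Θ) q :=
  (cG2 hΘ hq).clm_apply contDiffAt_const

lemma dFF {q : ℝ × ℝ} (hq : q.2 ≠ 0) : DifferentiableAt ℝ (FF Θ) q :=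
  (cF hΘ hq).differentiableAt (by norm_num)

lemma dF1 {q : ℝ × ℝ} (hq : q.2 ≠ 0) : DifferentiableAt ℝ (F1 Θ) q :=
  (cF1 hΘ hq).differentiableAt (by norm_num)

lemma dF2 {q : ℝ × ℝ} (hq : q.2 ≠ 0) : DifferentiableAt ℝ (F2 Θ) q :=
  (cF2 hΘ hq).differentiableAt (by norm_num)

lemma dF11 {q : ℝ × ℝ} (hq : q.2 ≠ 0) : DifferentiableAt ℝ (F11 Θ) q :=
  (cF11 hΘ hq).differentiableAt (by norm_num)

lemma dF12 {q : ℝ × ℝ} (hq : q.2 ≠ 0) : DifferentiableAt ℝ (F12 Θ) q :=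
  (cF12 hΘ hq).differentiableAt (by norm_num)

lemma dF22 {q : ℝ × ℝ} (hq : q.2 ≠ 0) : DifferentiableAt ℝ (F22 Θ) q :=
  (cF22 hΘ hq).differentiableAt (by norm_num)

/-- Clairaut, order 2: the `s`-derivative of `F2` is `F12`. -/
lemma sym2 {q : ℝ × ℝ} (hq : q.2 ≠ 0) : fderiv ℝ (F2 Θ) q (1, 0) = F12 Θ q := by
  have hmem : {p : ℝ × ℝ | p.2 ≠ 0} ∈ nhds q := (isOpenU).mem_nhds hq
  have hev : ∀ᶠ y in nhds q, HasFDerivAt (FF Θ) (fderiv ℝ (FF Θ) y) y :=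
    eventually_of_mem hmem fun y hy => (dFF hΘ hy).hasFDerivAt
  have hdG : DifferentiableAt ℝ (fderiv ℝ (FF Θ)) q :=
    (cG hΘ hq).differentiableAt (by norm_num)
  have hsym := second_derivative_symmetric_of_eventually hev hdG.hasFDerivAt
      ((1 : ℝ), (0 : ℝ)) ((0 : ℝ), (1 : ℝ))
  have e2 : fderiv ℝ (F2 Θ) q (1, 0) = fderiv ℝ (fderiv ℝ (FF Θ)) q (1, 0) (0, 1) :=
    fderiv_apply_const hdG _ _
  have e1 : fderiv ℝ (F1 Θ) q (0, 1) = fderiv ℝ (fderiv ℝ (FF Θ)) q (0, 1) (1, 0) :=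
    fderiv_apply_const hdG _ _
  rw [F12, e2, e1, hsym]

/-- Clairaut, order 3: the `s`-derivative of `F12` is `F112`. -/
lemma sym112 {q : ℝ × ℝ} (hq : q.2 ≠ 0) : fderiv ℝ (F12 Θ) q (1, 0) = F112 Θ q := by
  have hmem : {p : ℝ × ℝ | p.2 ≠ 0} ∈ nhds q := (isOpenU).mem_nhds hq
  have hev : ∀ᶠ y in nhds q, HasFDerivAt (F1 Θ) (fderiv ℝ (F1 Θ) y) y :=
    eventually_of_mem hmem fun y hy => (dF1 hΘ hy).hasFDerivAt
  have hdG : DifferentiableAt ℝ (fderiv ℝ (F1 Θ)) q :=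
    (cG1 hΘ hq).differentiableAt (by norm_num)
  have hsym := second_derivative_symmetric_of_eventually hev hdG.hasFDerivAt
      ((1 : ℝ), (0 : ℝ)) ((0 : ℝ), (1 : ℝ))
  have e2 : fderiv ℝ (F12 Θ) q (1, 0) = fderiv ℝ (fderiv ℝ (F1 Θ)) q (1, 0) (0, 1) :=
    fderiv_apply_const hdG _ _
  have e1 : fderiv ℝ (F11 Θ) q (0, 1) = fderiv ℝ (fderiv ℝ (F1 Θ)) q (0, 1) (1, 0) :=
    fderiv_apply_const hdG _ _
  rw [F112, e2, e1, hsym]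

/-- Clairaut, order 3: the `s`-derivative of `F22` is `F122`. -/
lemma sym122 {q : ℝ × ℝ} (hq : q.2 ≠ 0) : fderiv ℝ (F22 Θ) q (1, 0) = F122 Θ q := by
  have hmem : {p : ℝ × ℝ | p.2 ≠ 0} ∈ nhds q := (isOpenU).mem_nhds hq
  have hev : ∀ᶠ y in nhds q, HasFDerivAt (F2 Θ) (fderiv ℝ (F2 Θ) y) y :=
    eventually_of_mem hmem fun y hy => (dF2 hΘ hy).hasFDerivAt
  have hdG : DifferentiableAt ℝ (fderiv ℝ (F2 Θ)) q :=
    (cG2 hΘ hq).differentiableAt (by norm_num)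
  have hsym := second_derivative_symmetric_of_eventually hev hdG.hasFDerivAt
      ((1 : ℝ), (0 : ℝ)) ((0 : ℝ), (1 : ℝ))
  have e2 : fderiv ℝ (F22 Θ) q (1, 0) = fderiv ℝ (fderiv ℝ (F2 Θ)) q (1, 0) (0, 1) :=
    fderiv_apply_const hdG _ _
  have e1 : fderiv ℝ (fun p => fderiv ℝ (F2 Θ) p (1, 0)) q (0, 1)
      = fderiv ℝ (fderiv ℝ (F2 Θ)) q (0, 1) (1, 0) :=
    fderiv_apply_const hdG _ _
  have e3 : fderiv ℝ (fun p => fderiv ℝ (F2 Θ) p (1, 0)) q (0, 1) = F122 Θ q := by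
    have heq : (fun p => fderiv ℝ (F2 Θ) p (1, 0)) =ᶠ[nhds q] F12 Θ :=
      eventuallyEq_of_mem hmem fun y hy => sym2 hΘ hy
    rw [heq.fderiv_eq]; rfl
  rw [e2, hsym, ← e1, e3]

/-! ### derivatives of the atoms along coordinate lines -/

lemma aFs {a b : ℝ} (hb : b ≠ 0) :
    HasDerivAt (fun x => Θ x b) (F1 Θ (a, b)) a := lineS (dFF hΘ hb)

lemma aFz {a b : ℝ} (hb : b ≠ 0) :
    HasDerivAt (fun y => Θ a y) (F2 Θ (a, b)) b := lineZ (dFF hΘ hb)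

lemma aF1s {a b : ℝ} (hb : b ≠ 0) :
    HasDerivAt (fun x => F1 Θ (x, b)) (F11 Θ (a, b)) a := lineS (dF1 hΘ hb)

lemma aF1z {a b : ℝ} (hb : b ≠ 0) :
    HasDerivAt (fun y => F1 Θ (a, y)) (F12 Θ (a, b)) b := lineZ (dF1 hΘ hb)

lemma aF2s {a b : ℝ} (hb : b ≠ 0) :
    HasDerivAt (fun x => F2 Θ (x, b)) (F12 Θ (a, b)) a := by
  have := lineS (dF2 hΘ (q := (a, b)) hb)
  rwa [sym2 hΘ hb] at this

lemma aF2z {a b : ℝ} (hb : b ≠ 0) :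
    HasDerivAt (fun y => F2 Θ (a, y)) (F22 Θ (a, b)) b := lineZ (dF2 hΘ hb)

lemma aF11s {a b : ℝ} (hb : b ≠ 0) :
    HasDerivAt (fun x => F11 Θ (x, b)) (F111 Θ (a, b)) a := lineS (dF11 hΘ hb)

lemma aF11z {a b : ℝ} (hb : b ≠ 0) :
    HasDerivAt (fun y => F11 Θ (a, y)) (F112 Θ (a, b)) b := lineZ (dF11 hΘ hb)

lemma aF12s {a b : ℝ} (hb : b ≠ 0) :
    HasDerivAt (fun x => F12 Θ (x, b)) (F112 Θ (a, b)) a := by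
  have := lineS (dF12 hΘ (q := (a, b)) hb)
  rwa [sym112 hΘ hb] at this

lemma aF12z {a b : ℝ} (hb : b ≠ 0) :
    HasDerivAt (fun y => F12 Θ (a, y)) (F122 Θ (a, b)) b := lineZ (dF12 hΘ hb)

lemma aF22s {a b : ℝ} (hb : b ≠ 0) :
    HasDerivAt (fun x => F22 Θ (x, b)) (F122 Θ (a, b)) a := by
  have := lineS (dF22 hΘ (q := (a, b)) hb)
  rwa [sym122 hΘ hb] at this

lemma aF22z {a b : ℝ} (hb : b ≠ 0) :
    HasDerivAt (fun y => F22 Θ (a, y)) (F222 Θ (a, b)) b := lineZ (dF22 hΘ hb)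

/-! ### closed forms for the nested `Psi` expressions -/

lemma hB {a b : ℝ} (hb : b ≠ 0) :
    b ^ 2 * Psi (fun s z => Θ s z / z ^ 2) a b
      = 2 * Θ a b - a * F1 Θ (a, b) - b * F2 Θ (a, b) := by
  have hds : HasDerivAt (fun x => Θ x b / b ^ 2) (F1 Θ (a, b) / b ^ 2) a :=
    (aFs hΘ hb).div_const _
  have hdz := (aFz hΘ hb (a := a)).fun_div (hasDerivAt_pow 2 b) (pow_ne_zero 2 hb)
  simp only [Psi]
  rw [hds.deriv, hdz.deriv]
  push_cast
  field_simp
  ring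

lemma hC {a b : ℝ} (hb : b ≠ 0) :
    Psi (fun s z => z ^ 2 * Psi (fun s z => Θ s z / z ^ 2) s z) a b
      = -a * F1 Θ (a, b) + a ^ 2 * F11 Θ (a, b) + 2 * a * b * F12 Θ (a, b)
        - b * F2 Θ (a, b) + b ^ 2 * F22 Θ (a, b) := by
  have base1 := (((aFs hΘ hb (a := a)).const_mul 2).sub
      ((hasDerivAt_id a).mul (aF1s hΘ hb))).sub ((aF2s hΘ hb).const_mul b)
  have e1 : ∀ x : ℝ, b ^ 2 * Psi (fun s z => Θ s z / z ^ 2) x b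
      = 2 * Θ x b - x * F1 Θ (x, b) - b * F2 Θ (x, b) := fun x => hB hΘ hb
  have hs : HasDerivAt (fun x => b ^ 2 * Psi (fun s z => Θ s z / z ^ 2) x b)
      (2 * F1 Θ (a, b) - (1 * F1 Θ (a, b) + a * F11 Θ (a, b)) - b * F12 Θ (a, b)) a :=
    base1.congr_of_eventuallyEq (Eventually.of_forall e1)
  have base2 := (((aFz hΘ hb (a := a)).const_mul 2).sub
      ((aF1z hΘ hb (a := a)).const_mul a)).sub ((hasDerivAt_id b).mul (aF2z hΘ hb (a := a)))
  have e2 : ∀ y : ℝ, y ≠ 0 → y ^ 2 * Psi (fun s z => Θ s z / z ^ 2) a y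
      = 2 * Θ a y - a * F1 Θ (a, y) - y * F2 Θ (a, y) := fun y hy => hB hΘ hy
  have hz : HasDerivAt (fun y => y ^ 2 * Psi (fun s z => Θ s z / z ^ 2) a y)
      (2 * F2 Θ (a, b) - a * F12 Θ (a, b) - (1 * F2 Θ (a, b) + b * F22 Θ (a, b))) b :=
    base2.congr_of_eventuallyEq (eventuallyEq_of_mem (isOpen_ne.mem_nhds hb) e2)
  rw [Psi]
  rw [hs.deriv, hz.deriv]
  ring

lemma hL {a b : ℝ} (hb : b ≠ 0) :
    Psi (fun s z =>
        z ^ 2 * Psi (fun s z => z ^ 2 * Psi (fun s z => Θ s z / z ^ 2) s z) s z) a b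
      = b ^ 2 * (3 * b * F2 Θ (a, b) - 3 * b ^ 2 * F22 Θ (a, b) - b ^ 3 * F222 Θ (a, b)
          + 3 * a * F1 Θ (a, b) - 6 * a * b * F12 Θ (a, b) - 3 * a * b ^ 2 * F122 Θ (a, b)
          - 3 * a ^ 2 * F11 Θ (a, b) - 3 * a ^ 2 * b * F112 Θ (a, b)
          - a ^ 3 * F111 Θ (a, b)) := by
  have base1 := (((((hasDerivAt_id a).mul ((hasDerivAt_id a).mul (aF11s hΘ hb))).add
      (((hasDerivAt_id a).mul (aF12s hΘ hb)).const_mul (2 * b))).add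
      ((aF22s hΘ hb).const_mul (b * b))).sub
      ((hasDerivAt_id a).mul (aF1s hΘ hb))).sub ((aF2s hΘ hb).const_mul b) |>.const_mul (b ^ 2)
  have e1 : ∀ x : ℝ,
      b ^ 2 * Psi (fun s z => z ^ 2 * Psi (fun s z => Θ s z / z ^ 2) s z) x b
      = b ^ 2 * (x * (x * F11 Θ (x, b)) + 2 * b * (x * F12 Θ (x, b)) + b * b * F22 Θ (x, b)
          - x * F1 Θ (x, b) - b * F2 Θ (x, b)) := by
    intro x
    rw [hC hΘ hb]
    ring
  have hs := base1.congr_of_eventuallyEq (Eventually.of_forall e1)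
  have inner := (((((hasDerivAt_id b).mul ((hasDerivAt_id b).mul (aF22z hΘ hb (a := a)))).add
      (((aF11z hΘ hb (a := a)).const_mul a).const_mul a)).add
      (((hasDerivAt_id b).mul (aF12z hΘ hb (a := a))).const_mul (2 * a))).sub
      ((aF1z hΘ hb (a := a)).const_mul a)).sub ((hasDerivAt_id b).mul (aF2z hΘ hb (a := a)))
  have base2 := ((hasDerivAt_id b).mul (hasDerivAt_id b)).mul inner
  have e2 : ∀ y : ℝ, y ≠ 0 →
      y ^ 2 * Psi (fun s z => z ^ 2 * Psi (fun s z => Θ s z / z ^ 2) s z) a y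
      = y * y * (y * (y * F22 Θ (a, y)) + a * (a * F11 Θ (a, y))
          + 2 * a * (y * F12 Θ (a, y)) - a * F1 Θ (a, y) - y * F2 Θ (a, y)) := by
    intro y hy
    rw [hC hΘ hy]
    ring
  have hz := base2.congr_of_eventuallyEq (eventuallyEq_of_mem (isOpen_ne.mem_nhds hb) e2)
  rw [Psi]
  rw [hs.deriv, hz.deriv]
  simp only [id_eq, Pi.mul_apply, Pi.add_apply, Pi.sub_apply]
  ring

lemma hE0 {a b : ℝ} (hb : b ≠ 0) :
    b ^ 2 * Psi (fun s z => deriv (fun s' => Θ s' z) s / z) a b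
      = b * F1 Θ (a, b) - b ^ 2 * F12 Θ (a, b) - a * b * F11 Θ (a, b) := by
  have e1 : ∀ x : ℝ, deriv (fun s' => Θ s' b) x / b = F1 Θ (x, b) / b := fun x => by
    rw [(aFs hΘ hb (a := x)).deriv]
  have hs : HasDerivAt (fun x => deriv (fun s' => Θ s' b) x / b) (F11 Θ (a, b) / b) a :=
    ((aF1s hΘ hb).div_const b).congr_of_eventuallyEq (Eventually.of_forall e1)
  have e2 : ∀ y : ℝ, y ≠ 0 → deriv (fun s' => Θ s' y) a / y = F1 Θ (a, y) / y := fun y hy => by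
    rw [(aFs hΘ hy (a := a)).deriv]
  have base2 := (aF1z hΘ hb (a := a)).div (hasDerivAt_id b) hb
  have hz := base2.congr_of_eventuallyEq (eventuallyEq_of_mem (isOpen_ne.mem_nhds hb) e2)
  rw [Psi]
  rw [hs.deriv, hz.deriv]
  simp only [id_eq]
  field_simp
  ring

lemma hG0 {a b : ℝ} (hb : b ≠ 0) :
    b ^ 2 * Psi (fun s z => deriv (fun z' => Θ s z') z / z) a b
      = b * F2 Θ (a, b) - b ^ 2 * F22 Θ (a, b) - a * b * F12 Θ (a, b) := by
  have e1 : ∀ x : ℝ, deriv (fun z' => Θ x z') b / b = F2 Θ (x, b) / b := fun x => by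
    rw [(aFz hΘ hb (a := x)).deriv]
  have hs : HasDerivAt (fun x => deriv (fun z' => Θ x z') b / b) (F12 Θ (a, b) / b) a :=
    ((aF2s hΘ hb).div_const b).congr_of_eventuallyEq (Eventually.of_forall e1)
  have e2 : ∀ y : ℝ, y ≠ 0 → deriv (fun z' => Θ a z') y / y = F2 Θ (a, y) / y := fun y hy => by
    rw [(aFz hΘ hy (a := a)).deriv]
  have base2 := (aF2z hΘ hb (a := a)).div (hasDerivAt_id b) hb
  have hz := base2.congr_of_eventuallyEq (eventuallyEq_of_mem (isOpen_ne.mem_nhds hb) e2)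
  rw [Psi]
  rw [hs.deriv, hz.deriv]
  simp only [id_eq]
  field_simp
  ring

lemma hPsiE {a b : ℝ} (hb : b ≠ 0) :
    Psi (fun s z => z ^ 2 * Psi (fun s z => deriv (fun s' => Θ s' z) s / z) s z) a b
      = -b * F1 Θ (a, b) + b ^ 2 * F12 Θ (a, b) + b ^ 3 * F122 Θ (a, b)
        + a * b * F11 Θ (a, b) + 2 * a * b ^ 2 * F112 Θ (a, b)
        + a ^ 2 * b * F111 Θ (a, b) := by
  have base1 := (((aF1s hΘ hb (a := a)).const_mul b).sub
      (((aF12s hΘ hb).const_mul b).const_mul b)).sub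
      (((hasDerivAt_id a).mul (aF11s hΘ hb)).const_mul b)
  have e1 : ∀ x : ℝ, b ^ 2 * Psi (fun s z => deriv (fun s' => Θ s' z) s / z) x b
      = b * F1 Θ (x, b) - b * (b * F12 Θ (x, b)) - b * (x * F11 Θ (x, b)) := by
    intro x
    rw [hE0 hΘ hb]
    ring
  have hs := base1.congr_of_eventuallyEq (Eventually.of_forall e1)
  have base2 := (((hasDerivAt_id b).mul (aF1z hΘ hb (a := a))).sub
      ((hasDerivAt_id b).mul ((hasDerivAt_id b).mul (aF12z hΘ hb (a := a))))).sub
      (((hasDerivAt_id b).mul (aF11z hΘ hb (a := a))).const_mul a)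
  have e2 : ∀ y : ℝ, y ≠ 0 → y ^ 2 * Psi (fun s z => deriv (fun s' => Θ s' z) s / z) a y
      = y * F1 Θ (a, y) - y * (y * F12 Θ (a, y)) - a * (y * F11 Θ (a, y)) := by
    intro y hy
    rw [hE0 hΘ hy]
    ring
  have hz := base2.congr_of_eventuallyEq (eventuallyEq_of_mem (isOpen_ne.mem_nhds hb) e2)
  rw [Psi]
  rw [hs.deriv, hz.deriv]
  simp only [id_eq, Pi.mul_apply, Pi.add_apply, Pi.sub_apply]
  ring

lemma hPsiG {a b : ℝ} (hb : b ≠ 0) :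
    Psi (fun s z => z ^ 2 * Psi (fun s z => deriv (fun z' => Θ s z') z / z) s z) a b
      = -b * F2 Θ (a, b) + b ^ 2 * F22 Θ (a, b) + b ^ 3 * F222 Θ (a, b)
        + a * b * F12 Θ (a, b) + 2 * a * b ^ 2 * F122 Θ (a, b)
        + a ^ 2 * b * F112 Θ (a, b) := by
  have base1 := (((aF2s hΘ hb (a := a)).const_mul b).sub
      (((aF22s hΘ hb).const_mul b).const_mul b)).sub
      (((hasDerivAt_id a).mul (aF12s hΘ hb)).const_mul b)
  have e1 : ∀ x : ℝ, b ^ 2 * Psi (fun s z => deriv (fun z' => Θ s z') z / z) x b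
      = b * F2 Θ (x, b) - b * (b * F22 Θ (x, b)) - b * (x * F12 Θ (x, b)) := by
    intro x
    rw [hG0 hΘ hb]
    ring
  have hs := base1.congr_of_eventuallyEq (Eventually.of_forall e1)
  have base2 := (((hasDerivAt_id b).mul (aF2z hΘ hb (a := a))).sub
      ((hasDerivAt_id b).mul ((hasDerivAt_id b).mul (aF22z hΘ hb (a := a))))).sub
      (((hasDerivAt_id b).mul (aF12z hΘ hb (a := a))).const_mul a)
  have e2 : ∀ y : ℝ, y ≠ 0 → y ^ 2 * Psi (fun s z => deriv (fun z' => Θ s z') z / z) a y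
      = y * F2 Θ (a, y) - y * (y * F22 Θ (a, y)) - a * (y * F12 Θ (a, y)) := by
    intro y hy
    rw [hG0 hΘ hy]
    ring
  have hz := base2.congr_of_eventuallyEq (eventuallyEq_of_mem (isOpen_ne.mem_nhds hb) e2)
  rw [Psi]
  rw [hs.deriv, hz.deriv]
  simp only [id_eq, Pi.mul_apply, Pi.add_apply, Pi.sub_apply]
  ring

end

end Stmt3Aux

theorem stmt_3 (Θ : ℝ → ℝ → ℝ)
    (hΘ : ContDiffOn ℝ 3 (Function.uncurry Θ) {p : ℝ × ℝ | p.2 ≠ 0}) :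
    ∀ s z : ℝ, z ≠ 0 →
      (1 / z ^ 2) *
          Psi (fun s z =>
            z ^ 2 * Psi (fun s z => z ^ 2 * Psi (fun s z => Θ s z / z ^ 2) s z) s z) s z
        = -2 * Psi (fun s z => z ^ 2 * Psi (fun s z => Θ s z / z ^ 2) s z) s z
          - (s / z) *
              Psi (fun s z =>
                z ^ 2 * Psi (fun s z => deriv (fun s' => Θ s' z) s / z) s z) s z
          - Psi (fun s z =>
              z ^ 2 * Psi (fun s z => deriv (fun z' => Θ s z') z / z) s z) s z := by
  intro s z hz
  rw [Stmt3Aux.hL hΘ hz, Stmt3Aux.hC hΘ hz, Stmt3Aux.hPsiE hΘ hz, Stmt3Aux.hPsiG hΘ hz]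
  field_simp
  ring
end

section
/- Let Θ : ℝ × (ℝ∖{0}) → ℝ be three times continuously differentiable. Then for all (s,z) with z ≠ 0 one has (1/z²)·Ψ(z²·Ψ(z²·Ψ(Θ/z)))(s,z) = −3·Ψ(z²·Ψ(Θ/z))(s,z) − (s/z)·Ψ(z²·Ψ(Θ_s))(s,z) − Ψ(z²·Ψ(Θ_z))(s,z). -/
section AuxSlices
variable {E F' : Type*} [NormedAddCommGroup E] [NormedSpace ℝ E]
  [NormedAddCommGroup F'] [NormedSpace ℝ F']

private lemma sliceS {f : ℝ × ℝ → E} {a b : ℝ} (hf : DifferentiableAt ℝ f (a, b)) :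
    HasDerivAt (fun t => f (t, b)) (fderiv ℝ f (a, b) (1, 0)) a := by
  have h1 : HasDerivAt (fun t : ℝ => ((t, b) : ℝ × ℝ)) ((1 : ℝ), (0 : ℝ)) a :=
    HasDerivAt.prodMk (hasDerivAt_id a) (hasDerivAt_const a b)
  exact hf.hasFDerivAt.comp_hasDerivAt a h1

private lemma sliceZ {f : ℝ × ℝ → E} {a b : ℝ} (hf : DifferentiableAt ℝ f (a, b)) :
    HasDerivAt (fun t => f (a, t)) (fderiv ℝ f (a, b) (0, 1)) b := by
  have h1 : HasDerivAt (fun t : ℝ => ((a, t) : ℝ × ℝ)) ((0 : ℝ), (1 : ℝ)) b :=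
    HasDerivAt.prodMk (hasDerivAt_const b a) (hasDerivAt_id b)
  exact hf.hasFDerivAt.comp_hasDerivAt b h1

private lemma sliceS_clm {g : ℝ × ℝ → (E →L[ℝ] F')} {a b : ℝ}
    (hg : DifferentiableAt ℝ g (a, b)) (v : E) :
    HasDerivAt (fun t => g (t, b) v) (fderiv ℝ g (a, b) (1, 0) v) a := by
  simpa using (sliceS hg).clm_apply (hasDerivAt_const a v)

private lemma sliceZ_clm {g : ℝ × ℝ → (E →L[ℝ] F')} {a b : ℝ}
    (hg : DifferentiableAt ℝ g (a, b)) (v : E) :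
    HasDerivAt (fun t => g (a, t) v) (fderiv ℝ g (a, b) (0, 1) v) b := by
  simpa using (sliceZ hg).clm_apply (hasDerivAt_const b v)

private lemma sliceS_clm2 {g : ℝ × ℝ → (E →L[ℝ] (E →L[ℝ] F'))} {a b : ℝ}
    (hg : DifferentiableAt ℝ g (a, b)) (v w : E) :
    HasDerivAt (fun t => g (t, b) v w) (fderiv ℝ g (a, b) (1, 0) v w) a := by
  simpa using (sliceS_clm hg v).clm_apply (hasDerivAt_const a w)

private lemma sliceZ_clm2 {g : ℝ × ℝ → (E →L[ℝ] (E →L[ℝ] F'))} {a b : ℝ}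
    (hg : DifferentiableAt ℝ g (a, b)) (v w : E) :
    HasDerivAt (fun t => g (a, t) v w) (fderiv ℝ g (a, b) (0, 1) v w) b := by
  simpa using (sliceZ_clm hg v).clm_apply (hasDerivAt_const b w)

end AuxSlices

private lemma Psi_eq (f : ℝ → ℝ → ℝ) (a b : ℝ) :
    Psi f a b = -a * deriv (fun t => f t b) a - b * deriv (fun t => f a t) b := rfl

private lemma main_calc
    (Θ G1 G2 H11 H12 H21 H22 K111 K112 K121 K122 K211 K212 K221 K222 : ℝ → ℝ → ℝ)
    (hFS : ∀ a b : ℝ, b ≠ 0 → HasDerivAt (fun t => Θ t b) (G1 a b) a)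
    (hFZ : ∀ a b : ℝ, b ≠ 0 → HasDerivAt (fun t => Θ a t) (G2 a b) b)
    (hG1S : ∀ a b : ℝ, b ≠ 0 → HasDerivAt (fun t => G1 t b) (H11 a b) a)
    (hG1Z : ∀ a b : ℝ, b ≠ 0 → HasDerivAt (fun t => G1 a t) (H21 a b) b)
    (hG2S : ∀ a b : ℝ, b ≠ 0 → HasDerivAt (fun t => G2 t b) (H12 a b) a)
    (hG2Z : ∀ a b : ℝ, b ≠ 0 → HasDerivAt (fun t => G2 a t) (H22 a b) b)
    (hH11S : ∀ a b : ℝ, b ≠ 0 → HasDerivAt (fun t => H11 t b) (K111 a b) a)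
    (hH11Z : ∀ a b : ℝ, b ≠ 0 → HasDerivAt (fun t => H11 a t) (K211 a b) b)
    (hH12S : ∀ a b : ℝ, b ≠ 0 → HasDerivAt (fun t => H12 t b) (K112 a b) a)
    (hH12Z : ∀ a b : ℝ, b ≠ 0 → HasDerivAt (fun t => H12 a t) (K212 a b) b)
    (hH21S : ∀ a b : ℝ, b ≠ 0 → HasDerivAt (fun t => H21 t b) (K121 a b) a)
    (hH21Z : ∀ a b : ℝ, b ≠ 0 → HasDerivAt (fun t => H21 a t) (K221 a b) b)
    (hH22S : ∀ a b : ℝ, b ≠ 0 → HasDerivAt (fun t => H22 t b) (K122 a b) a)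
    (hH22Z : ∀ a b : ℝ, b ≠ 0 → HasDerivAt (fun t => H22 a t) (K222 a b) b)
    (s z : ℝ) (hz : z ≠ 0)
    (symH : H12 s z = H21 s z)
    (k1 : K121 s z = K112 s z) (k2 : K211 s z = K112 s z)
    (k3 : K212 s z = K122 s z) (k4 : K221 s z = K122 s z) :
    (1 / z ^ 2) *
        Psi (fun s z =>
          z ^ 2 * Psi (fun s z => z ^ 2 * Psi (fun s z => Θ s z / z) s z) s z) s z
      = -3 * Psi (fun s z => z ^ 2 * Psi (fun s z => Θ s z / z) s z) s z
        - (s / z) *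
            Psi (fun s z =>
              z ^ 2 * Psi (fun s z => deriv (fun s' => Θ s' z) s) s z) s z
        - Psi (fun s z =>
            z ^ 2 * Psi (fun s z => deriv (fun z' => Θ s z') z) s z) s z := by
  have hq2 : ∀ a b : ℝ, b ≠ 0 →
      b ^ 2 * Psi (fun x y => Θ x y / y) a b
        = b * Θ a b - a * b * G1 a b - b * b * G2 a b := by
    intro a b hb
    rw [Psi_eq]
    rw [((hFS a b hb).div_const b).deriv]
    have hd := (hFZ a b hb).div (hasDerivAt_id' (x := b)) hb
    simp only [Pi.div_def] at hd
    rw [hd.deriv]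
    field_simp
    ring
  have hPsi2 : ∀ a b : ℝ, b ≠ 0 →
      Psi (fun x y => y ^ 2 * Psi (fun x y => Θ x y / y) x y) a b
        = a * a * b * H11 a b + a * b * b * H12 a b + a * b * b * H21 a b
          + b * b * b * H22 a b - b * Θ a b + a * b * G1 a b + b * b * G2 a b := by
    intro a b hb
    rw [Psi_eq]
    have e1 : (fun t => b ^ 2 * Psi (fun x y => Θ x y / y) t b)
        = (fun t => b * Θ t b - t * b * G1 t b - b * b * G2 t b) :=
      funext fun t => hq2 t b hb
    have d1 := (((hFS a b hb).const_mul b).sub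
      (((hasDerivAt_id' (x := a)).mul_const b).mul (hG1S a b hb))).sub
      ((hG2S a b hb).const_mul (b * b))
    have e2 : (fun t => t ^ 2 * Psi (fun x y => Θ x y / y) a t)
        =ᶠ[nhds b] (fun t => t * Θ a t - a * t * G1 a t - t * t * G2 a t) :=
      (eventually_ne_nhds hb).mono fun t ht => hq2 a t ht
    have d2 := (((hasDerivAt_id' (x := b)).mul (hFZ a b hb)).sub
      (((hasDerivAt_id' (x := b)).const_mul a).mul (hG1Z a b hb))).sub
      (((hasDerivAt_id' (x := b)).mul (hasDerivAt_id' (x := b))).mul (hG2Z a b hb))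
    simp only [Pi.mul_def, Pi.add_def, Pi.sub_def, Pi.neg_def] at d1 d2
    rw [e1, d1.deriv, e2.deriv_eq, d2.deriv]
    ring
  have hq3 : ∀ a b : ℝ, b ≠ 0 →
      b ^ 2 * Psi (fun x y => y ^ 2 * Psi (fun x y => Θ x y / y) x y) a b
        = a * a * (b * b * b) * H11 a b + a * (b * b * b * b) * H12 a b
          + a * (b * b * b * b) * H21 a b + (b * b * b * b * b) * H22 a b
          - (b * b * b) * Θ a b + a * (b * b * b) * G1 a b
          + (b * b * b * b) * G2 a b := by
    intro a b hb
    rw [hPsi2 a b hb]; ring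
  have hPsi3 :
      Psi (fun x y => y ^ 2 * Psi (fun x y => y ^ 2 * Psi (fun x y => Θ x y / y) x y) x y) s z
        = -s * (2 * s * (z*z*z) * H11 s z + s * s * (z*z*z) * K111 s z
            + (z*z*z*z) * H12 s z + s * (z*z*z*z) * K112 s z
            + (z*z*z*z) * H21 s z + s * (z*z*z*z) * K121 s z
            + (z*z*z*z*z) * K122 s z + s * (z*z*z) * H11 s z + (z*z*z*z) * H12 s z)
          - z * (3 * (s*s) * (z*z) * H11 s z + s * s * (z*z*z) * K211 s z
            + 4 * s * (z*z*z) * H12 s z + s * (z*z*z*z) * K212 s z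
            + 4 * s * (z*z*z) * H21 s z + s * (z*z*z*z) * K221 s z
            + 5 * (z*z*z*z) * H22 s z + (z*z*z*z*z) * K222 s z
            - 3 * (z*z) * Θ s z - (z*z*z) * G2 s z + 3 * s * (z*z) * G1 s z
            + s * (z*z*z) * H21 s z + 4 * (z*z*z) * G2 s z + (z*z*z*z) * H22 s z) := by
    rw [Psi_eq]
    have e1 : (fun t => z ^ 2 * Psi (fun x y => y ^ 2 * Psi (fun x y => Θ x y / y) x y) t z)
        = (fun t => t * t * (z * z * z) * H11 t z + t * (z * z * z * z) * H12 t z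
            + t * (z * z * z * z) * H21 t z + (z * z * z * z * z) * H22 t z
            - (z * z * z) * Θ t z + t * (z * z * z) * G1 t z
            + (z * z * z * z) * G2 t z) :=
      funext fun t => hq3 t z hz
    have d1 := ((((((((((hasDerivAt_id' (x := s)).mul (hasDerivAt_id' (x := s))).mul_const (z*z*z)).mul
        (hH11S s z hz)).add
      (((hasDerivAt_id' (x := s)).mul_const (z*z*z*z)).mul (hH12S s z hz))).add
      (((hasDerivAt_id' (x := s)).mul_const (z*z*z*z)).mul (hH21S s z hz))).add
      ((hH22S s z hz).const_mul (z*z*z*z*z))).sub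
      ((hFS s z hz).const_mul (z*z*z))).add
      ((((hasDerivAt_id' (x := s)).mul_const (z*z*z)).mul (hG1S s z hz)))).add
      ((hG2S s z hz).const_mul (z*z*z*z)))
    have e2 : (fun t => t ^ 2 * Psi (fun x y => y ^ 2 * Psi (fun x y => Θ x y / y) x y) s t)
        =ᶠ[nhds z] (fun t => s * s * (t * t * t) * H11 s t + s * (t * t * t * t) * H12 s t
            + s * (t * t * t * t) * H21 s t + (t * t * t * t * t) * H22 s t
            - (t * t * t) * Θ s t + s * (t * t * t) * G1 s t
            + (t * t * t * t) * G2 s t) :=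
      (eventually_ne_nhds hz).mono fun t ht => hq3 s t ht
    have dttt := ((hasDerivAt_id' (x := z)).mul (hasDerivAt_id' (x := z))).mul (hasDerivAt_id' (x := z))
    have dtttt := (((hasDerivAt_id' (x := z)).mul (hasDerivAt_id' (x := z))).mul (hasDerivAt_id' (x := z))).mul (hasDerivAt_id' (x := z))
    have dttttt := ((((hasDerivAt_id' (x := z)).mul (hasDerivAt_id' (x := z))).mul (hasDerivAt_id' (x := z))).mul (hasDerivAt_id' (x := z))).mul (hasDerivAt_id' (x := z))
    have d2 := (((((((dttt.const_mul (s*s)).mul (hH11Z s z hz)).add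
      ((dtttt.const_mul s).mul (hH12Z s z hz))).add
      ((dtttt.const_mul s).mul (hH21Z s z hz))).add
      (dttttt.mul (hH22Z s z hz))).sub
      (dttt.mul (hFZ s z hz))).add
      ((dttt.const_mul s).mul (hG1Z s z hz))).add
      (dtttt.mul (hG2Z s z hz))
    simp only [Pi.mul_def, Pi.add_def, Pi.sub_def, Pi.neg_def] at d1 d2
    rw [e1, d1.deriv, e2.deriv_eq, d2.deriv]
    ring
  have hps : ∀ a b : ℝ, b ≠ 0 → deriv (fun t => Θ t b) a = G1 a b :=
    fun a b hb => (hFS a b hb).deriv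
  have hpz : ∀ a b : ℝ, b ≠ 0 → deriv (fun t => Θ a t) b = G2 a b :=
    fun a b hb => (hFZ a b hb).deriv
  have hPsiPs : ∀ a b : ℝ, b ≠ 0 →
      Psi (fun x y => deriv (fun t => Θ t y) x) a b = -a * H11 a b - b * H21 a b := by
    intro a b hb
    rw [Psi_eq]
    have e1 : (fun t => deriv (fun u => Θ u b) t) = fun t => G1 t b :=
      funext fun t => hps t b hb
    have e2 : (fun t => deriv (fun u => Θ u t) a) =ᶠ[nhds b] fun t => G1 a t :=
      (eventually_ne_nhds hb).mono fun t ht => hps a t ht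
    rw [e1, (hG1S a b hb).deriv, e2.deriv_eq, (hG1Z a b hb).deriv]
  have hPsiPz : ∀ a b : ℝ, b ≠ 0 →
      Psi (fun x y => deriv (fun t => Θ x t) y) a b = -a * H12 a b - b * H22 a b := by
    intro a b hb
    rw [Psi_eq]
    have e1 : (fun t => deriv (fun u => Θ t u) b) = fun t => G2 t b :=
      funext fun t => hpz t b hb
    have e2 : (fun t => deriv (fun u => Θ a u) t) =ᶠ[nhds b] fun t => G2 a t :=
      (eventually_ne_nhds hb).mono fun t ht => hpz a t ht
    rw [e1, (hG2S a b hb).deriv, e2.deriv_eq, (hG2Z a b hb).deriv]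
  have hr2 : ∀ a b : ℝ, b ≠ 0 →
      b ^ 2 * Psi (fun x y => deriv (fun t => Θ t y) x) a b
        = -(a * (b * b) * H11 a b) - (b * b * b) * H21 a b := by
    intro a b hb; rw [hPsiPs a b hb]; ring
  have hr3 : ∀ a b : ℝ, b ≠ 0 →
      b ^ 2 * Psi (fun x y => deriv (fun t => Θ x t) y) a b
        = -(a * (b * b) * H12 a b) - (b * b * b) * H22 a b := by
    intro a b hb; rw [hPsiPz a b hb]; ring
  have hPsiR2 :
      Psi (fun x y => y ^ 2 * Psi (fun x y => deriv (fun t => Θ t y) x) x y) s z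
        = -s * (-((z*z) * H11 s z + s * (z*z) * K111 s z) - (z*z*z) * K121 s z)
          - z * (-(2 * s * z * H11 s z + s * (z*z) * K211 s z)
              - (3 * (z*z) * H21 s z + (z*z*z) * K221 s z)) := by
    rw [Psi_eq]
    have e1 : (fun t => z ^ 2 * Psi (fun x y => deriv (fun u => Θ u y) x) t z)
        = fun t => -(t * (z * z) * H11 t z) - (z * z * z) * H21 t z :=
      funext fun t => hr2 t z hz
    have d1 := ((((hasDerivAt_id' (x := s)).mul_const (z*z)).mul (hH11S s z hz)).neg).sub
      ((hH21S s z hz).const_mul (z*z*z))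
    have e2 : (fun t => t ^ 2 * Psi (fun x y => deriv (fun u => Θ u y) x) s t)
        =ᶠ[nhds z] fun t => -(s * (t * t) * H11 s t) - (t * t * t) * H21 s t :=
      (eventually_ne_nhds hz).mono fun t ht => hr2 s t ht
    have d2 := (((((hasDerivAt_id' (x := z)).mul (hasDerivAt_id' (x := z))).const_mul s).mul
      (hH11Z s z hz)).neg).sub
      ((((hasDerivAt_id' (x := z)).mul (hasDerivAt_id' (x := z))).mul (hasDerivAt_id' (x := z))).mul (hH21Z s z hz))
    simp only [Pi.mul_def, Pi.add_def, Pi.sub_def, Pi.neg_def] at d1 d2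
    rw [e1, d1.deriv, e2.deriv_eq, d2.deriv]
    ring
  have hPsiR3 :
      Psi (fun x y => y ^ 2 * Psi (fun x y => deriv (fun t => Θ x t) y) x y) s z
        = -s * (-((z*z) * H12 s z + s * (z*z) * K112 s z) - (z*z*z) * K122 s z)
          - z * (-(2 * s * z * H12 s z + s * (z*z) * K212 s z)
              - (3 * (z*z) * H22 s z + (z*z*z) * K222 s z)) := by
    rw [Psi_eq]
    have e1 : (fun t => z ^ 2 * Psi (fun x y => deriv (fun u => Θ x u) y) t z)
        = fun t => -(t * (z * z) * H12 t z) - (z * z * z) * H22 t z :=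
      funext fun t => hr3 t z hz
    have d1 := ((((hasDerivAt_id' (x := s)).mul_const (z*z)).mul (hH12S s z hz)).neg).sub
      ((hH22S s z hz).const_mul (z*z*z))
    have e2 : (fun t => t ^ 2 * Psi (fun x y => deriv (fun u => Θ x u) y) s t)
        =ᶠ[nhds z] fun t => -(s * (t * t) * H12 s t) - (t * t * t) * H22 s t :=
      (eventually_ne_nhds hz).mono fun t ht => hr3 s t ht
    have d2 := (((((hasDerivAt_id' (x := z)).mul (hasDerivAt_id' (x := z))).const_mul s).mul
      (hH12Z s z hz)).neg).sub
      ((((hasDerivAt_id' (x := z)).mul (hasDerivAt_id' (x := z))).mul (hasDerivAt_id' (x := z))).mul (hH22Z s z hz))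
    simp only [Pi.mul_def, Pi.add_def, Pi.sub_def, Pi.neg_def] at d1 d2
    rw [e1, d1.deriv, e2.deriv_eq, d2.deriv]
    ring
  rw [hPsi3, hPsi2 s z hz, hPsiR2, hPsiR3, symH, k1, k2, k3, k4]
  field_simp
  ring

theorem stmt_4 (Θ : ℝ → ℝ → ℝ)
    (hΘ : ContDiffOn ℝ 3 (Function.uncurry Θ) {p : ℝ × ℝ | p.2 ≠ 0}) :
    ∀ s z : ℝ, z ≠ 0 →
      (1 / z ^ 2) *
          Psi (fun s z =>
            z ^ 2 * Psi (fun s z => z ^ 2 * Psi (fun s z => Θ s z / z) s z) s z) s z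
        = -3 * Psi (fun s z => z ^ 2 * Psi (fun s z => Θ s z / z) s z) s z
          - (s / z) *
              Psi (fun s z =>
                z ^ 2 * Psi (fun s z => deriv (fun s' => Θ s' z) s) s z) s z
          - Psi (fun s z =>
              z ^ 2 * Psi (fun s z => deriv (fun z' => Θ s z') z) s z) s z := by
  intro s z hz
  have hU : IsOpen {p : ℝ × ℝ | p.2 ≠ 0} := isOpen_ne.preimage continuous_snd
  have hF3 : ∀ a b : ℝ, b ≠ 0 → ContDiffAt ℝ 3 (Function.uncurry Θ) (a, b) :=
    fun a b hb => hΘ.contDiffAt (hU.mem_nhds hb)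
  have hG2 : ∀ a b : ℝ, b ≠ 0 → ContDiffAt ℝ 2 (fderiv ℝ (Function.uncurry Θ)) (a, b) :=
    fun a b hb => (hF3 a b hb).fderiv_right (by norm_num)
  have hH1 : ∀ a b : ℝ, b ≠ 0 →
      ContDiffAt ℝ 1 (fderiv ℝ (fderiv ℝ (Function.uncurry Θ))) (a, b) :=
    fun a b hb => (hG2 a b hb).fderiv_right (by norm_num)
  have hFd : ∀ a b : ℝ, b ≠ 0 → DifferentiableAt ℝ (Function.uncurry Θ) (a, b) :=
    fun a b hb => (hF3 a b hb).differentiableAt (by norm_num)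
  have hGd : ∀ a b : ℝ, b ≠ 0 → DifferentiableAt ℝ (fderiv ℝ (Function.uncurry Θ)) (a, b) :=
    fun a b hb => (hG2 a b hb).differentiableAt (by norm_num)
  have hHd : ∀ a b : ℝ, b ≠ 0 →
      DifferentiableAt ℝ (fderiv ℝ (fderiv ℝ (Function.uncurry Θ))) (a, b) :=
    fun a b hb => (hH1 a b hb).differentiableAt (by norm_num)
  have symH : ∀ a b : ℝ, b ≠ 0 → ∀ v w : ℝ × ℝ,
      fderiv ℝ (fderiv ℝ (Function.uncurry Θ)) (a, b) v w
        = fderiv ℝ (fderiv ℝ (Function.uncurry Θ)) (a, b) w v :=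
    fun a b hb v w => ((hF3 a b hb).isSymmSndFDerivAt (by norm_num)) v w
  have symK1 : ∀ u v w : ℝ × ℝ,
      fderiv ℝ (fderiv ℝ (fderiv ℝ (Function.uncurry Θ))) (s, z) u v w
        = fderiv ℝ (fderiv ℝ (fderiv ℝ (Function.uncurry Θ))) (s, z) v u w := by
    intro u v w
    have h := ((hG2 s z hz).isSymmSndFDerivAt (by norm_num)) u v
    exact DFunLike.congr_fun h w
  -- symmetry in the last two slots, directions e1 and e2
  have symK2S : ∀ v w : ℝ × ℝ,
      fderiv ℝ (fderiv ℝ (fderiv ℝ (Function.uncurry Θ))) (s, z) (1, 0) v w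
        = fderiv ℝ (fderiv ℝ (fderiv ℝ (Function.uncurry Θ))) (s, z) (1, 0) w v := by
    intro v w
    have a1 := (sliceS_clm2 (hHd s z hz) v w).deriv
    have a2 := (sliceS_clm2 (hHd s z hz) w v).deriv
    have e : (fun t => fderiv ℝ (fderiv ℝ (Function.uncurry Θ)) (t, z) v w)
        = (fun t => fderiv ℝ (fderiv ℝ (Function.uncurry Θ)) (t, z) w v) :=
      funext fun t => symH t z hz v w
    rw [← a1, ← a2, e]
  have symK2Z : ∀ v w : ℝ × ℝ,
      fderiv ℝ (fderiv ℝ (fderiv ℝ (Function.uncurry Θ))) (s, z) (0, 1) v w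
        = fderiv ℝ (fderiv ℝ (fderiv ℝ (Function.uncurry Θ))) (s, z) (0, 1) w v := by
    intro v w
    have a1 := (sliceZ_clm2 (hHd s z hz) v w).deriv
    have a2 := (sliceZ_clm2 (hHd s z hz) w v).deriv
    have e : (fun t => fderiv ℝ (fderiv ℝ (Function.uncurry Θ)) (s, t) v w)
        =ᶠ[nhds z] (fun t => fderiv ℝ (fderiv ℝ (Function.uncurry Θ)) (s, t) w v) :=
      (eventually_ne_nhds hz).mono fun t ht => symH s t ht v w
    rw [← a1, ← a2, e.deriv_eq]
  exact main_calc Θ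
    (fun a b => fderiv ℝ (Function.uncurry Θ) (a, b) (1, 0))
    (fun a b => fderiv ℝ (Function.uncurry Θ) (a, b) (0, 1))
    (fun a b => fderiv ℝ (fderiv ℝ (Function.uncurry Θ)) (a, b) (1, 0) (1, 0))
    (fun a b => fderiv ℝ (fderiv ℝ (Function.uncurry Θ)) (a, b) (1, 0) (0, 1))
    (fun a b => fderiv ℝ (fderiv ℝ (Function.uncurry Θ)) (a, b) (0, 1) (1, 0))
    (fun a b => fderiv ℝ (fderiv ℝ (Function.uncurry Θ)) (a, b) (0, 1) (0, 1))
    (fun a b => fderiv ℝ (fderiv ℝ (fderiv ℝ (Function.uncurry Θ))) (a, b) (1, 0) (1, 0) (1, 0))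
    (fun a b => fderiv ℝ (fderiv ℝ (fderiv ℝ (Function.uncurry Θ))) (a, b) (1, 0) (1, 0) (0, 1))
    (fun a b => fderiv ℝ (fderiv ℝ (fderiv ℝ (Function.uncurry Θ))) (a, b) (1, 0) (0, 1) (1, 0))
    (fun a b => fderiv ℝ (fderiv ℝ (fderiv ℝ (Function.uncurry Θ))) (a, b) (1, 0) (0, 1) (0, 1))
    (fun a b => fderiv ℝ (fderiv ℝ (fderiv ℝ (Function.uncurry Θ))) (a, b) (0, 1) (1, 0) (1, 0))
    (fun a b => fderiv ℝ (fderiv ℝ (fderiv ℝ (Function.uncurry Θ))) (a, b) (0, 1) (1, 0) (0, 1))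
    (fun a b => fderiv ℝ (fderiv ℝ (fderiv ℝ (Function.uncurry Θ))) (a, b) (0, 1) (0, 1) (1, 0))
    (fun a b => fderiv ℝ (fderiv ℝ (fderiv ℝ (Function.uncurry Θ))) (a, b) (0, 1) (0, 1) (0, 1))
    (fun a b hb => sliceS (hFd a b hb))
    (fun a b hb => sliceZ (hFd a b hb))
    (fun a b hb => sliceS_clm (hGd a b hb) (1, 0))
    (fun a b hb => sliceZ_clm (hGd a b hb) (1, 0))
    (fun a b hb => sliceS_clm (hGd a b hb) (0, 1))
    (fun a b hb => sliceZ_clm (hGd a b hb) (0, 1))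
    (fun a b hb => sliceS_clm2 (hHd a b hb) (1, 0) (1, 0))
    (fun a b hb => sliceZ_clm2 (hHd a b hb) (1, 0) (1, 0))
    (fun a b hb => sliceS_clm2 (hHd a b hb) (1, 0) (0, 1))
    (fun a b hb => sliceZ_clm2 (hHd a b hb) (1, 0) (0, 1))
    (fun a b hb => sliceS_clm2 (hHd a b hb) (0, 1) (1, 0))
    (fun a b hb => sliceZ_clm2 (hHd a b hb) (0, 1) (1, 0))
    (fun a b hb => sliceS_clm2 (hHd a b hb) (0, 1) (0, 1))
    (fun a b hb => sliceZ_clm2 (hHd a b hb) (0, 1) (0, 1))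
    s z hz
    (symH s z hz (1, 0) (0, 1))
    (symK2S (0, 1) (1, 0))
    ((symK1 (0, 1) (1, 0) (1, 0)).trans (symK2S (0, 1) (1, 0)))
    (symK1 (0, 1) (1, 0) (0, 1))
    ((symK2Z (0, 1) (1, 0)).trans (symK1 (0, 1) (1, 0) (0, 1)))
end

section
/- Let Θ : ℝ² → ℝ be twice continuously differentiable. Then for every y = (y⁰,ȳ) ∈ ℝ × ℝⁿ with ȳ ≠ 0 and y⁰ ≠ 0, and for all 1 ≤ k,l ≤ n, one has u·∂/∂y^k[Θ(s,z)·u_l](y) = Θ(s,z)·δ_{kl} + Θ_s(s,z)·x^k·u_l + (1/z)·Ψ((s,z) ↦ z·Θ(s,z))(s,z)·u_k·u_l, where (s,z) = (s(y), z(y)) and δ_{kl} is the Kronecker delta. -/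
open Finset

/-- `u = |ȳ|`, the Euclidean norm of `ȳ`. -/
noncomputable def uNorm {n : ℕ} (yb : Fin n → ℝ) : ℝ := Real.sqrt (∑ i, yb i ^ 2)

/-- `s(y) = ⟨x̄, ȳ⟩ / |ȳ|`. -/
noncomputable def sVar {n : ℕ} (xb yb : Fin n → ℝ) : ℝ := (∑ i, xb i * yb i) / uNorm yb

/-- `z(y) = y⁰ / |ȳ|`. -/
noncomputable def zVar {n : ℕ} (y0 : ℝ) (yb : Fin n → ℝ) : ℝ := y0 / uNorm yb

set_option maxHeartbeats 2000000 in
theorem stmt_6 (n : ℕ) (hn : 2 ≤ n) (xb : Fin n → ℝ)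
    (Θ : ℝ → ℝ → ℝ) (hΘ : ContDiff ℝ 2 (Function.uncurry Θ))
    (y0 : ℝ) (yb : Fin n → ℝ) (hyb : yb ≠ 0) (hy0 : y0 ≠ 0) (k l : Fin n) :
    uNorm yb *
        deriv (fun t =>
          Θ (sVar xb (Function.update yb k t)) (zVar y0 (Function.update yb k t)) *
            (Function.update yb k t l / uNorm (Function.update yb k t))) (yb k)
      = Θ (sVar xb yb) (zVar y0 yb) * (if k = l then (1 : ℝ) else 0)
        + deriv (fun s' => Θ s' (zVar y0 yb)) (sVar xb yb) * xb k * (yb l / uNorm yb)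
        + (1 / zVar y0 yb) * Psi (fun s z => z * Θ s z) (sVar xb yb) (zVar y0 yb) *
            (yb k / uNorm yb) * (yb l / uNorm yb) := by
  obtain ⟨i0, hi0⟩ := Function.ne_iff.mp hyb
  set B : ℝ := ∑ i ∈ Finset.univ.erase k, yb i ^ 2 with hB
  set Cx : ℝ := ∑ i ∈ Finset.univ.erase k, xb i * yb i with hCx
  have hi0' : yb i0 ≠ 0 := by simpa using hi0
  have hSsum : ∑ i, yb i ^ 2 = yb k ^ 2 + B :=
    (Finset.add_sum_erase Finset.univ (fun i => yb i ^ 2) (Finset.mem_univ k)).symm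
  have hS : 0 < yb k ^ 2 + B := by
    rw [← hSsum]
    exact Finset.sum_pos' (fun j _ => sq_nonneg _) ⟨i0, Finset.mem_univ i0, by positivity⟩
  have hu0pos : 0 < Real.sqrt (yb k ^ 2 + B) := Real.sqrt_pos.mpr hS
  have hu0ne : Real.sqrt (yb k ^ 2 + B) ≠ 0 := ne_of_gt hu0pos
  -- sums with update
  have hsumA : ∀ t : ℝ, ∑ i, (Function.update yb k t i) ^ 2 = t ^ 2 + B := by
    intro t
    rw [← Finset.add_sum_erase _ _ (Finset.mem_univ k), Function.update_self, hB]
    congr 1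
    exact Finset.sum_congr rfl fun i hi => by
      rw [Function.update_of_ne (Finset.mem_erase.mp hi).1]
  have hsumB : ∀ t : ℝ, ∑ i, xb i * Function.update yb k t i = xb k * t + Cx := by
    intro t
    rw [← Finset.add_sum_erase _ _ (Finset.mem_univ k), Function.update_self, hCx]
    congr 1
    exact Finset.sum_congr rfl fun i hi => by
      rw [Function.update_of_ne (Finset.mem_erase.mp hi).1]
  have huN : uNorm yb = Real.sqrt (yb k ^ 2 + B) := by rw [uNorm, hSsum]
  have hsV : sVar xb yb = (xb k * yb k + Cx) / Real.sqrt (yb k ^ 2 + B) := by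
    rw [sVar, huN]
    congr 1
    have := hsumB (yb k)
    rwa [Function.update_eq_self] at this
  have hzV : zVar y0 yb = y0 / Real.sqrt (yb k ^ 2 + B) := by rw [zVar, huN]
  -- the Fréchet derivative of Θ at (s0, z0)
  have hdiff : DifferentiableAt ℝ (Function.uncurry Θ)
      ((xb k * yb k + Cx) / Real.sqrt (yb k ^ 2 + B), y0 / Real.sqrt (yb k ^ 2 + B)) :=
    (hΘ.differentiable two_ne_zero).differentiableAt
  set L := fderiv ℝ (Function.uncurry Θ)
      ((xb k * yb k + Cx) / Real.sqrt (yb k ^ 2 + B), y0 / Real.sqrt (yb k ^ 2 + B)) with hLdef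
  have hL : HasFDerivAt (Function.uncurry Θ) L
      ((xb k * yb k + Cx) / Real.sqrt (yb k ^ 2 + B), y0 / Real.sqrt (yb k ^ 2 + B)) :=
    hdiff.hasFDerivAt
  have hL2 : ∀ a b : ℝ, L (a, b) = a * L (1, 0) + b * L (0, 1) := by
    intro a b
    have h : ((a, b) : ℝ × ℝ) = a • ((1 : ℝ), (0 : ℝ)) + b • ((0 : ℝ), (1 : ℝ)) := by
      simp [Prod.ext_iff]
    rw [h, map_add, map_smul, map_smul, smul_eq_mul, smul_eq_mul]
  have hpDs : HasDerivAt (fun s' => Θ s' (y0 / Real.sqrt (yb k ^ 2 + B))) (L (1, 0))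
      ((xb k * yb k + Cx) / Real.sqrt (yb k ^ 2 + B)) := by
    have hc : HasDerivAt (fun s' : ℝ => (s', y0 / Real.sqrt (yb k ^ 2 + B)))
        ((1 : ℝ), (0 : ℝ)) ((xb k * yb k + Cx) / Real.sqrt (yb k ^ 2 + B)) :=
      (hasDerivAt_id _).prodMk (hasDerivAt_const _ _)
    exact hL.comp_hasDerivAt ((xb k * yb k + Cx) / Real.sqrt (yb k ^ 2 + B)) hc
  have hpDz : HasDerivAt (fun z' => Θ ((xb k * yb k + Cx) / Real.sqrt (yb k ^ 2 + B)) z')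
      (L (0, 1)) (y0 / Real.sqrt (yb k ^ 2 + B)) := by
    have hc : HasDerivAt (fun z' : ℝ => ((xb k * yb k + Cx) / Real.sqrt (yb k ^ 2 + B), z'))
        ((0 : ℝ), (1 : ℝ)) (y0 / Real.sqrt (yb k ^ 2 + B)) :=
      (hasDerivAt_const _ _).prodMk (hasDerivAt_id _)
    exact hL.comp_hasDerivAt (y0 / Real.sqrt (yb k ^ 2 + B)) hc
  have hDeq : deriv (fun s' => Θ s' (zVar y0 yb)) (sVar xb yb) = L (1, 0) := by
    rw [hsV, hzV]; exact hpDs.deriv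
  -- the Psi value
  have hPsi : Psi (fun s z => z * Θ s z) (sVar xb yb) (zVar y0 yb)
      = -((xb k * yb k + Cx) / Real.sqrt (yb k ^ 2 + B)) *
          (y0 / Real.sqrt (yb k ^ 2 + B) * L (1, 0))
        - y0 / Real.sqrt (yb k ^ 2 + B) *
          (Θ ((xb k * yb k + Cx) / Real.sqrt (yb k ^ 2 + B)) (y0 / Real.sqrt (yb k ^ 2 + B))
            + y0 / Real.sqrt (yb k ^ 2 + B) * L (0, 1)) := by
    rw [hsV, hzV, Psi]
    have h1 : deriv (fun s' => y0 / Real.sqrt (yb k ^ 2 + B) * Θ s' (y0 / Real.sqrt (yb k ^ 2 + B)))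
        ((xb k * yb k + Cx) / Real.sqrt (yb k ^ 2 + B))
        = y0 / Real.sqrt (yb k ^ 2 + B) * L (1, 0) := (hpDs.const_mul _).deriv
    have h2 : deriv (fun z' => z' * Θ ((xb k * yb k + Cx) / Real.sqrt (yb k ^ 2 + B)) z')
        (y0 / Real.sqrt (yb k ^ 2 + B))
        = Θ ((xb k * yb k + Cx) / Real.sqrt (yb k ^ 2 + B)) (y0 / Real.sqrt (yb k ^ 2 + B))
          + y0 / Real.sqrt (yb k ^ 2 + B) * L (0, 1) := by
      have h4 : HasDerivAt
          (fun z' : ℝ => z' * Θ ((xb k * yb k + Cx) / Real.sqrt (yb k ^ 2 + B)) z')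
          (1 * Θ ((xb k * yb k + Cx) / Real.sqrt (yb k ^ 2 + B)) (y0 / Real.sqrt (yb k ^ 2 + B))
            + y0 / Real.sqrt (yb k ^ 2 + B) * L (0, 1)) (y0 / Real.sqrt (yb k ^ 2 + B)) :=
        (hasDerivAt_id _).mul hpDz
      rw [h4.deriv]; ring
    rw [h1, h2]
  -- derivatives of the building blocks
  have hu : HasDerivAt (fun t : ℝ => Real.sqrt (t ^ 2 + B))
      (yb k / Real.sqrt (yb k ^ 2 + B)) (yb k) := by
    have h1 := (Real.hasDerivAt_sqrt (ne_of_gt hS)).comp (yb k)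
      ((hasDerivAt_pow 2 (yb k)).add_const B)
    refine h1.congr_deriv ?_
    field_simp
    ring
  have hsd : HasDerivAt (fun t : ℝ => (xb k * t + Cx) / Real.sqrt (t ^ 2 + B))
      ((xb k * 1 * Real.sqrt (yb k ^ 2 + B)
          - (xb k * yb k + Cx) * (yb k / Real.sqrt (yb k ^ 2 + B)))
        / Real.sqrt (yb k ^ 2 + B) ^ 2) (yb k) := by
    have hnum : HasDerivAt (fun t : ℝ => xb k * t + Cx) (xb k * 1) (yb k) :=
      ((hasDerivAt_id (yb k)).const_mul (xb k)).add_const Cx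
    exact hnum.div hu hu0ne
  have hzd : HasDerivAt (fun t : ℝ => y0 / Real.sqrt (t ^ 2 + B))
      ((0 * Real.sqrt (yb k ^ 2 + B) - y0 * (yb k / Real.sqrt (yb k ^ 2 + B)))
        / Real.sqrt (yb k ^ 2 + B) ^ 2) (yb k) := by
    exact (hasDerivAt_const (yb k) y0).div hu hu0ne
  have hnuml : HasDerivAt (fun t : ℝ => Function.update yb k t l)
      (if k = l then (1 : ℝ) else 0) (yb k) := by
    rcases eq_or_ne k l with hkl | hkl
    · subst hkl
      simp only [Function.update_self, if_pos rfl]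
      exact hasDerivAt_id _
    · have h : (fun t : ℝ => Function.update yb k t l) = fun _ => yb l := by
        funext t; exact Function.update_of_ne (Ne.symm hkl) _ _
      rw [h, if_neg hkl]
      exact hasDerivAt_const _ _
  have hval : Function.update yb k (yb k) l = yb l := by
    rw [Function.update_eq_self]
  have hgd : HasDerivAt (fun t : ℝ => Function.update yb k t l / Real.sqrt (t ^ 2 + B))
      (((if k = l then (1 : ℝ) else 0) * Real.sqrt (yb k ^ 2 + B)
          - yb l * (yb k / Real.sqrt (yb k ^ 2 + B)))
        / Real.sqrt (yb k ^ 2 + B) ^ 2) (yb k) := by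
    have h := hnuml.div hu hu0ne
    rwa [hval] at h
  have hΘc : HasDerivAt (fun t : ℝ =>
      Θ ((xb k * t + Cx) / Real.sqrt (t ^ 2 + B)) (y0 / Real.sqrt (t ^ 2 + B)))
      (L ((xb k * 1 * Real.sqrt (yb k ^ 2 + B)
            - (xb k * yb k + Cx) * (yb k / Real.sqrt (yb k ^ 2 + B)))
          / Real.sqrt (yb k ^ 2 + B) ^ 2,
        (0 * Real.sqrt (yb k ^ 2 + B) - y0 * (yb k / Real.sqrt (yb k ^ 2 + B)))
          / Real.sqrt (yb k ^ 2 + B) ^ 2)) (yb k) :=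
    hL.comp_hasDerivAt_of_eq (yb k) (hsd.prodMk hzd) rfl
  have hF := hΘc.mul hgd
  -- rewrite the function under `deriv`
  have hfun : (fun t =>
        Θ (sVar xb (Function.update yb k t)) (zVar y0 (Function.update yb k t)) *
          (Function.update yb k t l / uNorm (Function.update yb k t)))
      = fun t : ℝ =>
        Θ ((xb k * t + Cx) / Real.sqrt (t ^ 2 + B)) (y0 / Real.sqrt (t ^ 2 + B)) *
          (Function.update yb k t l / Real.sqrt (t ^ 2 + B)) := by
    funext t
    rw [sVar, zVar, uNorm, hsumA t, hsumB t]
  have hd : deriv (fun t =>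
        Θ (sVar xb (Function.update yb k t)) (zVar y0 (Function.update yb k t)) *
          (Function.update yb k t l / uNorm (Function.update yb k t))) (yb k)
      = L ((xb k * 1 * Real.sqrt (yb k ^ 2 + B)
            - (xb k * yb k + Cx) * (yb k / Real.sqrt (yb k ^ 2 + B)))
          / Real.sqrt (yb k ^ 2 + B) ^ 2,
        (0 * Real.sqrt (yb k ^ 2 + B) - y0 * (yb k / Real.sqrt (yb k ^ 2 + B)))
          / Real.sqrt (yb k ^ 2 + B) ^ 2) *
          (Function.update yb k (yb k) l / Real.sqrt (yb k ^ 2 + B))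
        + Θ ((xb k * yb k + Cx) / Real.sqrt (yb k ^ 2 + B)) (y0 / Real.sqrt (yb k ^ 2 + B)) *
          (((if k = l then (1 : ℝ) else 0) * Real.sqrt (yb k ^ 2 + B)
              - yb l * (yb k / Real.sqrt (yb k ^ 2 + B)))
            / Real.sqrt (yb k ^ 2 + B) ^ 2) := by
    rw [hfun]
    exact hF.deriv
  rw [hd, hval, hDeq, hPsi, huN, hsV, hzV, hL2]
  generalize hq : Real.sqrt (yb k ^ 2 + B) = u
  rw [hq] at hu0ne
  rcases eq_or_ne k l with hkl | hkl
  · simp only [hkl, if_pos rfl, reduceIte]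
    field_simp
    ring
  · simp only [if_neg hkl]
    field_simp
    ring
end

section
/- Let N : ℝ² → ℝ be three times continuously differentiable and define G⁰(y) := u²·N(s(y), z(y)) on ℝ × (ℝⁿ∖{0}). Then for every y with ȳ ≠ 0 and every 1 ≤ l ≤ n, ∂³G⁰/∂y⁰∂y⁰∂y^l(y) = (1/u)·[N_szz(s,z)·x^l + Ψ(N_zz)(s,z)·u_l], where (s,z) = (s(y), z(y)). (This is the component B⁰₀₀ₗ of the Berwald curvature formula of Theorem 3.1.) -/
open Finset

noncomputable def G0 {n : ℕ} (xb : Fin n → ℝ) (N : ℝ → ℝ → ℝ) (y0 : ℝ) (yb : Fin n → ℝ) : ℝ :=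
  uNorm yb ^ 2 * N (sVar xb yb) (zVar y0 yb)

/- ## Auxiliary lemmas -/

lemma hasDerivAt_comp2 {g : ℝ × ℝ → ℝ} {a b : ℝ → ℝ} {a' b' t : ℝ}
    (hg : DifferentiableAt ℝ g (a t, b t)) (ha : HasDerivAt a a' t) (hb : HasDerivAt b b' t) :
    HasDerivAt (fun t => g (a t, b t))
      (a' * fderiv ℝ g (a t, b t) (1, 0) + b' * fderiv ℝ g (a t, b t) (0, 1)) t := by
  have h := hg.hasFDerivAt.comp_hasDerivAt t (ha.prodMk hb)
  refine h.congr_deriv ?_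
  have hv : (a', b') = a' • ((1:ℝ), (0:ℝ)) + b' • ((0:ℝ), (1:ℝ)) := by
    simp [Prod.ext_iff]
  rw [hv, map_add, map_smul, map_smul, smul_eq_mul, smul_eq_mul]

lemma deriv_fst {g : ℝ × ℝ → ℝ} {s z : ℝ} (hg : DifferentiableAt ℝ g (s, z)) :
    deriv (fun s' => g (s', z)) s = fderiv ℝ g (s, z) (1, 0) := by
  have h := hasDerivAt_comp2 (a := fun t => t) (b := fun _ => z) (t := s) hg
    (hasDerivAt_id s) (hasDerivAt_const s z)
  simpa using h.deriv

lemma deriv_snd {g : ℝ × ℝ → ℝ} {s z : ℝ} (hg : DifferentiableAt ℝ g (s, z)) :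
    deriv (fun z' => g (s, z')) z = fderiv ℝ g (s, z) (0, 1) := by
  have h := hasDerivAt_comp2 (a := fun _ => s) (b := fun t => t) (t := z) hg
    (hasDerivAt_const z s) (hasDerivAt_id z)
  simpa using h.deriv

lemma pd_symm {g : ℝ × ℝ → ℝ} (hg : ContDiff ℝ 2 g) (p v w : ℝ × ℝ) :
    fderiv ℝ (fun q => fderiv ℝ g q v) p w = fderiv ℝ (fun q => fderiv ℝ g q w) p v := by
  have hdg : Differentiable ℝ (fderiv ℝ g) :=
    (hg.fderiv_right (le_refl 2)).differentiable one_ne_zero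
  have h1 : ∀ (v : ℝ × ℝ), fderiv ℝ (fun q => fderiv ℝ g q v) p
      = (fderiv ℝ (fderiv ℝ g) p).flip v := by
    intro v
    rw [fderiv_clm_apply (hdg p) (differentiableAt_const v)]
    simp
  rw [h1 v, h1 w]
  simp only [ContinuousLinearMap.flip_apply]
  exact second_derivative_symmetric
    (fun y => ((hg.differentiable two_ne_zero) y).hasFDerivAt)
    ((hdg p).hasFDerivAt) w v

noncomputable def pd1 (g : ℝ × ℝ → ℝ) (p : ℝ × ℝ) : ℝ := fderiv ℝ g p (1, 0)
noncomputable def pd2 (g : ℝ × ℝ → ℝ) (p : ℝ × ℝ) : ℝ := fderiv ℝ g p (0, 1)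

lemma contDiff_pd1 {g : ℝ × ℝ → ℝ} {m n : WithTop ℕ∞} (hg : ContDiff ℝ n g) (h : m + 1 ≤ n) :
    ContDiff ℝ m (pd1 g) := (hg.fderiv_right h).clm_apply contDiff_const

lemma contDiff_pd2 {g : ℝ × ℝ → ℝ} {m n : WithTop ℕ∞} (hg : ContDiff ℝ n g) (h : m + 1 ≤ n) :
    ContDiff ℝ m (pd2 g) := (hg.fderiv_right h).clm_apply contDiff_const

lemma pd_comm {g : ℝ × ℝ → ℝ} (hg : ContDiff ℝ 2 g) (p : ℝ × ℝ) :
    pd2 (pd1 g) p = pd1 (pd2 g) p := by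
  simp only [pd1, pd2]
  exact pd_symm hg p (1, 0) (0, 1)

set_option maxHeartbeats 2000000 in
theorem stmt_9 (n : ℕ) (hn : 2 ≤ n) (xb : Fin n → ℝ)
    (N : ℝ → ℝ → ℝ) (hN : ContDiff ℝ 3 (Function.uncurry N))
    (y0 : ℝ) (yb : Fin n → ℝ) (hyb : yb ≠ 0) (l : Fin n) :
    deriv^[2]
        (fun t => deriv (fun t' => G0 xb N t (Function.update yb l t')) (yb l)) y0
      = (1 / uNorm yb) *
          (deriv (fun s' => deriv^[2] (N s') (zVar y0 yb)) (sVar xb yb) * xb l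
            + Psi (fun s z => deriv^[2] (N s) z) (sVar xb yb) (zVar y0 yb) *
                (yb l / uNorm yb)) := by
  classical
  set f : ℝ × ℝ → ℝ := Function.uncurry N with hf_def
  have hfN : ∀ a b : ℝ, f (a, b) = N a b := fun a b => rfl
  have h3 : ContDiff ℝ 3 f := hN
  have hfd : Differentiable ℝ f := h3.differentiable (by norm_num)
  have hNs2 : ContDiff ℝ 2 (pd1 f) := contDiff_pd1 h3 (by norm_num)
  have hNz2 : ContDiff ℝ 2 (pd2 f) := contDiff_pd2 h3 (by norm_num)
  have hNsd : Differentiable ℝ (pd1 f) := hNs2.differentiable (by norm_num)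
  have hNzd : Differentiable ℝ (pd2 f) := hNz2.differentiable (by norm_num)
  have hNsz1 : ContDiff ℝ 1 (pd2 (pd1 f)) := contDiff_pd2 hNs2 (by norm_num)
  have hNzz1 : ContDiff ℝ 1 (pd2 (pd2 f)) := contDiff_pd2 hNz2 (by norm_num)
  have hNszd : Differentiable ℝ (pd2 (pd1 f)) := hNsz1.differentiable one_ne_zero
  have hNzzd : Differentiable ℝ (pd2 (pd2 f)) := hNzz1.differentiable one_ne_zero
  -- constants
  set u : ℝ := uNorm yb with hu_def
  have hQpos : 0 < ∑ i, yb i ^ 2 := by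
    obtain ⟨j, hj⟩ := Function.ne_iff.mp hyb
    exact Finset.sum_pos' (fun i _ => sq_nonneg _)
      ⟨j, Finset.mem_univ j, lt_of_le_of_ne (sq_nonneg _) (Ne.symm (pow_ne_zero 2 hj))⟩
  have hupos : 0 < u := Real.sqrt_pos.mpr hQpos
  have hune : u ≠ 0 := hupos.ne'
  have hu2 : u ^ 2 = ∑ i, yb i ^ 2 := Real.sq_sqrt hQpos.le
  set s : ℝ := sVar xb yb with hs_def
  set C2 : ℝ := ∑ i ∈ Finset.univ \ {l}, yb i ^ 2 with hC2
  set C1 : ℝ := ∑ i ∈ Finset.univ \ {l}, xb i * yb i with hC1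
  have hC2nn : 0 ≤ C2 := Finset.sum_nonneg fun i _ => sq_nonneg _
  have hQ : ∀ t' : ℝ, (∑ i, (Function.update yb l t' i) ^ 2) = t' ^ 2 + C2 := by
    intro t'
    have h : ∀ j, (Function.update yb l t' j) ^ 2
        = Function.update (fun k => yb k ^ 2) l (t' ^ 2) j :=
      fun j => Function.apply_update (fun _ y => y ^ 2) yb l t' j
    simp_rw [h]
    exact Finset.sum_update_of_mem (Finset.mem_univ l) _ _
  have hP : ∀ t' : ℝ, (∑ i, xb i * Function.update yb l t' i) = xb l * t' + C1 := by
    intro t'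
    have h : ∀ j, xb j * Function.update yb l t' j
        = Function.update (fun k => xb k * yb k) l (xb l * t') j :=
      fun j => Function.apply_update (fun k y => xb k * y) yb l t' j
    simp_rw [h]
    exact Finset.sum_update_of_mem (Finset.mem_univ l) _ _
  have hQl : yb l ^ 2 + C2 = u ^ 2 := by
    rw [hu2, ← hQ (yb l), Function.update_eq_self]
  have hPl : xb l * yb l + C1 = ∑ i, xb i * yb i := by
    rw [← hP (yb l), Function.update_eq_self]
  have hs_eq : s = (∑ i, xb i * yb i) / u := by rw [hs_def, sVar, ← hu_def]
  have hsu : xb l * yb l + C1 = s * u := by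
    rw [hPl, hs_eq]; field_simp
  have hsq : Real.sqrt (yb l ^ 2 + C2) = u := by
    rw [hQl]; exact Real.sqrt_sq hupos.le
  have hQlne : yb l ^ 2 + C2 ≠ 0 := by rw [hQl]; positivity
  set c2 : ℝ := u * xb l - s * yb l with hc2
  -- Step 1 : the inner derivative
  have key1 : ∀ t : ℝ,
      deriv (fun t' => G0 xb N t (Function.update yb l t')) (yb l)
        = 2 * yb l * f (s, t / u) + c2 * pd1 f (s, t / u)
            - yb l / u * t * pd2 f (s, t / u) := by
    intro t
    have hfun : (fun t' => G0 xb N t (Function.update yb l t'))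
        = fun t' => (t' ^ 2 + C2) *
            f ((xb l * t' + C1) / Real.sqrt (t' ^ 2 + C2), t / Real.sqrt (t' ^ 2 + C2)) := by
      funext t'
      have h1 : uNorm (Function.update yb l t') = Real.sqrt (t' ^ 2 + C2) := by
        rw [uNorm, hQ]
      have h2 : uNorm (Function.update yb l t') ^ 2 = t' ^ 2 + C2 := by
        rw [h1]; exact Real.sq_sqrt (by positivity)
      rw [G0, h2, sVar, zVar, h1, hP, hfN]
    have hQ' : HasDerivAt (fun t' : ℝ => t' ^ 2 + C2) (2 * yb l) (yb l) := by
      simpa using (hasDerivAt_pow 2 (yb l)).add_const C2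
    have hU' : HasDerivAt (fun t' : ℝ => Real.sqrt (t' ^ 2 + C2)) (yb l / u) (yb l) := by
      have h := (Real.hasDerivAt_sqrt hQlne).comp (yb l) hQ'
      refine h.congr_deriv ?_
      rw [hsq]; field_simp
    have hP' : HasDerivAt (fun t' : ℝ => xb l * t' + C1) (xb l) (yb l) := by
      simpa using ((hasDerivAt_id (yb l)).const_mul (xb l)).add_const C1
    have hsqne : Real.sqrt (yb l ^ 2 + C2) ≠ 0 := by rw [hsq]; exact hune
    have hS' : HasDerivAt (fun t' => (xb l * t' + C1) / Real.sqrt (t' ^ 2 + C2))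
        ((xb l * u - s * u * (yb l / u)) / u ^ 2) (yb l) := by
      have h := hP'.div hU' hsqne
      refine h.congr_deriv ?_
      rw [hsq, hsu]
    have hZ' : HasDerivAt (fun t' => t / Real.sqrt (t' ^ 2 + C2))
        ((0 * u - t * (yb l / u)) / u ^ 2) (yb l) := by
      have h := (hasDerivAt_const (yb l) t).div hU' hsqne
      refine h.congr_deriv ?_
      rw [hsq]
    have hpt : ((xb l * yb l + C1) / Real.sqrt (yb l ^ 2 + C2),
        t / Real.sqrt (yb l ^ 2 + C2)) = (s, t / u) := by
      rw [hsq, hsu, Prod.mk.injEq]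
      constructor
      · field_simp
      · rfl
    have hcomp := hasDerivAt_comp2 (g := f)
      (a := fun t' => (xb l * t' + C1) / Real.sqrt (t' ^ 2 + C2))
      (b := fun t' => t / Real.sqrt (t' ^ 2 + C2)) (t := yb l)
      (by rw [hpt]; exact hfd _) hS' hZ'
    rw [hpt] at hcomp
    have hmain := hQ'.mul hcomp
    have harg : (xb l * yb l + C1) / Real.sqrt (yb l ^ 2 + C2) = s := by
      rw [hsq, hsu]; field_simp
    have harg2 : t / Real.sqrt (yb l ^ 2 + C2) = t / u := by rw [hsq]
    rw [hfun, (show HasDerivAt (fun t' => (t' ^ 2 + C2) * f ((xb l * t' + C1) / Real.sqrt (t' ^ 2 + C2), t / Real.sqrt (t' ^ 2 + C2))) _ (yb l) from hmain).deriv]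
    simp only [harg, harg2]
    rw [hQl]
    simp only [pd1, pd2]
    field_simp
    ring
  -- generic derivative in t of t ↦ g (s, t/u)
  have hzu : ∀ t : ℝ, HasDerivAt (fun t' : ℝ => t' / u) (1 / u) t := by
    intro t; simpa using (hasDerivAt_id t).div_const u
  have hg2 : ∀ (g : ℝ × ℝ → ℝ), Differentiable ℝ g → ∀ t : ℝ,
      HasDerivAt (fun t'' => g (s, t'' / u)) (1 / u * pd2 g (s, t / u)) t := by
    intro g hg t
    have h := hasDerivAt_comp2 (g := g) (a := fun _ => s) (b := fun t' => t' / u)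
      (hg _) (hasDerivAt_const t s) (hzu t)
    simpa [pd2] using h
  -- Step 2 : first t-derivative
  have hF1 : ∀ t : ℝ, HasDerivAt
      (fun t'' => 2 * yb l * f (s, t'' / u) + c2 * pd1 f (s, t'' / u)
        - yb l / u * t'' * pd2 f (s, t'' / u))
      (yb l / u * pd2 f (s, t / u) + c2 / u * pd2 (pd1 f) (s, t / u)
        - yb l / (u * u) * t * pd2 (pd2 f) (s, t / u)) t := by
    intro t
    have h1 := (hg2 f hfd t).const_mul (2 * yb l)
    have h2 := (hg2 (pd1 f) hNsd t).const_mul c2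
    have h3 := (((hasDerivAt_id t).const_mul (yb l / u)).mul (hg2 (pd2 f) hNzd t))
    have h := (h1.add h2).sub h3
    refine h.congr_deriv ?_
    simp only [id]
    field_simp
    ring
  -- Step 3 : second t-derivative
  have hF2 : HasDerivAt
      (fun t => yb l / u * pd2 f (s, t / u) + c2 / u * pd2 (pd1 f) (s, t / u)
        - yb l / (u * u) * t * pd2 (pd2 f) (s, t / u))
      (c2 / (u * u) * pd2 (pd2 (pd1 f)) (s, y0 / u)
        - yb l * y0 / (u * u * u) * pd2 (pd2 (pd2 f)) (s, y0 / u)) y0 := by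
    have h1 := (hg2 (pd2 f) hNzd y0).const_mul (yb l / u)
    have h2 := (hg2 (pd2 (pd1 f)) hNszd y0).const_mul (c2 / u)
    have h3 := (((hasDerivAt_id y0).const_mul (yb l / (u * u))).mul
      (hg2 (pd2 (pd2 f)) hNzzd y0))
    have h := (h1.add h2).sub h3
    refine h.congr_deriv ?_
    simp only [id]
    field_simp
    ring
  -- symmetry of partial derivatives
  have hsymm : pd2 (pd2 (pd1 f)) (s, y0 / u) = pd1 (pd2 (pd2 f)) (s, y0 / u) := by
    have e1 : pd2 (pd1 f) = pd1 (pd2 f) := funext fun q => pd_comm (h3.of_le (by norm_num)) q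
    rw [e1]
    exact pd_comm hNz2 _
  -- curried second derivative in z
  have E3 : ∀ a b : ℝ, deriv^[2] (N a) b = pd2 (pd2 f) (a, b) := by
    intro a b
    have e1 : deriv (N a) = fun b' => pd2 f (a, b') := by
      funext b'
      have hNa : N a = fun z' => f (a, z') := rfl
      rw [hNa, deriv_snd (hfd _)]; rfl
    show deriv (deriv (N a)) b = _
    rw [e1, deriv_snd (hNzd _)]; rfl
  have hz_eq : zVar y0 yb = y0 / u := by rw [zVar, ← hu_def]
  -- RHS pieces
  have hRs : deriv (fun s' => deriv^[2] (N s') (zVar y0 yb)) s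
      = pd1 (pd2 (pd2 f)) (s, y0 / u) := by
    have e : (fun s' => deriv^[2] (N s') (zVar y0 yb)) = fun s' => pd2 (pd2 f) (s', y0 / u) := by
      funext s'; rw [E3, hz_eq]
    rw [e, deriv_fst (hNzzd _)]; rfl
  have hRz : deriv (fun z' => deriv^[2] (N s) z') (zVar y0 yb)
      = pd2 (pd2 (pd2 f)) (s, y0 / u) := by
    have e : (fun z' => deriv^[2] (N s) z') = fun z' => pd2 (pd2 f) (s, z') := by
      funext z'; rw [E3]
    rw [e, hz_eq, deriv_snd (hNzzd _)]; rfl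
  -- assemble the left-hand side
  have hinner : (fun t => deriv (fun t' => G0 xb N t (Function.update yb l t')) (yb l))
      = fun t => 2 * yb l * f (s, t / u) + c2 * pd1 f (s, t / u)
          - yb l / u * t * pd2 f (s, t / u) := funext key1
  rw [hinner]
  have hd1 : deriv (fun t => 2 * yb l * f (s, t / u) + c2 * pd1 f (s, t / u)
        - yb l / u * t * pd2 f (s, t / u))
      = fun t => yb l / u * pd2 f (s, t / u) + c2 / u * pd2 (pd1 f) (s, t / u)
        - yb l / (u * u) * t * pd2 (pd2 f) (s, t / u) := funext fun t => (hF1 t).deriv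
  show deriv (deriv _) y0 = _
  rw [hd1, hF2.deriv, hsymm]
  -- assemble the right-hand side
  rw [Psi, hRs, hRz, hz_eq]
  rw [hc2]
  field_simp
  ring
end

section
/- Let U, W : ℝ² → ℝ be three times continuously differentiable and, for 1 ≤ i ≤ n, define Gⁱ(y) := u²·W(s(y), z(y))·u_i + u²·U(s(y), z(y))·x^i on ℝ × (ℝⁿ∖{0}). Then for every y with ȳ ≠ 0, ∂³Gⁱ/∂y⁰∂y⁰∂y⁰(y) = (1/u)·[U_zzz(s,z)·x^i + W_zzz(s,z)·u_i], where (s,z) = (s(y), z(y)). (This is the component Bⁱ₀₀₀ of the Berwald curvature formula of Theorem 3.1.) -/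
open Finset

/-- The spray coefficient `Gⁱ(y) = u²·W(s,z)·u_i + u²·U(s,z)·xⁱ`. -/
noncomputable def Gi {n : ℕ} (xb : Fin n → ℝ) (U W : ℝ → ℝ → ℝ) (i : Fin n)
    (y0 : ℝ) (yb : Fin n → ℝ) : ℝ :=
  uNorm yb ^ 2 * W (sVar xb yb) (zVar y0 yb) * (yb i / uNorm yb)
    + uNorm yb ^ 2 * U (sVar xb yb) (zVar y0 yb) * xb i

/-- Third iterated derivative of `t ↦ d·F(c·t) + e·G(c·t)`. -/
lemma aux_three (F G : ℝ → ℝ) (hF : ContDiff ℝ 3 F) (hG : ContDiff ℝ 3 G)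
    (c d e : ℝ) (x : ℝ) :
    deriv^[3] (fun t => d * F (c * t) + e * G (c * t)) x
      = d * (c ^ 3 * deriv^[3] F (c * x)) + e * (c ^ 3 * deriv^[3] G (c * x)) := by
  have hc : ContDiff ℝ 3 (fun t : ℝ => c * t) := contDiff_const.mul contDiff_id
  have hFc : ContDiff ℝ 3 (fun t => F (c * t)) := hF.comp hc
  have hGc : ContDiff ℝ 3 (fun t => G (c * t)) := hG.comp hc
  have hf : ContDiff ℝ 3 (fun t => d * F (c * t)) := contDiff_const.mul hFc
  have hg : ContDiff ℝ 3 (fun t => e * G (c * t)) := contDiff_const.mul hGc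
  have hadd : deriv^[3] (fun t => d * F (c * t) + e * G (c * t)) x
      = deriv^[3] (fun t => d * F (c * t)) x + deriv^[3] (fun t => e * G (c * t)) x := by
    rw [← iteratedDeriv_eq_iterate, ← iteratedDeriv_eq_iterate, ← iteratedDeriv_eq_iterate,
      ← iteratedDerivWithin_univ, ← iteratedDerivWithin_univ, ← iteratedDerivWithin_univ]
    exact iteratedDerivWithin_add (Set.mem_univ x) uniqueDiffOn_univ
      hf.contDiffWithinAt hg.contDiffWithinAt
  have hmulF : deriv^[3] (fun t => d * F (c * t)) x
      = d * deriv^[3] (fun t => F (c * t)) x := by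
    rw [← iteratedDeriv_eq_iterate, ← iteratedDeriv_eq_iterate,
      ← iteratedDerivWithin_univ, ← iteratedDerivWithin_univ]
    exact iteratedDerivWithin_const_mul (Set.mem_univ x) uniqueDiffOn_univ d hFc.contDiffWithinAt
  have hmulG : deriv^[3] (fun t => e * G (c * t)) x
      = e * deriv^[3] (fun t => G (c * t)) x := by
    rw [← iteratedDeriv_eq_iterate, ← iteratedDeriv_eq_iterate,
      ← iteratedDerivWithin_univ, ← iteratedDerivWithin_univ]
    exact iteratedDerivWithin_const_mul (Set.mem_univ x) uniqueDiffOn_univ e hGc.contDiffWithinAt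
  have hcF : deriv^[3] (fun t => F (c * t)) x = c ^ 3 * deriv^[3] F (c * x) := by
    rw [← iteratedDeriv_eq_iterate, ← iteratedDeriv_eq_iterate]
    exact congrFun (iteratedDeriv_comp_const_mul hF c) x
  have hcG : deriv^[3] (fun t => G (c * t)) x = c ^ 3 * deriv^[3] G (c * x) := by
    rw [← iteratedDeriv_eq_iterate, ← iteratedDeriv_eq_iterate]
    exact congrFun (iteratedDeriv_comp_const_mul hG c) x
  rw [hadd, hmulF, hmulG, hcF, hcG]

theorem stmt_10 (n : ℕ) (hn : 2 ≤ n) (xb : Fin n → ℝ)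
    (U W : ℝ → ℝ → ℝ) (hU : ContDiff ℝ 3 (Function.uncurry U))
    (hW : ContDiff ℝ 3 (Function.uncurry W))
    (i : Fin n) (y0 : ℝ) (yb : Fin n → ℝ) (hyb : yb ≠ 0) :
    deriv^[3] (fun t => Gi xb U W i t yb) y0
      = (1 / uNorm yb) *
          (deriv^[3] (U (sVar xb yb)) (zVar y0 yb) * xb i
            + deriv^[3] (W (sVar xb yb)) (zVar y0 yb) * (yb i / uNorm yb)) := by
  have hu : 0 < uNorm yb := by
    apply Real.sqrt_pos.2
    have : ∃ j, yb j ≠ 0 := by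
      by_contra h
      push_neg at h
      exact hyb (funext h)
    obtain ⟨j, hj⟩ := this
    exact Finset.sum_pos' (fun k _ => sq_nonneg _) ⟨j, Finset.mem_univ j, by positivity⟩
  set u := uNorm yb with hudef
  set s := sVar xb yb with hsdef
  have hu' : u ≠ 0 := ne_of_gt hu
  have hWs : ContDiff ℝ 3 (W s) := by
    have : ContDiff ℝ 3 (fun t : ℝ => Function.uncurry W (s, t)) :=
      hW.comp (contDiff_const.prodMk contDiff_id)
    exact this
  have hUs : ContDiff ℝ 3 (U s) := by
    have : ContDiff ℝ 3 (fun t : ℝ => Function.uncurry U (s, t)) :=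
      hU.comp (contDiff_const.prodMk contDiff_id)
    exact this
  have hfun : (fun t => Gi xb U W i t yb)
      = fun t => (u ^ 2 * (yb i / u)) * W s (u⁻¹ * t)
          + (u ^ 2 * xb i) * U s (u⁻¹ * t) := by
    funext t
    simp only [Gi, zVar, ← hudef, ← hsdef, div_eq_inv_mul]
    ring
  rw [hfun, aux_three (W s) (U s) hWs hUs u⁻¹ (u ^ 2 * (yb i / u)) (u ^ 2 * xb i) y0]
  have hz : zVar y0 yb = u⁻¹ * y0 := by
    simp [zVar, ← hudef, div_eq_inv_mul]
  rw [hz]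
  set A := deriv^[3] (U s) (u⁻¹ * y0)
  set B := deriv^[3] (W s) (u⁻¹ * y0)
  field_simp
  ring
end

section
/- Let φ, N, U, W : ℝ² → ℝ be three times continuously differentiable with φ > 0, and on ℝ × (ℝⁿ∖{0}) define F(y) := u·φ(s(y), z(y)), G⁰(y) := u²·N(s(y), z(y)), and Gⁱ(y) := u²·W(s(y), z(y))·u_i + u²·U(s(y), z(y))·x^i for 1 ≤ i ≤ n. Set Ω := φ − s·φ_s − z·φ_z and r := |x̄|. Then for every y with ȳ ≠ 0, (1/2)·F(y)·[∂F/∂y⁰(y)·∂³G⁰/∂(y⁰)³(y) + Σ_{i=1}^{n} ∂F/∂y^i(y)·∂³Gⁱ/∂(y⁰)³(y)] = (φ/2)·[φ_z·N_zzz + (r²·φ_s + s·Ω)·U_zzz + (s·φ_s + Ω)·W_zzz], where all functions of (s,z) are evaluated at (s(y), z(y)). (This is the component L₀₀₀ of the Landsberg curvature formula of Theorem 3.3.) -/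
open Finset

/-- The Finsler metric `F(y) = u·φ(s(y), z(y))`. -/
noncomputable def Fmet {n : ℕ} (xb : Fin n → ℝ) (φ : ℝ → ℝ → ℝ)
    (y0 : ℝ) (yb : Fin n → ℝ) : ℝ :=
  uNorm yb * φ (sVar xb yb) (zVar y0 yb)

/-- `φ_s(s,z)`, the partial derivative in the first variable. -/
noncomputable def phis (φ : ℝ → ℝ → ℝ) (s z : ℝ) : ℝ := deriv (fun s' => φ s' z) s

/-- `φ_z(s,z)`, the partial derivative in the second variable. -/
noncomputable def phiz (φ : ℝ → ℝ → ℝ) (s z : ℝ) : ℝ := deriv (φ s) z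

/-- `Ω = φ - s·φ_s - z·φ_z`. -/
noncomputable def Omeg (φ : ℝ → ℝ → ℝ) (s z : ℝ) : ℝ :=
  φ s z - s * phis φ s z - z * phiz φ s z

private lemma contDiff_slice {N : ℝ → ℝ → ℝ} (hN : ContDiff ℝ 3 (Function.uncurry N)) (s : ℝ) :
    ContDiff ℝ 3 (N s) :=
  hN.comp (ContDiff.prodMk contDiff_const contDiff_id)

private lemma deriv3_scaled {f : ℝ → ℝ} (hf : ContDiff ℝ 3 f) (a c x : ℝ) :
    deriv^[3] (fun t => a * f (c * t)) x = a * c ^ 3 * deriv^[3] f (c * x) := by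
  have hg : ContDiff ℝ 3 fun t => f (c * t) := hf.comp (contDiff_const.mul contDiff_id)
  rw [← iteratedDeriv_eq_iterate, ← iteratedDerivWithin_univ,
    iteratedDerivWithin_const_mul (Set.mem_univ x) uniqueDiffOn_univ a hg.contDiffAt.contDiffWithinAt,
    iteratedDerivWithin_univ, iteratedDeriv_comp_const_mul hf c]
  rw [iteratedDeriv_eq_iterate]
  ring

private lemma deriv3_add_scaled {f g : ℝ → ℝ} (hf : ContDiff ℝ 3 f) (hg : ContDiff ℝ 3 g)
    (a b c x : ℝ) :
    deriv^[3] (fun t => a * f (c * t) + b * g (c * t)) x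
      = a * c ^ 3 * deriv^[3] f (c * x) + b * c ^ 3 * deriv^[3] g (c * x) := by
  have hA : ContDiff ℝ 3 fun t => a * f (c * t) :=
    contDiff_const.mul (hf.comp (contDiff_const.mul contDiff_id))
  have hB : ContDiff ℝ 3 fun t => b * g (c * t) :=
    contDiff_const.mul (hg.comp (contDiff_const.mul contDiff_id))
  have key : deriv^[3] ((fun t => a * f (c * t)) + fun t => b * g (c * t)) x
      = deriv^[3] (fun t => a * f (c * t)) x + deriv^[3] (fun t => b * g (c * t)) x := by
    rw [← iteratedDeriv_eq_iterate, ← iteratedDeriv_eq_iterate, ← iteratedDeriv_eq_iterate,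
      ← iteratedDerivWithin_univ, ← iteratedDerivWithin_univ, ← iteratedDerivWithin_univ,
      iteratedDerivWithin_add (Set.mem_univ x) uniqueDiffOn_univ hA.contDiffAt.contDiffWithinAt hB.contDiffAt.contDiffWithinAt]
  rw [show (fun t => a * f (c * t) + b * g (c * t))
      = ((fun t => a * f (c * t)) + fun t => b * g (c * t)) from rfl, key,
    deriv3_scaled hf, deriv3_scaled hg]

private lemma hasDerivAt_comp2_s11 {φ : ℝ → ℝ → ℝ} (hφ : ContDiff ℝ 3 (Function.uncurry φ))
    {st zt : ℝ → ℝ} {s' z' t : ℝ} (hs : HasDerivAt st s' t) (hz : HasDerivAt zt z' t) :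
    HasDerivAt (fun t => φ (st t) (zt t))
      (s' * phis φ (st t) (zt t) + z' * phiz φ (st t) (zt t)) t := by
  have hd : Differentiable ℝ (Function.uncurry φ) := hφ.differentiable (by norm_num)
  set L := fderiv ℝ (Function.uncurry φ) (st t, zt t) with hL_def
  have hL : HasFDerivAt (Function.uncurry φ) L (st t, zt t) := (hd (st t, zt t)).hasFDerivAt
  have hps : phis φ (st t) (zt t) = L (1, 0) := by
    have h1 : HasDerivAt (fun a : ℝ => (a, zt t)) ((1 : ℝ), (0 : ℝ)) (st t) :=
      (hasDerivAt_id _).prodMk (hasDerivAt_const _ _)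
    have h2 : HasDerivAt (fun a => φ a (zt t)) (L (1, 0)) (st t) :=
      HasFDerivAt.comp_hasDerivAt (l := Function.uncurry φ) (f := fun a : ℝ => (a, zt t)) _ hL h1
    exact h2.deriv
  have hpz : phiz φ (st t) (zt t) = L (0, 1) := by
    have h1 : HasDerivAt (fun a : ℝ => (st t, a)) ((0 : ℝ), (1 : ℝ)) (zt t) :=
      (hasDerivAt_const _ _).prodMk (hasDerivAt_id _)
    have h2 : HasDerivAt (fun a => φ (st t) a) (L (0, 1)) (zt t) :=
      HasFDerivAt.comp_hasDerivAt (l := Function.uncurry φ) (f := fun a : ℝ => (st t, a)) _ hL h1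
    exact h2.deriv
  have hcurve : HasDerivAt (fun t => (st t, zt t)) (s', z') t := hs.prodMk hz
  have hcomp : HasDerivAt (fun t => φ (st t) (zt t)) (L (s', z')) t :=
    HasFDerivAt.comp_hasDerivAt (l := Function.uncurry φ) (f := fun t => (st t, zt t)) _ hL hcurve
  have : L (s', z') = s' * phis φ (st t) (zt t) + z' * phiz φ (st t) (zt t) := by
    have h : (s', z') = s' • ((1 : ℝ), (0 : ℝ)) + z' • ((0 : ℝ), (1 : ℝ)) := by
      simp [Prod.ext_iff]
    rw [h, map_add, map_smul, map_smul, hps, hpz]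
    simp [smul_eq_mul]
  rwa [this] at hcomp

theorem stmt_11 (n : ℕ) (hn : 2 ≤ n) (xb : Fin n → ℝ)
    (φ N U W : ℝ → ℝ → ℝ)
    (hφ : ContDiff ℝ 3 (Function.uncurry φ)) (hN : ContDiff ℝ 3 (Function.uncurry N))
    (hU : ContDiff ℝ 3 (Function.uncurry U)) (hW : ContDiff ℝ 3 (Function.uncurry W))
    (hφpos : ∀ s z : ℝ, 0 < φ s z)
    (y0 : ℝ) (yb : Fin n → ℝ) (hyb : yb ≠ 0) :
    (1 / 2) * Fmet xb φ y0 yb *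
        (deriv (fun t => Fmet xb φ t yb) y0 * deriv^[3] (fun t => G0 xb N t yb) y0
          + ∑ i : Fin n,
              deriv (fun t => Fmet xb φ y0 (Function.update yb i t)) (yb i) *
                deriv^[3] (fun t => Gi xb U W i t yb) y0)
      = (φ (sVar xb yb) (zVar y0 yb) / 2) *
          (phiz φ (sVar xb yb) (zVar y0 yb) * deriv^[3] (N (sVar xb yb)) (zVar y0 yb)
            + (Real.sqrt (∑ i, xb i ^ 2) ^ 2 * phis φ (sVar xb yb) (zVar y0 yb)
                + sVar xb yb * Omeg φ (sVar xb yb) (zVar y0 yb)) *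
                deriv^[3] (U (sVar xb yb)) (zVar y0 yb)
            + (sVar xb yb * phis φ (sVar xb yb) (zVar y0 yb)
                + Omeg φ (sVar xb yb) (zVar y0 yb)) *
                deriv^[3] (W (sVar xb yb)) (zVar y0 yb)) := by
  classical
  obtain ⟨j0, hj0⟩ : ∃ j, yb j ≠ 0 := Function.ne_iff.mp hyb
  have hqpos : 0 < ∑ i, yb i ^ 2 :=
    Finset.sum_pos' (fun i _ => sq_nonneg _) ⟨j0, Finset.mem_univ _, by positivity⟩
  set u := uNorm yb with hu_def
  have hu : 0 < u := Real.sqrt_pos.mpr hqpos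
  have hune : u ≠ 0 := ne_of_gt hu
  have husq : u ^ 2 = ∑ i, yb i ^ 2 := Real.sq_sqrt hqpos.le
  set s := sVar xb yb with hs_def
  set z := zVar y0 yb with hz_def
  have hz' : z = u⁻¹ * y0 := by rw [hz_def, zVar, ← hu_def, div_eq_inv_mul]
  have hT : ∑ i, xb i * yb i = s * u := by
    rw [hs_def, sVar, ← hu_def]; field_simp
  -- derivative of F in the y⁰ direction
  have hFz : deriv (fun t => Fmet xb φ t yb) y0 = phiz φ s z := by
    have hzline : HasDerivAt (fun t : ℝ => u⁻¹ * t) u⁻¹ y0 := by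
      simpa using (hasDerivAt_id y0).const_mul u⁻¹
    have hcomp := hasDerivAt_comp2_s11 hφ (hasDerivAt_const y0 s) hzline
    have hF : HasDerivAt (fun t => u * φ s (u⁻¹ * t))
        (u * (0 * phis φ s (u⁻¹ * y0) + u⁻¹ * phiz φ s (u⁻¹ * y0))) y0 := hcomp.const_mul u
    have hfun : (fun t => Fmet xb φ t yb) = fun t => u * φ s (u⁻¹ * t) := by
      funext t
      rw [Fmet, ← hu_def, ← hs_def, zVar, ← hu_def, div_eq_inv_mul]
    rw [hfun, hF.deriv, ← hz']
    field_simp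
    ring
  -- third derivative of G⁰ in the y⁰ direction
  have hNs : ContDiff ℝ 3 (N s) := contDiff_slice hN s
  have hUs : ContDiff ℝ 3 (U s) := contDiff_slice hU s
  have hWs : ContDiff ℝ 3 (W s) := contDiff_slice hW s
  have hG0 : deriv^[3] (fun t => G0 xb N t yb) y0 = u ^ 2 * u⁻¹ ^ 3 * deriv^[3] (N s) z := by
    have hfun : (fun t => G0 xb N t yb) = fun t => u ^ 2 * (N s) (u⁻¹ * t) := by
      funext t
      rw [G0, ← hu_def, ← hs_def, zVar, ← hu_def, div_eq_inv_mul]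
    rw [hfun, deriv3_scaled hNs, ← hz']
  -- third derivative of Gⁱ in the y⁰ direction
  have hGi : ∀ i, deriv^[3] (fun t => Gi xb U W i t yb) y0
      = u ^ 2 * (yb i / u) * u⁻¹ ^ 3 * deriv^[3] (W s) z
        + u ^ 2 * xb i * u⁻¹ ^ 3 * deriv^[3] (U s) z := by
    intro i
    have hfun : (fun t => Gi xb U W i t yb)
        = fun t => u ^ 2 * (yb i / u) * (W s) (u⁻¹ * t) + u ^ 2 * xb i * (U s) (u⁻¹ * t) := by
      funext t
      rw [Gi, ← hu_def, ← hs_def, zVar, ← hu_def, div_eq_inv_mul]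
      ring
    rw [hfun, deriv3_add_scaled hWs hUs, ← hz']
  -- derivative of F in the yⁱ direction
  have hFd : ∀ i, deriv (fun t => Fmet xb φ y0 (Function.update yb i t)) (yb i)
      = yb i / u * Omeg φ s z + phis φ s z * xb i := by
    intro i
    set C := ∑ j ∈ Finset.univ \ {i}, yb j ^ 2 with hC
    set D := ∑ j ∈ Finset.univ \ {i}, xb j * yb j with hD
    have hqsum : ∀ t : ℝ, ∑ j, Function.update yb i t j ^ 2 = t ^ 2 + C := by
      intro t
      have he : (fun j => Function.update yb i t j ^ 2)
          = Function.update (fun j => yb j ^ 2) i (t ^ 2) := by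
        funext j
        rcases eq_or_ne j i with rfl | h
        · simp
        · simp [Function.update_of_ne h]
      rw [he, Finset.sum_update_of_mem (Finset.mem_univ i)]
    have hpsum : ∀ t : ℝ, ∑ j, xb j * Function.update yb i t j = xb i * t + D := by
      intro t
      have he : (fun j => xb j * Function.update yb i t j)
          = Function.update (fun j => xb j * yb j) i (xb i * t) := by
        funext j
        rcases eq_or_ne j i with rfl | h
        · simp
        · simp [Function.update_of_ne h]
      rw [he, Finset.sum_update_of_mem (Finset.mem_univ i)]
    have hq0 : yb i ^ 2 + C = u ^ 2 := by
      rw [husq, ← hqsum (yb i), Function.update_eq_self]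
    have hp0 : xb i * yb i + D = s * u := by
      rw [← hT, ← hpsum (yb i), Function.update_eq_self]
    have hqne : yb i ^ 2 + C ≠ 0 := by rw [hq0]; positivity
    have hsq : Real.sqrt (yb i ^ 2 + C) = u := by rw [hq0, Real.sqrt_sq hu.le]
    have hsne : Real.sqrt (yb i ^ 2 + C) ≠ 0 := by rw [hsq]; exact hune
    have hQ : HasDerivAt (fun t : ℝ => t ^ 2 + C) (2 * yb i) (yb i) := by
      simpa using (hasDerivAt_pow 2 (yb i)).add_const C
    have hUd : HasDerivAt (fun t : ℝ => Real.sqrt (t ^ 2 + C))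
        (2 * yb i / (2 * Real.sqrt (yb i ^ 2 + C))) (yb i) := hQ.sqrt hqne
    have hPd : HasDerivAt (fun t : ℝ => xb i * t + D) (xb i) (yb i) := by
      simpa using ((hasDerivAt_id (yb i)).const_mul (xb i)).add_const D
    have hSd : HasDerivAt (fun t : ℝ => (xb i * t + D) / Real.sqrt (t ^ 2 + C))
        ((xb i * Real.sqrt (yb i ^ 2 + C)
            - (xb i * yb i + D) * (2 * yb i / (2 * Real.sqrt (yb i ^ 2 + C))))
          / Real.sqrt (yb i ^ 2 + C) ^ 2) (yb i) := hPd.div hUd hsne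
    have hZd : HasDerivAt (fun t : ℝ => y0 / Real.sqrt (t ^ 2 + C))
        ((0 * Real.sqrt (yb i ^ 2 + C)
            - y0 * (2 * yb i / (2 * Real.sqrt (yb i ^ 2 + C))))
          / Real.sqrt (yb i ^ 2 + C) ^ 2) (yb i) := (hasDerivAt_const (yb i) y0).div hUd hsne
    have hchain := hasDerivAt_comp2_s11 hφ hSd hZd
    have htot := hUd.mul hchain
    have hfun : (fun t => Fmet xb φ y0 (Function.update yb i t))
        = fun t => Real.sqrt (t ^ 2 + C)
            * φ ((xb i * t + D) / Real.sqrt (t ^ 2 + C)) (y0 / Real.sqrt (t ^ 2 + C)) := by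
      funext t
      simp only [Fmet, sVar, zVar, uNorm, hqsum, hpsum]
    have hval_s : (xb i * yb i + D) / Real.sqrt (yb i ^ 2 + C) = s := by
      rw [hsq, hp0]; field_simp
    have hval_z : y0 / Real.sqrt (yb i ^ 2 + C) = z := by
      rw [hsq, hz', div_eq_inv_mul]
    have hd := htot.deriv
    have hz2 : y0 / u = z := by rw [hz', div_eq_inv_mul]
    simp only [hval_s, hval_z, hsq, hp0, Pi.mul_def, mul_div_cancel_right₀ _ hune, hz2] at hd
    rw [hfun]
    rw [show (fun t => Real.sqrt (t ^ 2 + C)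
            * φ ((xb i * t + D) / Real.sqrt (t ^ 2 + C)) (y0 / Real.sqrt (t ^ 2 + C)))
        = (fun t => Real.sqrt (t ^ 2 + C)
            * ((fun t => φ ((xb i * t + D) / Real.sqrt (t ^ 2 + C))
                (y0 / Real.sqrt (t ^ 2 + C))) t)) from rfl]
    rw [hd, Omeg]
    have hy0 : y0 = u * z := by rw [hz']; field_simp
    rw [hy0]
    field_simp
    ring
  -- assemble
  rw [hFz, hG0]
  have hsum1 : (∑ i : Fin n,
        deriv (fun t => Fmet xb φ y0 (Function.update yb i t)) (yb i) *
          deriv^[3] (fun t => Gi xb U W i t yb) y0)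
      = ∑ i : Fin n, (yb i / u * Omeg φ s z + phis φ s z * xb i) *
          (u ^ 2 * (yb i / u) * u⁻¹ ^ 3 * deriv^[3] (W s) z
            + u ^ 2 * xb i * u⁻¹ ^ 3 * deriv^[3] (U s) z) :=
    Finset.sum_congr rfl fun i _ => by rw [hFd i, hGi i]
  rw [hsum1]
  have hsum2 : (∑ i : Fin n, (yb i / u * Omeg φ s z + phis φ s z * xb i) *
          (u ^ 2 * (yb i / u) * u⁻¹ ^ 3 * deriv^[3] (W s) z
            + u ^ 2 * xb i * u⁻¹ ^ 3 * deriv^[3] (U s) z))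
      = Omeg φ s z * deriv^[3] (W s) z * u⁻¹ ^ 3 * ∑ i, yb i ^ 2
        + (Omeg φ s z * deriv^[3] (U s) z + phis φ s z * deriv^[3] (W s) z) * u⁻¹ ^ 2 *
            ∑ i, xb i * yb i
        + phis φ s z * deriv^[3] (U s) z * u⁻¹ * ∑ i, xb i ^ 2 := by
    rw [Finset.mul_sum, Finset.mul_sum, Finset.mul_sum, ← Finset.sum_add_distrib,
      ← Finset.sum_add_distrib]
    refine Finset.sum_congr rfl fun i _ => ?_
    field_simp
    ring
  rw [hsum2, ← husq, hT]
  have hr2 : Real.sqrt (∑ i, xb i ^ 2) ^ 2 = ∑ i, xb i ^ 2 :=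
    Real.sq_sqrt (by positivity)
  rw [hr2]
  have hFval : Fmet xb φ y0 yb = u * φ s z := by
    rw [Fmet, ← hu_def, ← hs_def, ← hz_def]
  rw [hFval]
  field_simp
  ring
end

section
/- Let U : ℝ × (0,∞) → ℝ be three times continuously differentiable. Then U satisfies z·Ψ(U_s/z)(s,z) = 0, z·Ψ(U_z/z)(s,z) = 0, and U_zzz(s,z) = 0 for all s ∈ ℝ, z > 0 if and only if there exist real constants g₁, g₂, g₃, g₄ such that U(s,z) = g₁·s²/2 + g₂·s·z + g₃·z²/2 + g₄ for all s ∈ ℝ, z > 0. (This is the structure of the function U appearing in the vanishing-Berwald-curvature characterization of Theorem 3.4.) -/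
open Filter Topology

section Aux
variable {E : Type*} [NormedAddCommGroup E] [NormedSpace ℝ E]

private lemma lineDeriv1 {g : ℝ × ℝ → E} {s z : ℝ} (hg : DifferentiableAt ℝ g (s, z)) :
    HasDerivAt (fun t => g (t, z)) (fderiv ℝ g (s, z) (1, 0)) s := by
  have h := hg.hasFDerivAt.comp_hasDerivAt s
    ((hasDerivAt_id s).prodMk (hasDerivAt_const s z))
  simpa [Function.comp_def] using h

private lemma lineDeriv2 {g : ℝ × ℝ → E} {s z : ℝ} (hg : DifferentiableAt ℝ g (s, z)) :
    HasDerivAt (fun t => g (s, t)) (fderiv ℝ g (s, z) (0, 1)) z := by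
  have h := hg.hasFDerivAt.comp_hasDerivAt z
    ((hasDerivAt_const z s).prodMk (hasDerivAt_id z))
  simpa [Function.comp_def] using h

private lemma lineDeriv1_ap {g : ℝ × ℝ → (ℝ × ℝ) →L[ℝ] E} {s z : ℝ}
    (hg : DifferentiableAt ℝ g (s, z)) (v : ℝ × ℝ) :
    HasDerivAt (fun t => g (t, z) v) (fderiv ℝ g (s, z) (1, 0) v) s := by
  simpa using (lineDeriv1 hg).clm_apply (hasDerivAt_const s v)

private lemma lineDeriv2_ap {g : ℝ × ℝ → (ℝ × ℝ) →L[ℝ] E} {s z : ℝ}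
    (hg : DifferentiableAt ℝ g (s, z)) (v : ℝ × ℝ) :
    HasDerivAt (fun t => g (s, t) v) (fderiv ℝ g (s, z) (0, 1) v) z := by
  simpa using (lineDeriv2 hg).clm_apply (hasDerivAt_const z v)

private lemma lineDeriv1_ap2 {g : ℝ × ℝ → (ℝ × ℝ) →L[ℝ] ((ℝ × ℝ) →L[ℝ] E)} {s z : ℝ}
    (hg : DifferentiableAt ℝ g (s, z)) (v w : ℝ × ℝ) :
    HasDerivAt (fun t => g (t, z) v w) (fderiv ℝ g (s, z) (1, 0) v w) s := by
  simpa using (lineDeriv1_ap hg v).clm_apply (hasDerivAt_const s w)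

private lemma lineDeriv2_ap2 {g : ℝ × ℝ → (ℝ × ℝ) →L[ℝ] ((ℝ × ℝ) →L[ℝ] E)} {s z : ℝ}
    (hg : DifferentiableAt ℝ g (s, z)) (v w : ℝ × ℝ) :
    HasDerivAt (fun t => g (s, t) v w) (fderiv ℝ g (s, z) (0, 1) v w) z := by
  simpa using (lineDeriv2_ap hg v).clm_apply (hasDerivAt_const z w)

private lemma clm_eq_zero (L : (ℝ × ℝ) →L[ℝ] E) (h1 : L (1, 0) = 0) (h2 : L (0, 1) = 0) :
    L = 0 := by
  apply ContinuousLinearMap.ext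
  intro x
  have hx : (x : ℝ × ℝ) = x.1 • ((1 : ℝ), (0 : ℝ)) + x.2 • ((0 : ℝ), (1 : ℝ)) := by
    simp [Prod.ext_iff]
  rw [hx, map_add, map_smul, map_smul, h1, h2]
  simp

end Aux

private lemma hasDerivAt_affine (a b x : ℝ) : HasDerivAt (fun t => a * t + b) a x := by
  simpa using ((hasDerivAt_id x).const_mul a).add_const b

set_option linter.unnecessarySeqFocus false in
set_option maxHeartbeats 2000000 in
theorem stmt_13 (U : ℝ → ℝ → ℝ)
    (hU : ContDiffOn ℝ 3 (Function.uncurry U) {p : ℝ × ℝ | 0 < p.2}) :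
    ((∀ s z : ℝ, 0 < z →
        z * Psi (fun s z => deriv (fun s' => U s' z) s / z) s z = 0) ∧
      (∀ s z : ℝ, 0 < z →
        z * Psi (fun s z => deriv (fun z' => U s z') z / z) s z = 0) ∧
      (∀ s z : ℝ, 0 < z → deriv^[3] (U s) z = 0)) ↔
      ∃ g₁ g₂ g₃ g₄ : ℝ, ∀ s z : ℝ, 0 < z →
        U s z = g₁ * s ^ 2 / 2 + g₂ * s * z + g₃ * z ^ 2 / 2 + g₄ := by
  constructor
  · rintro ⟨h1, h2, h3⟩
    classical
    set F := Function.uncurry U with hFdef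
    set H : Set (ℝ × ℝ) := {p : ℝ × ℝ | 0 < p.2} with hHdef
    have hH : IsOpen H := isOpen_lt continuous_const continuous_snd
    have hHconv : Convex ℝ H := by
      intro x hx y hy α β hα hβ hαβ
      simp only [hHdef, Set.mem_setOf_eq] at hx hy ⊢
      have h2' : (α • x + β • y).2 = α * x.2 + β * y.2 := rfl
      rw [h2']
      rcases eq_or_lt_of_le hα with h | h
      · have hβ1 : β = 1 := by linarith
        rw [← h, hβ1]; simpa using hy
      · nlinarith
    have hmem : ∀ s z : ℝ, 0 < z → ((s, z) : ℝ × ℝ) ∈ H := fun _ _ hz => hz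
    have h01 : ((0 : ℝ), (1 : ℝ)) ∈ H := hmem 0 1 one_pos
    set D1 := fderiv ℝ F with hD1def
    set D2 := fderiv ℝ D1 with hD2def
    set D3 := fderiv ℝ D2 with hD3def
    have hcd1 : ContDiffOn ℝ 2 D1 H := hU.fderiv_of_isOpen hH (by norm_num)
    have hcd2 : ContDiffOn ℝ 1 D2 H := hcd1.fderiv_of_isOpen hH (by norm_num)
    have hFd : ∀ p ∈ H, DifferentiableAt ℝ F p := fun p hp =>
      (hU.differentiableOn (by norm_num)).differentiableAt (hH.mem_nhds hp)
    have hD1d : ∀ p ∈ H, DifferentiableAt ℝ D1 p := fun p hp =>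
      (hcd1.differentiableOn (by norm_num)).differentiableAt (hH.mem_nhds hp)
    have hD2d : ∀ p ∈ H, DifferentiableAt ℝ D2 p := fun p hp =>
      (hcd2.differentiableOn one_ne_zero).differentiableAt (hH.mem_nhds hp)
    have hD3c := hcd2.continuousOn_fderiv_of_isOpen hH le_rfl
    have hUs : ∀ s z : ℝ, 0 < z → HasDerivAt (fun t => U t z) (D1 (s, z) (1, 0)) s :=
      fun s z hz => lineDeriv1 (hFd _ (hmem s z hz))
    have hUz : ∀ s z : ℝ, 0 < z → HasDerivAt (fun t => U s t) (D1 (s, z) (0, 1)) z :=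
      fun s z hz => lineDeriv2 (hFd _ (hmem s z hz))
    -- Euler-type identities
    have hA : ∀ s z : ℝ, 0 < z →
        s * D2 (s, z) (1, 0) (1, 0) + z * D2 (s, z) (0, 1) (1, 0) = D1 (s, z) (1, 0) := by
      intro s z hz
      have e := h1 s z hz
      simp only [Psi] at e
      have hin : (fun s' => deriv (fun s'' => U s'' z) s' / z) = fun s' => D1 (s', z) (1, 0) / z :=
        funext fun s' => by rw [(hUs s' z hz).deriv]
      have hd1 : deriv (fun s' => deriv (fun s'' => U s'' z) s' / z) s
          = D2 (s, z) (1, 0) (1, 0) / z := by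
        rw [hin]
        exact ((lineDeriv1_ap (hD1d _ (hmem s z hz)) (1, 0)).div_const z).deriv
      have hev : (fun z' => deriv (fun s'' => U s'' z') s / z') =ᶠ[nhds z]
          fun z' => D1 (s, z') (1, 0) / z' := by
        filter_upwards [Ioi_mem_nhds hz] with z' hz'
        rw [(hUs s z' hz').deriv]
      have hd2' : HasDerivAt (fun z' => D1 (s, z') (1, 0) / z')
          ((D2 (s, z) (0, 1) (1, 0) * z - D1 (s, z) (1, 0) * 1) / z ^ 2) z := by
        simpa [Pi.div_def] using (lineDeriv2_ap (hD1d _ (hmem s z hz)) (1, 0)).div (hasDerivAt_id z) hz.ne'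
      have hd2 : deriv (fun z' => deriv (fun s'' => U s'' z') s / z') z
          = (D2 (s, z) (0, 1) (1, 0) * z - D1 (s, z) (1, 0) * 1) / z ^ 2 := by
        rw [hev.deriv_eq]; exact hd2'.deriv
      rw [hd1, hd2] at e
      have hzne := hz.ne'
      field_simp at e
      have e3 : s * ((D2 (s, z)) (1, 0)) (1, 0) + z * ((D2 (s, z)) (0, 1)) (1, 0)
          - (D1 (s, z)) (1, 0) = 0 := by
        apply mul_left_cancel₀ (pow_ne_zero 3 hzne)
        rw [mul_zero]
        linear_combination -z ^ 3 * e
      linarith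
    have hB : ∀ s z : ℝ, 0 < z →
        s * D2 (s, z) (1, 0) (0, 1) + z * D2 (s, z) (0, 1) (0, 1) = D1 (s, z) (0, 1) := by
      intro s z hz
      have e := h2 s z hz
      simp only [Psi] at e
      have hin : (fun s' => deriv (fun z' => U s' z') z / z) = fun s' => D1 (s', z) (0, 1) / z :=
        funext fun s' => by rw [(hUz s' z hz).deriv]
      have hd1 : deriv (fun s' => deriv (fun z' => U s' z') z / z) s
          = D2 (s, z) (1, 0) (0, 1) / z := by
        rw [hin]
        exact ((lineDeriv1_ap (hD1d _ (hmem s z hz)) (0, 1)).div_const z).deriv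
      have hev : (fun z' => deriv (fun z'' => U s z'') z' / z') =ᶠ[nhds z]
          fun z' => D1 (s, z') (0, 1) / z' := by
        filter_upwards [Ioi_mem_nhds hz] with z' hz'
        rw [(hUz s z' hz').deriv]
      have hd2' : HasDerivAt (fun z' => D1 (s, z') (0, 1) / z')
          ((D2 (s, z) (0, 1) (0, 1) * z - D1 (s, z) (0, 1) * 1) / z ^ 2) z := by
        simpa [Pi.div_def] using (lineDeriv2_ap (hD1d _ (hmem s z hz)) (0, 1)).div (hasDerivAt_id z) hz.ne'
      have hd2 : deriv (fun z' => deriv (fun z'' => U s z'') z' / z') z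
          = (D2 (s, z) (0, 1) (0, 1) * z - D1 (s, z) (0, 1) * 1) / z ^ 2 := by
        rw [hev.deriv_eq]; exact hd2'.deriv
      rw [hd1, hd2] at e
      have hzne := hz.ne'
      field_simp at e
      have e3 : s * ((D2 (s, z)) (1, 0)) (0, 1) + z * ((D2 (s, z)) (0, 1)) (0, 1)
          - (D1 (s, z)) (0, 1) = 0 := by
        apply mul_left_cancel₀ (pow_ne_zero 3 hzne)
        rw [mul_zero]
        linear_combination -z ^ 3 * e
      linarith
    have hC : ∀ s z : ℝ, 0 < z → D3 (s, z) (0, 1) (0, 1) (0, 1) = 0 := by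
      intro s z hz
      have e := h3 s z hz
      have step2 : ∀ z' : ℝ, 0 < z' → deriv (deriv (U s)) z' = D2 (s, z') (0, 1) (0, 1) := by
        intro z' hz'
        have hev : deriv (U s) =ᶠ[nhds z'] fun t => D1 (s, t) (0, 1) := by
          filter_upwards [Ioi_mem_nhds hz'] with t ht
          exact (hUz s t ht).deriv
        rw [hev.deriv_eq]
        exact (lineDeriv2_ap (hD1d _ (hmem s z' hz')) (0, 1)).deriv
      have hiter : deriv^[3] (U s) z = D3 (s, z) (0, 1) (0, 1) (0, 1) := by
        show deriv (deriv (deriv (U s))) z = _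
        have hev : deriv (deriv (U s)) =ᶠ[nhds z] fun t => D2 (s, t) (0, 1) (0, 1) := by
          filter_upwards [Ioi_mem_nhds hz] with t ht
          exact step2 t ht
        rw [hev.deriv_eq]
        exact (lineDeriv2_ap2 (hD2d _ (hmem s z hz)) (0, 1) (0, 1)).deriv
      rw [hiter] at e
      exact e
    -- symmetry of second and third derivatives
    have hsym2 : ∀ p ∈ H, ∀ v w : ℝ × ℝ, D2 p v w = D2 p w v := by
      intro p hp v w
      have hf : ∀ᶠ q in nhds p, HasFDerivAt F (D1 q) q := by
        filter_upwards [hH.mem_nhds hp] with q hq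
        exact (hFd q hq).hasFDerivAt
      exact second_derivative_symmetric_of_eventually hf (hD1d p hp).hasFDerivAt v w
    have hsym3 : ∀ p ∈ H, ∀ u v : ℝ × ℝ, D3 p u v = D3 p v u := by
      intro p hp u v
      have hf : ∀ᶠ q in nhds p, HasFDerivAt D1 (D2 q) q := by
        filter_upwards [hH.mem_nhds hp] with q hq
        exact (hD1d q hq).hasFDerivAt
      exact second_derivative_symmetric_of_eventually hf (hD2d p hp).hasFDerivAt u v
    have hsym3h : ∀ s z : ℝ, 0 < z → ∀ v w : ℝ × ℝ,
        D3 (s, z) (1, 0) v w = D3 (s, z) (1, 0) w v := by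
      intro s z hz v w
      have hda := lineDeriv1_ap2 (hD2d _ (hmem s z hz)) v w
      have hdb := lineDeriv1_ap2 (hD2d _ (hmem s z hz)) w v
      have heq : (fun t => D2 (t, z) v w) = fun t => D2 (t, z) w v :=
        funext fun t => hsym2 _ (hmem t z hz) v w
      have h' := hda.deriv
      rw [heq] at h'
      rw [← h', ← hdb.deriv]
    have hsym3v : ∀ s z : ℝ, 0 < z → ∀ v w : ℝ × ℝ,
        D3 (s, z) (0, 1) v w = D3 (s, z) (0, 1) w v := by
      intro s z hz v w
      have hda := lineDeriv2_ap2 (hD2d _ (hmem s z hz)) v w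
      have hdb := lineDeriv2_ap2 (hD2d _ (hmem s z hz)) w v
      have hev : (fun t => D2 (s, t) v w) =ᶠ[nhds z] fun t => D2 (s, t) w v := by
        filter_upwards [Ioi_mem_nhds hz] with t ht
        exact hsym2 _ (hmem s t ht) v w
      rw [← hda.deriv, ← hdb.deriv, hev.deriv_eq]
    -- continuity-based vanishing principle
    have hvanish : ∀ G : ℝ × ℝ → ℝ, ContinuousOn G H → (∀ s z : ℝ, 0 < z → s * G (s, z) = 0) →
        ∀ s z : ℝ, 0 < z → G (s, z) = 0 := by
      intro G hGc hG s z hz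
      rcases eq_or_ne s 0 with rfl | hs
      · have hca : ContinuousAt G (0, z) := hGc.continuousAt (hH.mem_nhds (hmem 0 z hz))
        have hseq : Filter.Tendsto (fun n : ℕ => (((1 : ℝ) / (n + 1), z) : ℝ × ℝ))
            Filter.atTop (nhds ((0 : ℝ), z)) :=
          tendsto_one_div_add_atTop_nhds_zero_nat.prodMk_nhds tendsto_const_nhds
        have h0 : Filter.Tendsto (fun n : ℕ => G ((1 : ℝ) / (n + 1), z)) Filter.atTop
            (nhds (G (0, z))) := hca.tendsto.comp hseq
        have h0' : ∀ n : ℕ, G ((1 : ℝ) / (n + 1), z) = 0 := by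
          intro n
          have hpos : (0 : ℝ) < 1 / (n + 1) := by positivity
          exact (mul_eq_zero.mp (hG _ z hz)).resolve_left hpos.ne'
        simp only [h0'] at h0
        exact tendsto_nhds_unique h0 tendsto_const_nhds
      · exact (mul_eq_zero.mp (hG s z hz)).resolve_left hs
    have hD3apc : ∀ u v w : ℝ × ℝ, ContinuousOn (fun p => D3 p u v w) H := by
      intro u v w
      exact ((hD3c.clm_apply continuousOn_const).clm_apply continuousOn_const).clm_apply
        continuousOn_const
    -- derived identities: all third derivatives vanish
    have key1 : ∀ s z : ℝ, 0 < z →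
        s * D3 (s, z) (0, 1) (1, 0) (0, 1) + z * D3 (s, z) (0, 1) (0, 1) (0, 1) = 0 := by
      intro s z hz
      have hL : HasDerivAt (fun t => s * D2 (s, t) (1, 0) (0, 1) + t * D2 (s, t) (0, 1) (0, 1))
          (s * D3 (s, z) (0, 1) (1, 0) (0, 1)
            + (1 * D2 (s, z) (0, 1) (0, 1) + z * D3 (s, z) (0, 1) (0, 1) (0, 1))) z :=
        ((lineDeriv2_ap2 (hD2d _ (hmem s z hz)) (1, 0) (0, 1)).const_mul s).add
          ((hasDerivAt_id z).mul (lineDeriv2_ap2 (hD2d _ (hmem s z hz)) (0, 1) (0, 1)))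
      have hR : HasDerivAt (fun t => D1 (s, t) (0, 1)) (D2 (s, z) (0, 1) (0, 1)) z :=
        lineDeriv2_ap (hD1d _ (hmem s z hz)) (0, 1)
      have hev : (fun t => s * D2 (s, t) (1, 0) (0, 1) + t * D2 (s, t) (0, 1) (0, 1))
          =ᶠ[nhds z] fun t => D1 (s, t) (0, 1) := by
        filter_upwards [Ioi_mem_nhds hz] with t ht
        exact hB s t ht
      have h' := hL.deriv
      rw [hev.deriv_eq, hR.deriv] at h'
      linarith
    have hT212 : ∀ s z : ℝ, 0 < z → D3 (s, z) (0, 1) (1, 0) (0, 1) = 0 := by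
      refine hvanish _ (hD3apc _ _ _) ?_
      intro s z hz
      have hk := key1 s z hz
      have h0 := hC s z hz
      rw [h0] at hk
      linarith
    have key2 : ∀ s z : ℝ, 0 < z →
        s * D3 (s, z) (0, 1) (1, 0) (1, 0) + z * D3 (s, z) (0, 1) (0, 1) (1, 0) = 0 := by
      intro s z hz
      have hL : HasDerivAt (fun t => s * D2 (s, t) (1, 0) (1, 0) + t * D2 (s, t) (0, 1) (1, 0))
          (s * D3 (s, z) (0, 1) (1, 0) (1, 0)
            + (1 * D2 (s, z) (0, 1) (1, 0) + z * D3 (s, z) (0, 1) (0, 1) (1, 0))) z :=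
        ((lineDeriv2_ap2 (hD2d _ (hmem s z hz)) (1, 0) (1, 0)).const_mul s).add
          ((hasDerivAt_id z).mul (lineDeriv2_ap2 (hD2d _ (hmem s z hz)) (0, 1) (1, 0)))
      have hR : HasDerivAt (fun t => D1 (s, t) (1, 0)) (D2 (s, z) (0, 1) (1, 0)) z :=
        lineDeriv2_ap (hD1d _ (hmem s z hz)) (1, 0)
      have hev : (fun t => s * D2 (s, t) (1, 0) (1, 0) + t * D2 (s, t) (0, 1) (1, 0))
          =ᶠ[nhds z] fun t => D1 (s, t) (1, 0) := by
        filter_upwards [Ioi_mem_nhds hz] with t ht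
        exact hA s t ht
      have h' := hL.deriv
      rw [hev.deriv_eq, hR.deriv] at h'
      linarith
    have hT211 : ∀ s z : ℝ, 0 < z → D3 (s, z) (0, 1) (1, 0) (1, 0) = 0 := by
      refine hvanish _ (hD3apc _ _ _) ?_
      intro s z hz
      have hk := key2 s z hz
      have h0 : D3 (s, z) (0, 1) (0, 1) (1, 0) = 0 := by
        rw [hsym3v s z hz (0, 1) (1, 0)]
        exact hT212 s z hz
      rw [h0] at hk
      linarith
    have key3 : ∀ s z : ℝ, 0 < z →
        s * D3 (s, z) (1, 0) (1, 0) (1, 0) + z * D3 (s, z) (1, 0) (0, 1) (1, 0) = 0 := by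
      intro s z hz
      have hL : HasDerivAt (fun t => t * D2 (t, z) (1, 0) (1, 0) + z * D2 (t, z) (0, 1) (1, 0))
          ((1 * D2 (s, z) (1, 0) (1, 0) + s * D3 (s, z) (1, 0) (1, 0) (1, 0))
            + z * D3 (s, z) (1, 0) (0, 1) (1, 0)) s :=
        ((hasDerivAt_id s).mul (lineDeriv1_ap2 (hD2d _ (hmem s z hz)) (1, 0) (1, 0))).add
          ((lineDeriv1_ap2 (hD2d _ (hmem s z hz)) (0, 1) (1, 0)).const_mul z)
      have hR : HasDerivAt (fun t => D1 (t, z) (1, 0)) (D2 (s, z) (1, 0) (1, 0)) s :=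
        lineDeriv1_ap (hD1d _ (hmem s z hz)) (1, 0)
      have heq : (fun t => t * D2 (t, z) (1, 0) (1, 0) + z * D2 (t, z) (0, 1) (1, 0))
          = fun t => D1 (t, z) (1, 0) := funext fun t => hA t z hz
      have h' := hL.deriv
      rw [heq, hR.deriv] at h'
      linarith
    have hT111 : ∀ s z : ℝ, 0 < z → D3 (s, z) (1, 0) (1, 0) (1, 0) = 0 := by
      refine hvanish _ (hD3apc _ _ _) ?_
      intro s z hz
      have hk := key3 s z hz
      have h0 : D3 (s, z) (1, 0) (0, 1) (1, 0) = 0 := by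
        have h := congrArg (fun L : (ℝ × ℝ) →L[ℝ] ℝ => L (1, 0))
          (hsym3 _ (hmem s z hz) (1, 0) (0, 1))
        simpa using h.trans (hT211 s z hz)
      rw [h0] at hk
      linarith
    have hD3zero : ∀ s z : ℝ, 0 < z → D3 (s, z) = 0 := by
      intro s z hz
      have t222 := hC s z hz
      have t212 := hT212 s z hz
      have t211 := hT211 s z hz
      have t111 := hT111 s z hz
      have t221 : D3 (s, z) (0, 1) (0, 1) (1, 0) = 0 := by
        rw [hsym3v s z hz (0, 1) (1, 0)]; exact t212
      have t121 : D3 (s, z) (1, 0) (0, 1) (1, 0) = 0 := by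
        have h := congrArg (fun L : (ℝ × ℝ) →L[ℝ] ℝ => L (1, 0))
          (hsym3 _ (hmem s z hz) (1, 0) (0, 1))
        simpa using h.trans t211
      have t112 : D3 (s, z) (1, 0) (1, 0) (0, 1) = 0 := by
        rw [hsym3h s z hz (1, 0) (0, 1)]; exact t121
      have t122 : D3 (s, z) (1, 0) (0, 1) (0, 1) = 0 := by
        have h := congrArg (fun L : (ℝ × ℝ) →L[ℝ] ℝ => L (0, 1))
          (hsym3 _ (hmem s z hz) (1, 0) (0, 1))
        simpa using h.trans t212
      exact clm_eq_zero _ (clm_eq_zero _ (clm_eq_zero _ t111 t112) (clm_eq_zero _ t121 t122))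
        (clm_eq_zero _ (clm_eq_zero _ t211 t212) (clm_eq_zero _ t221 t222))
    -- constancy principle on H
    have hconstR : ∀ G : ℝ × ℝ → ℝ, DifferentiableOn ℝ G H →
        (∀ q ∈ H, fderiv ℝ G q = 0) → ∀ s z : ℝ, 0 < z → G (s, z) = G (0, 1) := by
      intro G hGd hG0 s z hz
      have hbound : ∀ q ∈ H, ‖fderivWithin ℝ G H q‖ ≤ 0 := by
        intro q hq
        rw [fderivWithin_of_isOpen hH hq, hG0 q hq]
        simp
      have hle := hHconv.norm_image_sub_le_of_norm_fderivWithin_le hGd hbound h01 (hmem s z hz)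
      rw [zero_mul] at hle
      exact sub_eq_zero.mp (norm_le_zero_iff.mp hle)
    have hD2const : ∀ s z : ℝ, 0 < z → D2 (s, z) = D2 (0, 1) := by
      intro s z hz
      have hGd : DifferentiableOn ℝ D2 H := hcd2.differentiableOn one_ne_zero
      refine hHconv.is_const_of_fderivWithin_eq_zero (𝕜 := ℝ) (hcd2.differentiableOn one_ne_zero)
        (fun q hq => ?_) (hmem s z hz) h01
      rw [fderivWithin_of_isOpen hH hq]
      have hq0 : D3 q = 0 := by
        obtain ⟨x, y⟩ := q
        exact hD3zero x y hq
      rw [hD3def] at hq0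
      exact hq0
    set a := D2 ((0 : ℝ), (1 : ℝ)) (1, 0) (1, 0) with hadef
    set b := D2 ((0 : ℝ), (1 : ℝ)) (0, 1) (1, 0) with hbdef
    set c := D2 ((0 : ℝ), (1 : ℝ)) (0, 1) (0, 1) with hcdef
    have hb' : D2 ((0 : ℝ), (1 : ℝ)) (1, 0) (0, 1) = b := hsym2 _ h01 (1, 0) (0, 1)
    have hP10 : D1 ((0 : ℝ), (1 : ℝ)) (1, 0) = b := by
      have h := hA 0 1 one_pos
      simpa using h.symm
    have hP20 : D1 ((0 : ℝ), (1 : ℝ)) (0, 1) = c := by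
      have h := hB 0 1 one_pos
      simpa using h.symm
    have hlin : ∀ (α β : ℝ) (q : ℝ × ℝ), HasFDerivAt (fun p : ℝ × ℝ => α * p.1 + β * p.2)
        (α • ContinuousLinearMap.fst ℝ ℝ ℝ + β • ContinuousLinearMap.snd ℝ ℝ ℝ) q := by
      intro α β q
      exact (hasFDerivAt_fst.const_mul α).add (hasFDerivAt_snd.const_mul β)
    have hP1 : ∀ s z : ℝ, 0 < z → D1 (s, z) (1, 0) = a * s + b * z := by
      have hGd : DifferentiableOn ℝ (fun q : ℝ × ℝ => D1 q (1, 0) - (a * q.1 + b * q.2)) H := by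
        intro q hq
        apply DifferentiableAt.differentiableWithinAt
        exact ((hD1d q hq).clm_apply (differentiableAt_const _)).sub (by fun_prop)
      have hG0 : ∀ q ∈ H, fderiv ℝ (fun q : ℝ × ℝ => D1 q (1, 0) - (a * q.1 + b * q.2)) q = 0 := by
        intro q hq
        have hfa : HasFDerivAt (fun p : ℝ × ℝ => D1 p (1, 0)) ((D2 q).flip (1, 0)) q := by
          simpa using (hD1d q hq).hasFDerivAt.clm_apply (hasFDerivAt_const (1, 0) q)
        have hfd := hfa.sub (hlin a b q)
        rw [show fderiv ℝ (fun q : ℝ × ℝ => D1 q (1, 0) - (a * q.1 + b * q.2)) q = _ from hfd.fderiv]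
        have hq2 : D2 q = D2 ((0 : ℝ), (1 : ℝ)) := by
          obtain ⟨x, y⟩ := q
          exact hD2const x y hq
        apply clm_eq_zero
        · simp [ContinuousLinearMap.flip_apply, hq2, hadef]
        · simp [ContinuousLinearMap.flip_apply, hq2, hbdef]
      intro s z hz
      have h := hconstR _ hGd hG0 s z hz
      simp only at h
      rw [hP10] at h
      have h2 : D1 (s, z) (1, 0) - (a * s + b * z) = 0 := by rw [h]; ring
      linarith
    have hP2 : ∀ s z : ℝ, 0 < z → D1 (s, z) (0, 1) = b * s + c * z := by
      have hGd : DifferentiableOn ℝ (fun q : ℝ × ℝ => D1 q (0, 1) - (b * q.1 + c * q.2)) H := by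
        intro q hq
        apply DifferentiableAt.differentiableWithinAt
        exact ((hD1d q hq).clm_apply (differentiableAt_const _)).sub (by fun_prop)
      have hG0 : ∀ q ∈ H, fderiv ℝ (fun q : ℝ × ℝ => D1 q (0, 1) - (b * q.1 + c * q.2)) q = 0 := by
        intro q hq
        have hfa : HasFDerivAt (fun p : ℝ × ℝ => D1 p (0, 1)) ((D2 q).flip (0, 1)) q := by
          simpa using (hD1d q hq).hasFDerivAt.clm_apply (hasFDerivAt_const (0, 1) q)
        have hfd := hfa.sub (hlin b c q)
        rw [show fderiv ℝ (fun q : ℝ × ℝ => D1 q (0, 1) - (b * q.1 + c * q.2)) q = _ from hfd.fderiv]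
        have hq2 : D2 q = D2 ((0 : ℝ), (1 : ℝ)) := by
          obtain ⟨x, y⟩ := q
          exact hD2const x y hq
        apply clm_eq_zero
        · simp [ContinuousLinearMap.flip_apply, hq2, hb']
        · simp [ContinuousLinearMap.flip_apply, hq2, hcdef]
      intro s z hz
      have h := hconstR _ hGd hG0 s z hz
      simp only at h
      rw [hP20] at h
      have h2 : D1 (s, z) (0, 1) - (b * s + c * z) = 0 := by rw [h]; ring
      linarith
    refine ⟨a, b, c, U 0 1 - c / 2, ?_⟩
    intro s z hz
    have hWd : DifferentiableOn ℝ
        (fun p : ℝ × ℝ => F p - (a / 2 * (p.1 * p.1) + b * (p.1 * p.2) + c / 2 * (p.2 * p.2))) H := by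
      intro q hq
      apply DifferentiableAt.differentiableWithinAt
      exact (hFd q hq).sub (by fun_prop)
    have hW0 : ∀ q ∈ H, fderiv ℝ
        (fun p : ℝ × ℝ => F p - (a / 2 * (p.1 * p.1) + b * (p.1 * p.2) + c / 2 * (p.2 * p.2)))
        q = 0 := by
      intro q hq
      obtain ⟨x, y⟩ := q
      have hq1 : HasFDerivAt (fun p : ℝ × ℝ => a / 2 * (p.1 * p.1)) _ ((x, y) : ℝ × ℝ) :=
        ((hasFDerivAt_fst (𝕜 := ℝ)).mul (hasFDerivAt_fst (𝕜 := ℝ))).const_mul (a / 2)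
      have hq2 : HasFDerivAt (fun p : ℝ × ℝ => b * (p.1 * p.2)) _ ((x, y) : ℝ × ℝ) :=
        ((hasFDerivAt_fst (𝕜 := ℝ)).mul (hasFDerivAt_snd (𝕜 := ℝ))).const_mul b
      have hq3 : HasFDerivAt (fun p : ℝ × ℝ => c / 2 * (p.2 * p.2)) _ ((x, y) : ℝ × ℝ) :=
        ((hasFDerivAt_snd (𝕜 := ℝ)).mul (hasFDerivAt_snd (𝕜 := ℝ))).const_mul (c / 2)
      have hW := (hFd _ hq).hasFDerivAt.sub ((hq1.add hq2).add hq3)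
      rw [show fderiv ℝ (fun p : ℝ × ℝ => F p - (a / 2 * (p.1 * p.1) + b * (p.1 * p.2)
          + c / 2 * (p.2 * p.2))) ((x, y) : ℝ × ℝ) = _ from hW.fderiv]
      apply clm_eq_zero
      · have h' := hP1 x y hq
        simp only [ContinuousLinearMap.sub_apply, ContinuousLinearMap.add_apply,
          ContinuousLinearMap.smul_apply, ContinuousLinearMap.coe_fst', ContinuousLinearMap.coe_snd',
          smul_eq_mul, ContinuousLinearMap.zero_apply]
        linear_combination h'
      · have h' := hP2 x y hq
        simp only [ContinuousLinearMap.sub_apply, ContinuousLinearMap.add_apply,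
          ContinuousLinearMap.smul_apply, ContinuousLinearMap.coe_fst', ContinuousLinearMap.coe_snd',
          smul_eq_mul, ContinuousLinearMap.zero_apply]
        linear_combination h'
    have h := hconstR _ hWd hW0 s z hz
    simp only [hFdef, Function.uncurry_apply_pair] at h
    linear_combination h
  · rintro ⟨g₁, g₂, g₃, g₄, hg⟩
    -- basic derivative computations
    have hpoly_s : ∀ s z : ℝ, HasDerivAt (fun s' => g₁ * s' ^ 2 / 2 + g₂ * s' * z + g₃ * z ^ 2 / 2 + g₄)
        (g₁ * s + g₂ * z) s := by
      intro s z
      have h1 : HasDerivAt (fun s' : ℝ => g₁ * s' ^ 2 / 2) (g₁ * s) s := by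
        have := ((hasDerivAt_pow 2 s).const_mul g₁).div_const 2
        exact this.congr_deriv (by norm_num; ring)
      have h2 : HasDerivAt (fun s' : ℝ => g₂ * s' * z) (g₂ * z) s := by
        have := ((hasDerivAt_id s).const_mul g₂).mul_const z
        exact this.congr_deriv (by ring)
      exact ((h1.add h2).add_const (g₃ * z ^ 2 / 2)).add_const g₄
    have hpoly_z : ∀ s z : ℝ, HasDerivAt (fun z' => g₁ * s ^ 2 / 2 + g₂ * s * z' + g₃ * z' ^ 2 / 2 + g₄)
        (g₂ * s + g₃ * z) z := by
      intro s z
      have h1 : HasDerivAt (fun z' : ℝ => g₁ * s ^ 2 / 2 + g₂ * s * z') (g₂ * s) z := by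
        simpa using ((hasDerivAt_id z).const_mul (g₂ * s)).const_add (g₁ * s ^ 2 / 2)
      have h2 : HasDerivAt (fun z' : ℝ => g₃ * z' ^ 2 / 2) (g₃ * z) z := by
        have := ((hasDerivAt_pow 2 z).const_mul g₃).div_const 2
        exact this.congr_deriv (by norm_num; ring)
      simpa using (h1.add h2).add_const g₄
    have hds : ∀ s z : ℝ, 0 < z → deriv (fun s' => U s' z) s = g₁ * s + g₂ * z := by
      intro s z hz
      have he : (fun s' => U s' z) = fun s' => g₁ * s' ^ 2 / 2 + g₂ * s' * z + g₃ * z ^ 2 / 2 + g₄ :=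
        funext fun s' => hg s' z hz
      rw [he]; exact (hpoly_s s z).deriv
    have hdz : ∀ s z : ℝ, 0 < z → deriv (fun z' => U s z') z = g₂ * s + g₃ * z := by
      intro s z hz
      have he : (fun z' => U s z') =ᶠ[nhds z]
          fun z' => g₁ * s ^ 2 / 2 + g₂ * s * z' + g₃ * z' ^ 2 / 2 + g₄ := by
        filter_upwards [Ioi_mem_nhds hz] with z' hz'
        exact hg s z' hz'
      rw [he.deriv_eq]; exact (hpoly_z s z).deriv
    refine ⟨?_, ?_, ?_⟩
    · intro s z hz
      simp only [Psi]
      have d1 : deriv (fun s' => deriv (fun s'' => U s'' z) s' / z) s = g₁ / z := by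
        have he : (fun s' => deriv (fun s'' => U s'' z) s' / z) = fun s' => (g₁ * s' + g₂ * z) / z :=
          funext fun s' => by rw [hds s' z hz]
        rw [he]
        exact ((hasDerivAt_affine g₁ (g₂ * z) s).div_const z).deriv
      have d2 : deriv (fun z' => deriv (fun s'' => U s'' z') s / z') z = -(g₁ * s) / z ^ 2 := by
        have he : (fun z' => deriv (fun s'' => U s'' z') s / z') =ᶠ[nhds z]
            fun z' => (g₂ * z' + g₁ * s) / z' := by
          filter_upwards [Ioi_mem_nhds hz] with z' hz'
          rw [hds s z' hz']; ring
        rw [he.deriv_eq]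
        have h := (hasDerivAt_affine g₂ (g₁ * s) z).div (hasDerivAt_id z) hz.ne'
        have h' : HasDerivAt (fun z' => (g₂ * z' + g₁ * s) / z')
            ((g₂ * z - (g₂ * z + g₁ * s) * 1) / z ^ 2) z := by simpa [Pi.div_def] using h
        rw [h'.deriv]; field_simp; ring
      rw [d1, d2]
      field_simp
      ring
    · intro s z hz
      simp only [Psi]
      have d1 : deriv (fun s' => deriv (fun z' => U s' z') z / z) s = g₂ / z := by
        have he : (fun s' => deriv (fun z' => U s' z') z / z) = fun s' => (g₂ * s' + g₃ * z) / z :=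
          funext fun s' => by rw [hdz s' z hz]
        rw [he]
        exact ((hasDerivAt_affine g₂ (g₃ * z) s).div_const z).deriv
      have d2 : deriv (fun z' => deriv (fun z'' => U s z'') z' / z') z = -(g₂ * s) / z ^ 2 := by
        have he : (fun z' => deriv (fun z'' => U s z'') z' / z') =ᶠ[nhds z]
            fun z' => (g₃ * z' + g₂ * s) / z' := by
          filter_upwards [Ioi_mem_nhds hz] with z' hz'
          rw [hdz s z' hz']; ring
        rw [he.deriv_eq]
        have h := (hasDerivAt_affine g₃ (g₂ * s) z).div (hasDerivAt_id z) hz.ne'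
        have h' : HasDerivAt (fun z' => (g₃ * z' + g₂ * s) / z')
            ((g₃ * z - (g₃ * z + g₂ * s) * 1) / z ^ 2) z := by simpa [Pi.div_def] using h
        rw [h'.deriv]; field_simp; ring
      rw [d1, d2]
      field_simp
      ring
    · intro s z hz
      show deriv (deriv (deriv (U s))) z = 0
      have h2 : ∀ z' : ℝ, 0 < z' → deriv (deriv (U s)) z' = g₃ := by
        intro z' hz'
        have he : deriv (U s) =ᶠ[nhds z'] fun t => g₃ * t + g₂ * s := by
          filter_upwards [Ioi_mem_nhds hz'] with t ht
          rw [show deriv (U s) t = deriv (fun z'' => U s z'') t from rfl, hdz s t ht]; ring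
        rw [he.deriv_eq]
        exact (hasDerivAt_affine g₃ (g₂ * s) z').deriv
      have he : deriv (deriv (U s)) =ᶠ[nhds z] fun _ => g₃ := by
        filter_upwards [Ioi_mem_nhds hz] with t ht
        exact h2 t ht
      rw [he.deriv_eq]
      exact deriv_const z g₃
end

section
/- Let a, b ∈ ℝ with a ≠ 0, and let J ⊆ ℝ be an open interval on which a − b·z² > 0. If φ : J → ℝ is twice differentiable and satisfies (a − b·z²)·φ''(z) + b·(φ(z) − z·φ'(z)) = 0 for all z ∈ J, then there exist constants C₁, C₂ ∈ ℝ such that φ(z) = C₁·√(a − b·z²) + C₂·z for all z ∈ J. (This is Case I in the proof of Theorem 4.1: any such φ is of Randers type.) -/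
lemma my_const_of_hasDerivAt_zero {J : Set ℝ} (hJ : IsOpen J) (hconv : Convex ℝ J)
    {f : ℝ → ℝ} (hf : ∀ z ∈ J, HasDerivAt f 0 z) {x y : ℝ} (hx : x ∈ J) (hy : y ∈ J) :
    f x = f y := by
  apply hconv.is_const_of_fderivWithin_eq_zero (f := f)
    (fun z hz => (hf z hz).differentiableAt.differentiableWithinAt) ?_ hx hy
  intro z hz
  rw [fderivWithin_of_isOpen hJ hz, (hf z hz).hasFDerivAt.fderiv]
  ext; simp

theorem stmt_15 (a b : ℝ) (ha : a ≠ 0)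
    (J : Set ℝ) (hJopen : IsOpen J) (hJinterval : Convex ℝ J)
    (hpos : ∀ z ∈ J, 0 < a - b * z ^ 2)
    (φ : ℝ → ℝ)
    (hφ : ∀ z ∈ J, DifferentiableAt ℝ φ z)
    (hφ' : ∀ z ∈ J, DifferentiableAt ℝ (deriv φ) z)
    (hODE : ∀ z ∈ J,
      (a - b * z ^ 2) * deriv (deriv φ) z + b * (φ z - z * deriv φ z) = 0) :
    ∃ C₁ C₂ : ℝ, ∀ z ∈ J, φ z = C₁ * Real.sqrt (a - b * z ^ 2) + C₂ * z := by
  rcases Set.eq_empty_or_nonempty J with hJe | ⟨z₀, hz₀⟩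
  · exact ⟨0, 0, fun z hz => by simp [hJe] at hz⟩
  set u : ℝ → ℝ := fun z => Real.sqrt (a - b * z ^ 2) with hu_def
  have hupos : ∀ z ∈ J, 0 < u z := fun z hz => Real.sqrt_pos.2 (hpos z hz)
  have husq : ∀ z ∈ J, u z ^ 2 = a - b * z ^ 2 := fun z hz =>
    Real.sq_sqrt (hpos z hz).le
  have hune : ∀ z ∈ J, u z ≠ 0 := fun z hz => (hupos z hz).ne'
  have hu : ∀ z ∈ J, HasDerivAt u (-(b * z) / u z) z := by
    intro z hz
    have hinner : HasDerivAt (fun z : ℝ => a - b * z ^ 2) (-(b * (2 * z))) z := by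
      simpa using ((hasDerivAt_pow 2 z).const_mul b).const_sub a
    have := hinner.sqrt (hpos z hz).ne'
    convert this using 1
    rw [hu_def]
    field_simp
  -- key algebraic consequence of the ODE
  have key : ∀ z ∈ J, deriv (deriv φ) z * u z ^ 2 = b * (z * deriv φ z - φ z) := by
    intro z hz
    have hode := hODE z hz
    have hu2 := husq z hz
    linear_combination deriv (deriv φ) z * hu2 + hode
  -- Wronskian W z = z * φ'(z) - φ(z)
  have hW : ∀ z ∈ J, HasDerivAt (fun z => z * deriv φ z - φ z)
      (z * deriv (deriv φ) z) z := by
    intro z hz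
    have h1 : HasDerivAt (fun z => z * deriv φ z)
        (1 * deriv φ z + z * deriv (deriv φ) z) z :=
      (hasDerivAt_id z).mul (hφ' z hz).hasDerivAt
    have := h1.sub (hφ z hz).hasDerivAt
    refine this.congr_deriv ?_
    ring
  -- F = W * u is constant
  have hF : ∀ z ∈ J, HasDerivAt (fun z => (z * deriv φ z - φ z) * u z) 0 z := by
    intro z hz
    have := (hW z hz).mul (hu z hz)
    refine this.congr_deriv ?_
    have hune' := hune z hz
    have e : z * deriv (deriv φ) z * u z + (z * deriv φ z - φ z) * (-(b * z) / u z)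
        = (z / u z) * (deriv (deriv φ) z * u z ^ 2
            - b * (z * deriv φ z - φ z)) := by
      field_simp
      ring
    rw [e, key z hz, sub_self, mul_zero]
  obtain ⟨C, hFC⟩ : ∃ C, ∀ z ∈ J, (z * deriv φ z - φ z) * u z = C :=
    ⟨_, fun z hz => my_const_of_hasDerivAt_zero hJopen hJinterval hF hz hz₀⟩
  -- second derivative of φ
  have hφ'' : ∀ z ∈ J, deriv (deriv φ) z = b * C / u z ^ 3 := by
    intro z hz
    have hk := key z hz
    have hWc := hFC z hz
    rw [eq_div_iff (pow_ne_zero 3 (hune z hz))]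
    linear_combination u z * hk + b * hWc
  -- P = derivative of ψ = φ + (C/a) u
  set P : ℝ → ℝ := fun z => deriv φ z + (C / a) * (-(b * z) / u z) with hP_def
  set ψ : ℝ → ℝ := fun z => φ z + (C / a) * u z with hψ_def
  have hψ : ∀ z ∈ J, HasDerivAt ψ (P z) z := fun z hz =>
    (hφ z hz).hasDerivAt.add (((hu z hz).const_mul (C / a)))
  have hP : ∀ z ∈ J, HasDerivAt P 0 z := by
    intro z hz
    have hune' := hune z hz
    have hq := (((hasDerivAt_id z).const_mul b).neg).div (hu z hz) hune'
    simp only [id_eq, Pi.neg_apply] at hq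
    have h1 : HasDerivAt (deriv φ) (b * C / u z ^ 3) z := by
      have := (hφ' z hz).hasDerivAt
      rwa [hφ'' z hz] at this
    have h2 := h1.add (hq.const_mul (C / a))
    refine h2.congr_deriv ?_
    have hu2 := husq z hz
    have e2 : b * C / u z ^ 3 + C / a * ((-(b * 1) * u z
          - -(b * z) * (-(b * z) / u z)) / u z ^ 2)
        = (C * b / (a * u z ^ 3)) * (a - u z ^ 2 - b * z ^ 2) := by
      field_simp
      ring
    rw [e2, hu2]
    ring
  obtain ⟨C₂, hPC⟩ : ∃ C₂, ∀ z ∈ J, P z = C₂ :=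
    ⟨_, fun z hz => my_const_of_hasDerivAt_zero hJopen hJinterval hP hz hz₀⟩
  -- ψ - C₂ * id is constant
  have hlin : ∀ z ∈ J, HasDerivAt (fun z => ψ z - C₂ * z) 0 z := by
    intro z hz
    have := (hψ z hz).sub ((hasDerivAt_id z).const_mul C₂)
    rw [hPC z hz] at this
    exact this.congr_deriv (by ring)
  have hDconst : ∀ z ∈ J, ψ z - C₂ * z = ψ z₀ - C₂ * z₀ := fun z hz =>
    my_const_of_hasDerivAt_zero hJopen hJinterval hlin hz hz₀
  -- the identity z * P z - ψ z = 0 on J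
  have hzero : ∀ z ∈ J, z * P z - ψ z = 0 := by
    intro z hz
    have hWc := hFC z hz
    have hu2 := husq z hz
    have hune' := hune z hz
    simp only [hP_def, hψ_def]
    field_simp
    linear_combination a * hWc - C * hu2
  have hD0 : ψ z₀ - C₂ * z₀ = 0 := by
    have h := hzero z₀ hz₀
    rw [hPC z₀ hz₀] at h
    linarith
  refine ⟨-(C / a), C₂, fun z hz => ?_⟩
  have h1 := hDconst z hz
  rw [hD0] at h1
  have h2 : φ z = ψ z - (C / a) * u z := by simp only [hψ_def]; ring
  rw [h2, sub_eq_zero] at *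
  rw [h1]
  simp only [hu_def]
  ring
end

section
/- Let a, b, c ∈ ℝ with a ≠ 0 and Δ := −b² − 2·a·c > 0. Then a·z² + 2·b·z − 2·c ≠ 0 for every z ∈ ℝ. Moreover, set ζ(z) := z + b/a, α := √Δ/a, β := b/√Δ. A positive differentiable function φ : ℝ → ℝ satisfies (a·z² + 2·b·z − 2·c)·φ'(z) = (a·z + 2·b)·φ(z) for all z ∈ ℝ if and only if there exists a constant k > 0 such that φ(z) = k·√(ζ(z)² + α²)·exp(β·arctan(ζ(z)/α)) for all z ∈ ℝ. (This is the integration step in Case 2.2 of the proof of Theorem 1.1, producing the Landsberg non-Berwald metrics of equation (1.3).) -/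
private lemma stmt_17_aux (a b : ℝ) (ha : a ≠ 0) (α β z s E : ℝ) (hαne : α ≠ 0)
    (hβα : a * (β * α) = b)
    (hsq : s ^ 2 = (z + b / a) ^ 2 + α ^ 2) (hsne : s ≠ 0) :
    (a * z + 2 * b) / (a * ((z + b / a) ^ 2 + α ^ 2)) * (s * E) =
      2 * (z + b / a) / (2 * s) * E + s * (E * (β * ((1 + ((z + b / a) / α) ^ 2)⁻¹ * α⁻¹))) := by
  have h1 : (1 + ((z + b / a) / α) ^ 2) = ((z + b / a) ^ 2 + α ^ 2) / α ^ 2 := by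
    field_simp; ring
  rw [h1, ← hsq]
  field_simp
  ring_nf
  linear_combination (-E) * hβα

theorem stmt_17 (a b c : ℝ) (ha : a ≠ 0) (hΔ : 0 < -b ^ 2 - 2 * a * c)
    (φ : ℝ → ℝ) (hφpos : ∀ z : ℝ, 0 < φ z) (hφ : Differentiable ℝ φ) :
    (∀ z : ℝ, a * z ^ 2 + 2 * b * z - 2 * c ≠ 0) ∧
      ((∀ z : ℝ, (a * z ^ 2 + 2 * b * z - 2 * c) * deriv φ z = (a * z + 2 * b) * φ z) ↔
        ∃ k : ℝ, 0 < k ∧ ∀ z : ℝ,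
          φ z = k * Real.sqrt ((z + b / a) ^ 2 + (Real.sqrt (-b ^ 2 - 2 * a * c) / a) ^ 2) *
            Real.exp ((b / Real.sqrt (-b ^ 2 - 2 * a * c)) *
              Real.arctan ((z + b / a) / (Real.sqrt (-b ^ 2 - 2 * a * c) / a)))) := by
  have hsΔ : Real.sqrt (-b ^ 2 - 2 * a * c) ^ 2 = -b ^ 2 - 2 * a * c := Real.sq_sqrt hΔ.le
  have hsΔpos : 0 < Real.sqrt (-b ^ 2 - 2 * a * c) := Real.sqrt_pos.mpr hΔ
  set α : ℝ := Real.sqrt (-b ^ 2 - 2 * a * c) / a with hαdef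
  set β : ℝ := b / Real.sqrt (-b ^ 2 - 2 * a * c) with hβdef
  have hαne : α ≠ 0 := div_ne_zero hsΔpos.ne' ha
  have hβα : a * (β * α) = b := by
    rw [hβdef, hαdef]; field_simp
    exact mul_div_cancel_right₀ b (ne_of_gt (Real.sqrt_pos.mpr (by linarith)))
  have hS : ∀ z : ℝ, 0 < (z + b / a) ^ 2 + α ^ 2 := fun z => by positivity
  have hQ : ∀ z : ℝ, a * z ^ 2 + 2 * b * z - 2 * c = a * ((z + b / a) ^ 2 + α ^ 2) := by
    intro z
    have hα2 : α ^ 2 = (-b ^ 2 - 2 * a * c) / a ^ 2 := by rw [hαdef, div_pow, hsΔ]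
    rw [hα2]
    field_simp
    ring
  have hQne : ∀ z : ℝ, a * z ^ 2 + 2 * b * z - 2 * c ≠ 0 := by
    intro z; rw [hQ z]; exact mul_ne_zero ha (hS z).ne'
  set ψ : ℝ → ℝ := fun z => Real.sqrt ((z + b / a) ^ 2 + α ^ 2) *
      Real.exp (β * Real.arctan ((z + b / a) / α)) with hψdef
  have hψz : ∀ z : ℝ, ψ z = Real.sqrt ((z + b / a) ^ 2 + α ^ 2) *
      Real.exp (β * Real.arctan ((z + b / a) / α)) := fun z => rfl
  have hψpos : ∀ z : ℝ, 0 < ψ z := fun z =>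
    mul_pos (Real.sqrt_pos.mpr (hS z)) (Real.exp_pos _)
  have hψd : ∀ z : ℝ, HasDerivAt ψ
      ((a * z + 2 * b) / (a * z ^ 2 + 2 * b * z - 2 * c) * ψ z) z := by
    intro z
    have hζ : HasDerivAt (fun z : ℝ => z + b / a) 1 z := (hasDerivAt_id z).add_const _
    have hS' : HasDerivAt (fun z : ℝ => (z + b / a) ^ 2 + α ^ 2) (2 * (z + b / a)) z := by
      simpa using ((hζ.pow 2).add_const (α ^ 2))
    have hsqrt := hS'.sqrt (hS z).ne'
    have harc : HasDerivAt (fun z : ℝ => β * Real.arctan ((z + b / a) / α))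
        (β * ((1 + ((z + b / a) / α) ^ 2)⁻¹ * α⁻¹)) z := by
      simpa using ((hζ.div_const α).arctan).const_mul β
    have h := hsqrt.mul harc.exp
    refine h.congr_deriv ?_
    rw [hQ z, hψz z]
    exact (stmt_17_aux a b ha α β z _ _ hαne hβα
      (Real.sq_sqrt (hS z).le) (Real.sqrt_pos.mpr (hS z)).ne').symm
  refine ⟨hQne, ?_, ?_⟩
  · intro hode
    refine ⟨φ 0 / ψ 0, div_pos (hφpos 0) (hψpos 0), ?_⟩
    have key : ∀ z : ℝ, φ z / ψ z = φ 0 / ψ 0 := by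
      have hF : ∀ z : ℝ, HasDerivAt (fun z => φ z / ψ z) 0 z := by
        intro z
        have h := (hφ z).hasDerivAt.div (hψd z) (hψpos z).ne'
        have hd : deriv φ z = (a * z + 2 * b) / (a * z ^ 2 + 2 * b * z - 2 * c) * φ z := by
          rw [div_mul_eq_mul_div, eq_div_iff (hQne z)]
          linear_combination hode z
        rw [hd] at h
        refine h.congr_deriv ?_
        ring
      have h2 : ∀ x y : ℝ, (fun z => φ z / ψ z) x = (fun z => φ z / ψ z) y :=
        is_const_of_deriv_eq_zero (fun z => (hF z).differentiableAt)
          (fun z => (hF z).deriv)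
      intro z; exact h2 z 0
    intro z
    have h := key z
    rw [div_eq_div_iff (hψpos z).ne' (hψpos 0).ne'] at h
    have h2 : φ z = φ 0 / ψ 0 * ψ z := by
      rw [div_mul_eq_mul_div, eq_div_iff (hψpos 0).ne']
      linear_combination h
    rw [h2, hψz z]; ring
  · rintro ⟨k, hk, hkeq⟩
    intro z
    have hφψ : φ = fun z => k * ψ z := by
      funext z; rw [hkeq z, hψz z]; ring
    have hd : HasDerivAt φ (k * ((a * z + 2 * b) / (a * z ^ 2 + 2 * b * z - 2 * c) * ψ z)) z := by
      rw [hφψ]; exact (hψd z).const_mul k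
    rw [hd.deriv, hkeq z]
    have h3 : ∀ p Q t : ℝ, Q ≠ 0 → Q * (k * (t / Q * p)) = t * (k * p) := by
      intro p Q t hQ'; field_simp
    rw [h3 (ψ z) _ _ (hQne z), hψz z]; ring
end

section
/- Let k > 0, α > 0 and β ∈ ℝ with β ≠ 0. Put C := α²·(1 + β²), M(t) := C·t² + 2·α·β·|t| + 1, and define θ : ℝ → ℝ by θ(t) := k·√(M(t))·exp(β·arctan(1/(α·|t|) + β)) for t ≠ 0 and θ(0) := k·exp(β·π/2). Then: (i) θ is twice continuously differentiable on ℝ (in particular θ'(0) = 0, θ''(0) = C·k·exp(β·π/2)); (ii) the one-sided limits of the third derivative at 0 exist and differ, namely lim_{t→0⁺} θ'''(t) = −4·α·β·C·k·exp(β·π/2) and lim_{t→0⁻} θ'''(t) = 4·α·β·C·k·exp(β·π/2); consequently θ is not three times differentiable at 0, so θ is C² but not C³ on ℝ. (This is the Remark after Theorem 1.1 showing that the unicorn metric (1.3) is not regular on TM∖{0}.) -/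
open Filter Set

/-- `M(t) = α²(1+β²)t² + 2αβ|t| + 1`. -/
noncomputable def Mfun (α β t : ℝ) : ℝ :=
  α ^ 2 * (1 + β ^ 2) * t ^ 2 + 2 * α * β * |t| + 1

/-- `θ(t) = k·√(M(t))·exp(β·arctan(1/(α|t|) + β))` for `t ≠ 0`,
with `θ(0) = k·exp(βπ/2)`. -/
noncomputable def thetaFun (k α β : ℝ) : ℝ → ℝ := fun t =>
  if t = 0 then k * Real.exp (β * Real.pi / 2)
  else k * Real.sqrt (Mfun α β t) * Real.exp (β * Real.arctan (1 / (α * |t|) + β))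

noncomputable def Afun (α β t : ℝ) : ℝ := Real.arctan (1 / (α * |t|) + β)

noncomputable def Pfun (α β t : ℝ) : ℝ :=
  α ^ 2 * (1 + β ^ 2) * t ^ 2 + 2 * α * β * t + 1

noncomputable def d1 (k α β t : ℝ) : ℝ :=
  k * (α ^ 2 * (1 + β ^ 2)) * t * Real.exp (β * Afun α β t) / Real.sqrt (Mfun α β t)

noncomputable def d2 (k α β t : ℝ) : ℝ :=
  if t = 0 then α ^ 2 * (1 + β ^ 2) * k * Real.exp (β * Real.pi / 2)
  else k * (α ^ 2 * (1 + β ^ 2)) * Real.exp (β * Afun α β t)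
    / (Mfun α β t * Real.sqrt (Mfun α β t))

noncomputable def d3 (k α β t : ℝ) : ℝ :=
  k * (α ^ 2 * (1 + β ^ 2)) * Real.exp (β * Afun α β t)
    * (-4 * α * β * (t / |t|) - 3 * (α ^ 2 * (1 + β ^ 2)) * t)
    / ((Mfun α β t) ^ 2 * Real.sqrt (Mfun α β t))

lemma Mfun_neg (α β t : ℝ) : Mfun α β (-t) = Mfun α β t := by
  simp [Mfun, abs_neg]

lemma Afun_neg (α β t : ℝ) : Afun α β (-t) = Afun α β t := by simp [Afun, abs_neg]

lemma theta_even (k α β t : ℝ) : thetaFun k α β (-t) = thetaFun k α β t := by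
  unfold thetaFun
  rcases eq_or_ne t 0 with h | h
  · simp [h]
  · rw [if_neg (neg_ne_zero.mpr h), if_neg h, Mfun_neg, abs_neg]

lemma d1_odd (k α β t : ℝ) : d1 k α β (-t) = -d1 k α β t := by
  unfold d1; rw [Mfun_neg, Afun_neg]; ring

lemma d2_even (k α β t : ℝ) : d2 k α β (-t) = d2 k α β t := by
  unfold d2
  rcases eq_or_ne t 0 with h | h
  · simp [h]
  · rw [if_neg (neg_ne_zero.mpr h), if_neg h, Mfun_neg, Afun_neg]

lemma d3_odd (k α β t : ℝ) : d3 k α β (-t) = -d3 k α β t := by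
  unfold d3; rw [Mfun_neg, Afun_neg, abs_neg]; ring

lemma Pfun_pos {α : ℝ} (hα : 0 < α) (β t : ℝ) : 0 < Pfun α β t := by
  have h : Pfun α β t = α ^ 2 * t ^ 2 + (α * β * t + 1) ^ 2 := by unfold Pfun; ring
  rcases eq_or_ne t 0 with ht | ht
  · simp [Pfun, ht]
  · have : 0 < α ^ 2 * t ^ 2 := by positivity
    nlinarith [sq_nonneg (α * β * t + 1)]

lemma Mfun_pos {α : ℝ} (hα : 0 < α) (β t : ℝ) : 0 < Mfun α β t := by
  have : Mfun α β t = Pfun α β |t| := by unfold Mfun Pfun; rw [sq_abs]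
  rw [this]; exact Pfun_pos hα β _

lemma Mfun_eq_Pfun {α β t : ℝ} (ht : 0 < t) : Mfun α β t = Pfun α β t := by
  unfold Mfun Pfun; rw [abs_of_pos ht]

-- even/odd derivative transfer
lemma hasDerivAt_even {f : ℝ → ℝ} (hf : ∀ x, f (-x) = f x) {d t : ℝ}
    (h : HasDerivAt f d t) : HasDerivAt f (-d) (-t) := by
  have h2 : HasDerivAt (f ∘ fun x : ℝ => -x) (d * -1) (-t) := by
    refine HasDerivAt.comp (-t) ?_ ?_
    · simpa using h
    · simpa using hasDerivAt_neg (-t)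
  have he : (f ∘ fun x : ℝ => -x) = f := funext fun x => hf x
  rw [he] at h2; simpa using h2

lemma hasDerivAt_odd {f : ℝ → ℝ} (hf : ∀ x, f (-x) = -f x) {d t : ℝ}
    (h : HasDerivAt f d t) : HasDerivAt f d (-t) := by
  have h2 : HasDerivAt (f ∘ fun x : ℝ => -x) (d * -1) (-t) := by
    refine HasDerivAt.comp (-t) ?_ ?_
    · simpa using h
    · simpa using hasDerivAt_neg (-t)
  have he : (f ∘ fun x : ℝ => -x) = fun x => -f x := funext fun x => hf x
  rw [he] at h2
  have h3 := h2.neg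
  rw [show (-fun x => -f x) = f from by funext x; simp] at h3
  simpa using h3

noncomputable def Ffun (k α β t : ℝ) : ℝ :=
  k * Real.sqrt (Pfun α β t) * Real.exp (β * Real.arctan (1 / (α * t) + β))

lemma hasDerivAt_Pfun (α β t : ℝ) :
    HasDerivAt (fun x => Pfun α β x) (2 * (α ^ 2 * (1 + β ^ 2)) * t + 2 * α * β) t := by
  have h1 : HasDerivAt (fun x : ℝ => α ^ 2 * (1 + β ^ 2) * x ^ 2 + 2 * α * β * x + 1)
      (α ^ 2 * (1 + β ^ 2) * (2 * t ^ 1) + 2 * α * β * 1) t :=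
    (((hasDerivAt_pow 2 t).const_mul (α ^ 2 * (1 + β ^ 2))).add
      ((hasDerivAt_id t).const_mul (2 * α * β))).add_const 1
  convert h1 using 1
  · funext x; rw [Pfun]
  · ring

lemma hasDerivAt_inner (α β : ℝ) (hα : 0 < α) {t : ℝ} (ht : t ≠ 0) :
    HasDerivAt (fun x => 1 / (α * x) + β) (-α / (α * t) ^ 2) t := by
  have h : HasDerivAt (fun x : ℝ => (α * x)⁻¹) (-α / (α * t) ^ 2) t := by
    have := ((hasDerivAt_id t).const_mul α).inv (mul_ne_zero hα.ne' ht)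
    simp only [mul_one, id_eq] at this
    exact this
  simpa [one_div] using h.add_const β

lemma hasDerivAt_arctan_inner (α β : ℝ) (hα : 0 < α) {t : ℝ} (ht : t ≠ 0) :
    HasDerivAt (fun x => Real.arctan (1 / (α * x) + β))
      (1 / (1 + (1 / (α * t) + β) ^ 2) * (-α / (α * t) ^ 2)) t :=
  (Real.hasDerivAt_arctan _).comp t (hasDerivAt_inner α β hα ht)

lemma one_add_sq_inner (α β : ℝ) (hα : 0 < α) {t : ℝ} (ht : t ≠ 0) :
    1 + (1 / (α * t) + β) ^ 2 = Pfun α β t / (α * t) ^ 2 := by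
  have h : (α * t) ≠ 0 := mul_ne_zero hα.ne' ht
  field_simp
  unfold Pfun; ring

lemma hasDerivAt_Ffun (k α β : ℝ) (hα : 0 < α) {t : ℝ} (ht : 0 < t) :
    HasDerivAt (fun x => Ffun k α β x)
      (k * (α ^ 2 * (1 + β ^ 2)) * t * Real.exp (β * Real.arctan (1 / (α * t) + β))
        / Real.sqrt (Pfun α β t)) t := by
  have hP := hasDerivAt_Pfun α β t
  have hPpos := Pfun_pos hα β t
  have hsq : HasDerivAt (fun x => Real.sqrt (Pfun α β x))
      (1 / (2 * Real.sqrt (Pfun α β t)) * (2 * (α ^ 2 * (1 + β ^ 2)) * t + 2 * α * β)) t :=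
    (Real.hasDerivAt_sqrt hPpos.ne').comp t hP
  have har := hasDerivAt_arctan_inner α β hα ht.ne'
  have hexp := (har.const_mul β).exp
  have total := (hsq.const_mul k).mul hexp
  refine HasDerivAt.congr_deriv total ?_
  symm
  rw [one_add_sq_inner α β hα ht.ne']
  have hs0 : Real.sqrt (Pfun α β t) ≠ 0 := (Real.sqrt_pos.2 hPpos).ne'
  have hαt : α * t ≠ 0 := mul_ne_zero hα.ne' ht.ne'
  set s := Real.sqrt (Pfun α β t) with hs
  have hs2 : Pfun α β t = s ^ 2 := (Real.sq_sqrt hPpos.le).symm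
  rw [hs2]
  clear_value s
  field_simp
  ring

lemma theta_eq_Ffun_of_pos (k α β : ℝ) {x : ℝ} (hx : 0 < x) :
    thetaFun k α β x = Ffun k α β x := by
  rw [thetaFun, if_neg hx.ne', Ffun, abs_of_pos hx, Mfun_eq_Pfun hx]

lemma theta_eventuallyEq (k α β : ℝ) {t : ℝ} (ht : 0 < t) :
    thetaFun k α β =ᶠ[nhds t] fun x => Ffun k α β x := by
  filter_upwards [Ioi_mem_nhds ht] with x hx
  exact theta_eq_Ffun_of_pos k α β hx

lemma hasDerivAt_theta_pos (k α β : ℝ) (hα : 0 < α) {t : ℝ} (ht : 0 < t) :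
    HasDerivAt (thetaFun k α β) (d1 k α β t) t := by
  have h := hasDerivAt_Ffun k α β hα ht
  have h2 : HasDerivAt (thetaFun k α β)
      (k * (α ^ 2 * (1 + β ^ 2)) * t * Real.exp (β * Real.arctan (1 / (α * t) + β))
        / Real.sqrt (Pfun α β t)) t :=
    h.congr_of_eventuallyEq (theta_eventuallyEq k α β ht)
  have : d1 k α β t = k * (α ^ 2 * (1 + β ^ 2)) * t
      * Real.exp (β * Real.arctan (1 / (α * t) + β)) / Real.sqrt (Pfun α β t) := by
    rw [d1, Afun, abs_of_pos ht, Mfun_eq_Pfun ht]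
  rw [this]; exact h2

noncomputable def F1fun (k α β t : ℝ) : ℝ :=
  k * (α ^ 2 * (1 + β ^ 2)) * t * Real.exp (β * Real.arctan (1 / (α * t) + β))
    / Real.sqrt (Pfun α β t)

noncomputable def F2fun (k α β t : ℝ) : ℝ :=
  k * (α ^ 2 * (1 + β ^ 2)) * Real.exp (β * Real.arctan (1 / (α * t) + β))
    / (Pfun α β t * Real.sqrt (Pfun α β t))

lemma d1_eq_F1_of_pos (k α β : ℝ) {x : ℝ} (hx : 0 < x) :
    d1 k α β x = F1fun k α β x := by
  rw [d1, F1fun, Afun, abs_of_pos hx, Mfun_eq_Pfun hx]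

lemma d2_eq_F2_of_pos (k α β : ℝ) {x : ℝ} (hx : 0 < x) :
    d2 k α β x = F2fun k α β x := by
  rw [d2, if_neg hx.ne', F2fun, Afun, abs_of_pos hx, Mfun_eq_Pfun hx]

lemma inner_deriv_simp (α β : ℝ) (hα : 0 < α) {t : ℝ} (ht : 0 < t) :
    1 / (1 + (1 / (α * t) + β) ^ 2) * (-α / (α * t) ^ 2) = -α / Pfun α β t := by
  rw [one_add_sq_inner α β hα ht.ne']
  have hαt : α * t ≠ 0 := mul_ne_zero hα.ne' ht.ne'
  have hP := (Pfun_pos hα β t).ne'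
  field_simp

lemma hasDerivAt_F1 (k α β : ℝ) (hα : 0 < α) {t : ℝ} (ht : 0 < t) :
    HasDerivAt (fun x => F1fun k α β x) (F2fun k α β t) t := by
  have hP := hasDerivAt_Pfun α β t
  have hPpos := Pfun_pos hα β t
  have hs0 : Real.sqrt (Pfun α β t) ≠ 0 := (Real.sqrt_pos.2 hPpos).ne'
  have hsq : HasDerivAt (fun x => Real.sqrt (Pfun α β x))
      (1 / (2 * Real.sqrt (Pfun α β t)) * (2 * (α ^ 2 * (1 + β ^ 2)) * t + 2 * α * β)) t :=
    (Real.hasDerivAt_sqrt hPpos.ne').comp t hP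
  have har := hasDerivAt_arctan_inner α β hα ht.ne'
  have hexp := (har.const_mul β).exp
  have hN := ((hasDerivAt_id t).const_mul (k * (α ^ 2 * (1 + β ^ 2)))).mul hexp
  have total := hN.div hsq hs0
  refine HasDerivAt.congr_deriv total ?_
  symm
  simp only [Pi.mul_apply]
  rw [F2fun, inner_deriv_simp α β hα ht]
  set p := Pfun α β t with hpdef
  have hp : p = α ^ 2 * (1 + β ^ 2) * t ^ 2 + 2 * α * β * t + 1 := by
    rw [hpdef, Pfun]
  set s := Real.sqrt p with hsdef
  have hs2 : s ^ 2 = p := Real.sq_sqrt hPpos.le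
  set E := Real.exp (β * Real.arctan (1 / (α * t) + β)) with hE
  clear_value s p E
  subst hs2
  simp only [id_eq]
  have hαt : α * t ≠ 0 := mul_ne_zero hα.ne' ht.ne'
  field_simp
  linear_combination (-(k * E)) * hp

lemma hasDerivAt_F2 (k α β : ℝ) (hα : 0 < α) {t : ℝ} (ht : 0 < t) :
    HasDerivAt (fun x => F2fun k α β x) (d3 k α β t) t := by
  have hP := hasDerivAt_Pfun α β t
  have hPpos := Pfun_pos hα β t
  have hs0 : Real.sqrt (Pfun α β t) ≠ 0 := (Real.sqrt_pos.2 hPpos).ne'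
  have hsq : HasDerivAt (fun x => Real.sqrt (Pfun α β x))
      (1 / (2 * Real.sqrt (Pfun α β t)) * (2 * (α ^ 2 * (1 + β ^ 2)) * t + 2 * α * β)) t :=
    (Real.hasDerivAt_sqrt hPpos.ne').comp t hP
  have har := hasDerivAt_arctan_inner α β hα ht.ne'
  have hexp := ((har.const_mul β).exp).const_mul (k * (α ^ 2 * (1 + β ^ 2)))
  have hD := hP.mul hsq
  have hD0 : Pfun α β t * Real.sqrt (Pfun α β t) ≠ 0 := mul_ne_zero hPpos.ne' hs0
  have total := hexp.div hD hD0
  refine HasDerivAt.congr_deriv total ?_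
  symm
  simp only [Pi.mul_apply]
  rw [d3, Afun, abs_of_pos ht, Mfun_eq_Pfun ht, div_self ht.ne',
    inner_deriv_simp α β hα ht]
  set p := Pfun α β t with hpdef
  have hp : p = α ^ 2 * (1 + β ^ 2) * t ^ 2 + 2 * α * β * t + 1 := by
    rw [hpdef, Pfun]
  set s := Real.sqrt p with hsdef
  have hs2 : s ^ 2 = p := Real.sq_sqrt hPpos.le
  set E := Real.exp (β * Real.arctan (1 / (α * t) + β)) with hE
  clear_value s p E
  subst hs2
  field_simp
  ring

lemma continuousAt_of_tendsto_ne {f : ℝ → ℝ} {x : ℝ}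
    (h : Tendsto f (nhdsWithin x {x}ᶜ) (nhds (f x))) : ContinuousAt f x := by
  exact continuousWithinAt_compl_self.1 h

lemma tendsto_abs_punctured : Tendsto (fun t : ℝ => |t|) (nhdsWithin 0 {(0:ℝ)}ᶜ) (nhdsWithin 0 (Ioi 0)) := by
  rw [tendsto_nhdsWithin_iff]
  constructor
  · simpa using (continuous_abs.tendsto (0:ℝ)).mono_left nhdsWithin_le_nhds
  · filter_upwards [self_mem_nhdsWithin] with x hx
    exact mem_Ioi.2 (abs_pos.2 hx)

lemma tendsto_E (α β : ℝ) (hα : 0 < α) :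
    Tendsto (fun t => Real.exp (β * Afun α β t)) (nhdsWithin 0 {(0:ℝ)}ᶜ)
      (nhds (Real.exp (β * Real.pi / 2))) := by
  have hmul : Tendsto (fun s : ℝ => α * s) (nhdsWithin 0 (Ioi 0)) (nhdsWithin 0 (Ioi 0)) := by
    rw [tendsto_nhdsWithin_iff]
    constructor
    · simpa using ((continuous_mul_left α).tendsto (0:ℝ)).mono_left
        nhdsWithin_le_nhds
    · filter_upwards [self_mem_nhdsWithin] with x hx
      exact mem_Ioi.2 (mul_pos hα hx)
  have hinv := tendsto_inv_nhdsGT_zero.comp (hmul.comp tendsto_abs_punctured)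
  have hadd := tendsto_atTop_add_const_right _ β hinv
  have harc := (Real.tendsto_arctan_atTop.mono_right nhdsWithin_le_nhds).comp hadd
  have hA : Tendsto (fun t => Afun α β t) (nhdsWithin 0 {(0:ℝ)}ᶜ) (nhds (Real.pi / 2)) := by
    have : (fun t => Afun α β t) = fun t : ℝ => Real.arctan ((α * |t|)⁻¹ + β) := by
      funext t; rw [Afun, one_div]
    rw [this]; exact harc
  have hfin := (Real.continuous_exp.tendsto _).comp (hA.const_mul β)
  simpa [mul_div_assoc, Function.comp_def] using hfin

lemma continuous_M (α β : ℝ) : Continuous (fun t => Mfun α β t) := by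
  unfold Mfun
  exact ((continuous_const.mul (continuous_pow 2)).add
    (continuous_const.mul continuous_abs)).add continuous_const

lemma tendsto_M0 (α β : ℝ) : Tendsto (fun t => Mfun α β t) (nhds 0) (nhds 1) := by
  have := (continuous_M α β).tendsto 0
  simpa [Mfun] using this

lemma tendsto_sqrtM0 (α β : ℝ) :
    Tendsto (fun t => Real.sqrt (Mfun α β t)) (nhds 0) (nhds 1) := by
  have := (Real.continuous_sqrt.tendsto 1).comp (tendsto_M0 α β)
  simpa [Function.comp_def] using this

lemma continuousAt_theta0 (k α β : ℝ) (hα : 0 < α) : ContinuousAt (thetaFun k α β) 0 := by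
  apply continuousAt_of_tendsto_ne
  have h1 : Tendsto (fun x => k * Real.sqrt (Mfun α β x) * Real.exp (β * Afun α β x))
      (nhdsWithin 0 {(0:ℝ)}ᶜ) (nhds (k * 1 * Real.exp (β * Real.pi / 2))) :=
    (((tendsto_sqrtM0 α β).mono_left nhdsWithin_le_nhds).const_mul k).mul (tendsto_E α β hα)
  have h2 : thetaFun k α β =ᶠ[nhdsWithin 0 {(0:ℝ)}ᶜ]
      fun x => k * Real.sqrt (Mfun α β x) * Real.exp (β * Afun α β x) := by
    filter_upwards [self_mem_nhdsWithin] with x hx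
    simp only [thetaFun, Afun, if_neg (show x ≠ 0 from hx)]
  have h3 := h1.congr' h2.symm
  have : thetaFun k α β 0 = k * 1 * Real.exp (β * Real.pi / 2) := by
    rw [thetaFun]; simp
  rw [this]; exact h3

lemma d1_zero (k α β : ℝ) : d1 k α β 0 = 0 := by simp [d1]

lemma continuousAt_d1_0 (k α β : ℝ) (hα : 0 < α) : ContinuousAt (d1 k α β) 0 := by
  apply continuousAt_of_tendsto_ne
  rw [d1_zero]
  have h1 : Tendsto (fun x : ℝ => k * (α ^ 2 * (1 + β ^ 2)) * x)
      (nhdsWithin 0 {(0:ℝ)}ᶜ) (nhds 0) := by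
    simpa using ((continuous_mul_left (k * (α ^ 2 * (1 + β ^ 2)))).tendsto (0:ℝ)).mono_left
      nhdsWithin_le_nhds
  have h2 := (h1.mul (tendsto_E α β hα)).div
    ((tendsto_sqrtM0 α β).mono_left nhdsWithin_le_nhds) one_ne_zero
  simp only [zero_mul, zero_div] at h2
  exact h2

lemma d2_zero (k α β : ℝ) :
    d2 k α β 0 = α ^ 2 * (1 + β ^ 2) * k * Real.exp (β * Real.pi / 2) := by
  simp [d2]

lemma continuousAt_d2_0 (k α β : ℝ) (hα : 0 < α) : ContinuousAt (d2 k α β) 0 := by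
  apply continuousAt_of_tendsto_ne
  have h1 : Tendsto (fun x => k * (α ^ 2 * (1 + β ^ 2)) * Real.exp (β * Afun α β x)
      / (Mfun α β x * Real.sqrt (Mfun α β x))) (nhdsWithin 0 {(0:ℝ)}ᶜ)
      (nhds (k * (α ^ 2 * (1 + β ^ 2)) * Real.exp (β * Real.pi / 2) / (1 * 1))) :=
    ((tendsto_E α β hα).const_mul _).div
      (((tendsto_M0 α β).mul (tendsto_sqrtM0 α β)).mono_left nhdsWithin_le_nhds)
      (by norm_num)
  have h2 : d2 k α β =ᶠ[nhdsWithin 0 {(0:ℝ)}ᶜ]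
      fun x => k * (α ^ 2 * (1 + β ^ 2)) * Real.exp (β * Afun α β x)
        / (Mfun α β x * Real.sqrt (Mfun α β x)) := by
    filter_upwards [self_mem_nhdsWithin] with x hx
    rw [d2, if_neg (show x ≠ 0 from hx)]
  have h3 := h1.congr' h2.symm
  have : d2 k α β 0 = k * (α ^ 2 * (1 + β ^ 2)) * Real.exp (β * Real.pi / 2) / (1 * 1) := by
    rw [d2_zero]; ring
  rw [this]; exact h3

lemma hasDerivAt_theta_ne (k α β : ℝ) (hα : 0 < α) {t : ℝ} (ht : t ≠ 0) :
    HasDerivAt (thetaFun k α β) (d1 k α β t) t := by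
  rcases ht.lt_or_gt with h | h
  · have hpos := hasDerivAt_theta_pos k α β hα (show (0:ℝ) < -t by linarith)
    have := hasDerivAt_even (theta_even k α β) hpos
    rw [d1_odd, neg_neg, neg_neg] at this
    exact this
  · exact hasDerivAt_theta_pos k α β hα h

lemma hasDerivAt_theta_zero (k α β : ℝ) (hα : 0 < α) :
    HasDerivAt (thetaFun k α β) 0 0 := by
  have h := hasDerivAt_of_hasDerivAt_of_ne
    (f := thetaFun k α β) (g := d1 k α β)
    (fun y hy => hasDerivAt_theta_ne k α β hα hy)
    (continuousAt_theta0 k α β hα) (continuousAt_d1_0 k α β hα)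
  rwa [d1_zero] at h

lemma deriv_theta (k α β : ℝ) (hα : 0 < α) :
    deriv (thetaFun k α β) = d1 k α β := by
  funext t
  rcases eq_or_ne t 0 with h | h
  · rw [h, d1_zero]; exact (hasDerivAt_theta_zero k α β hα).deriv
  · exact (hasDerivAt_theta_ne k α β hα h).deriv

lemma hasDerivAt_d1_ne (k α β : ℝ) (hα : 0 < α) {t : ℝ} (ht : t ≠ 0) :
    HasDerivAt (d1 k α β) (d2 k α β t) t := by
  rcases ht.lt_or_gt with h | h
  · have hp : (0:ℝ) < -t := by linarith
    have hpos : HasDerivAt (d1 k α β) (d2 k α β (-t)) (-t) := by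
      have heq : d1 k α β =ᶠ[nhds (-t)] fun x => F1fun k α β x := by
        filter_upwards [Ioi_mem_nhds hp] with x hx
        exact d1_eq_F1_of_pos k α β hx
      have := (hasDerivAt_F1 k α β hα hp).congr_of_eventuallyEq heq
      rwa [← d2_eq_F2_of_pos k α β hp] at this
    have := hasDerivAt_odd (d1_odd k α β) hpos
    rwa [neg_neg, d2_even] at this
  · have heq : d1 k α β =ᶠ[nhds t] fun x => F1fun k α β x := by
      filter_upwards [Ioi_mem_nhds h] with x hx
      exact d1_eq_F1_of_pos k α β hx
    have := (hasDerivAt_F1 k α β hα h).congr_of_eventuallyEq heq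
    rwa [← d2_eq_F2_of_pos k α β h] at this

lemma hasDerivAt_d1_zero (k α β : ℝ) (hα : 0 < α) :
    HasDerivAt (d1 k α β) (d2 k α β 0) 0 :=
  hasDerivAt_of_hasDerivAt_of_ne
    (fun y hy => hasDerivAt_d1_ne k α β hα hy)
    (continuousAt_d1_0 k α β hα) (continuousAt_d2_0 k α β hα)

lemma deriv_d1 (k α β : ℝ) (hα : 0 < α) :
    deriv (d1 k α β) = d2 k α β := by
  funext t
  rcases eq_or_ne t 0 with h | h
  · rw [h]; exact (hasDerivAt_d1_zero k α β hα).deriv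
  · exact (hasDerivAt_d1_ne k α β hα h).deriv

lemma hasDerivAt_d2_ne (k α β : ℝ) (hα : 0 < α) {t : ℝ} (ht : t ≠ 0) :
    HasDerivAt (d2 k α β) (d3 k α β t) t := by
  rcases ht.lt_or_gt with h | h
  · have hp : (0:ℝ) < -t := by linarith
    have hpos : HasDerivAt (d2 k α β) (d3 k α β (-t)) (-t) := by
      have heq : d2 k α β =ᶠ[nhds (-t)] fun x => F2fun k α β x := by
        filter_upwards [Ioi_mem_nhds hp] with x hx
        exact d2_eq_F2_of_pos k α β hx
      exact (hasDerivAt_F2 k α β hα hp).congr_of_eventuallyEq heq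
    have := hasDerivAt_even (d2_even k α β) hpos
    rwa [neg_neg, d3_odd, neg_neg] at this
  · have heq : d2 k α β =ᶠ[nhds t] fun x => F2fun k α β x := by
      filter_upwards [Ioi_mem_nhds h] with x hx
      exact d2_eq_F2_of_pos k α β hx
    exact (hasDerivAt_F2 k α β hα h).congr_of_eventuallyEq heq

lemma continuous_d2 (k α β : ℝ) (hα : 0 < α) : Continuous (d2 k α β) := by
  rw [continuous_iff_continuousAt]
  intro t
  rcases eq_or_ne t 0 with h | h
  · rw [h]; exact continuousAt_d2_0 k α β hα
  · exact (hasDerivAt_d2_ne k α β hα h).differentiableAt.continuousAt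

lemma tendsto_d3_right (k α β : ℝ) (hα : 0 < α) :
    Tendsto (d3 k α β) (nhdsWithin 0 (Ioi 0))
      (nhds (-4 * α * β * (α ^ 2 * (1 + β ^ 2)) * k * Real.exp (β * Real.pi / 2))) := by
  have hE' : Tendsto (fun x => Real.exp (β * Afun α β x)) (nhdsWithin 0 (Ioi 0))
      (nhds (Real.exp (β * Real.pi / 2))) :=
    (tendsto_E α β hα).mono_left (nhdsWithin_mono 0 (fun x hx => ne_of_gt hx))
  have hlin : Tendsto (fun x : ℝ => -4 * α * β - 3 * (α ^ 2 * (1 + β ^ 2)) * x)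
      (nhds 0) (nhds (-4 * α * β)) := by
    have hc : Continuous (fun x : ℝ => -4 * α * β - 3 * (α ^ 2 * (1 + β ^ 2)) * x) := by
      continuity
    have := hc.tendsto (0:ℝ)
    simpa using this
  have hden : Tendsto (fun x => (Mfun α β x) ^ 2 * Real.sqrt (Mfun α β x)) (nhds 0)
      (nhds 1) := by
    have := ((tendsto_M0 α β).pow 2).mul (tendsto_sqrtM0 α β)
    simpa using this
  have htot := ((hE'.const_mul (k * (α ^ 2 * (1 + β ^ 2)))).mul
      (hlin.mono_left nhdsWithin_le_nhds)).div
      (hden.mono_left nhdsWithin_le_nhds) one_ne_zero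
  have heq : (fun x => k * (α ^ 2 * (1 + β ^ 2)) * Real.exp (β * Afun α β x)
      * (-4 * α * β - 3 * (α ^ 2 * (1 + β ^ 2)) * x)
      / ((Mfun α β x) ^ 2 * Real.sqrt (Mfun α β x))) =ᶠ[nhdsWithin 0 (Ioi 0)]
      d3 k α β := by
    filter_upwards [self_mem_nhdsWithin] with x hx
    rw [d3, abs_of_pos hx, div_self (ne_of_gt hx)]
    ring_nf
  have := htot.congr' heq
  have hval : k * (α ^ 2 * (1 + β ^ 2)) * Real.exp (β * Real.pi / 2) * (-4 * α * β) / 1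
      = -4 * α * β * (α ^ 2 * (1 + β ^ 2)) * k * Real.exp (β * Real.pi / 2) := by ring
  rwa [hval] at this

lemma tendsto_d3_left (k α β : ℝ) (hα : 0 < α) :
    Tendsto (d3 k α β) (nhdsWithin 0 (Iio 0))
      (nhds (4 * α * β * (α ^ 2 * (1 + β ^ 2)) * k * Real.exp (β * Real.pi / 2))) := by
  have hE' : Tendsto (fun x => Real.exp (β * Afun α β x)) (nhdsWithin 0 (Iio 0))
      (nhds (Real.exp (β * Real.pi / 2))) :=
    (tendsto_E α β hα).mono_left (nhdsWithin_mono 0 (fun x hx => ne_of_lt hx))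
  have hlin : Tendsto (fun x : ℝ => 4 * α * β - 3 * (α ^ 2 * (1 + β ^ 2)) * x)
      (nhds 0) (nhds (4 * α * β)) := by
    have hc : Continuous (fun x : ℝ => 4 * α * β - 3 * (α ^ 2 * (1 + β ^ 2)) * x) := by
      continuity
    have := hc.tendsto (0:ℝ)
    simpa using this
  have hden : Tendsto (fun x => (Mfun α β x) ^ 2 * Real.sqrt (Mfun α β x)) (nhds 0)
      (nhds 1) := by
    have := ((tendsto_M0 α β).pow 2).mul (tendsto_sqrtM0 α β)
    simpa using this
  have htot := ((hE'.const_mul (k * (α ^ 2 * (1 + β ^ 2)))).mul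
      (hlin.mono_left nhdsWithin_le_nhds)).div
      (hden.mono_left nhdsWithin_le_nhds) one_ne_zero
  have heq : (fun x => k * (α ^ 2 * (1 + β ^ 2)) * Real.exp (β * Afun α β x)
      * (4 * α * β - 3 * (α ^ 2 * (1 + β ^ 2)) * x)
      / ((Mfun α β x) ^ 2 * Real.sqrt (Mfun α β x))) =ᶠ[nhdsWithin 0 (Iio 0)]
      d3 k α β := by
    filter_upwards [self_mem_nhdsWithin] with x hx
    rw [d3, abs_of_neg hx]
    have hx0 : x ≠ 0 := ne_of_lt hx
    rw [div_neg, div_self hx0]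
    ring_nf
  have := htot.congr' heq
  have hval : k * (α ^ 2 * (1 + β ^ 2)) * Real.exp (β * Real.pi / 2) * (4 * α * β) / 1
      = 4 * α * β * (α ^ 2 * (1 + β ^ 2)) * k * Real.exp (β * Real.pi / 2) := by ring
  rwa [hval] at this

lemma deriv_d2_eventually_right (k α β : ℝ) (hα : 0 < α) :
    deriv (d2 k α β) =ᶠ[nhdsWithin 0 (Ioi 0)] d3 k α β := by
  filter_upwards [self_mem_nhdsWithin] with x hx
  exact (hasDerivAt_d2_ne k α β hα (ne_of_gt hx)).deriv

lemma deriv_d2_eventually_left (k α β : ℝ) (hα : 0 < α) :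
    deriv (d2 k α β) =ᶠ[nhdsWithin 0 (Iio 0)] d3 k α β := by
  filter_upwards [self_mem_nhdsWithin] with x hx
  exact (hasDerivAt_d2_ne k α β hα (ne_of_lt hx)).deriv

lemma tendsto_deriv_d2_right (k α β : ℝ) (hα : 0 < α) :
    Tendsto (deriv (d2 k α β)) (nhdsWithin 0 (Ioi 0))
      (nhds (-4 * α * β * (α ^ 2 * (1 + β ^ 2)) * k * Real.exp (β * Real.pi / 2))) :=
  (tendsto_d3_right k α β hα).congr' (deriv_d2_eventually_right k α β hα).symm

lemma tendsto_deriv_d2_left (k α β : ℝ) (hα : 0 < α) :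
    Tendsto (deriv (d2 k α β)) (nhdsWithin 0 (Iio 0))
      (nhds (4 * α * β * (α ^ 2 * (1 + β ^ 2)) * k * Real.exp (β * Real.pi / 2))) :=
  (tendsto_d3_left k α β hα).congr' (deriv_d2_eventually_left k α β hα).symm

lemma not_differentiableAt_d2 (k α β : ℝ) (hk : 0 < k) (hα : 0 < α) (hβ : β ≠ 0) :
    ¬ DifferentiableAt ℝ (d2 k α β) 0 := by
  intro h
  have huniqR : UniqueDiffWithinAt ℝ (Ici (0:ℝ)) 0 := uniqueDiffOn_Ici 0 0 self_mem_Ici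
  have huniqL : UniqueDiffWithinAt ℝ (Iic (0:ℝ)) 0 := uniqueDiffOn_Iic 0 0 self_mem_Iic
  have hIci : HasDerivWithinAt (d2 k α β)
      (-4 * α * β * (α ^ 2 * (1 + β ^ 2)) * k * Real.exp (β * Real.pi / 2)) (Ici 0) 0 :=
    hasDerivWithinAt_Ici_of_tendsto_deriv
      (fun x hx => (hasDerivAt_d2_ne k α β hα (ne_of_gt hx)).differentiableAt.differentiableWithinAt)
      ((continuous_d2 k α β hα).continuousAt.continuousWithinAt)
      self_mem_nhdsWithin (tendsto_deriv_d2_right k α β hα)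
  have hIic : HasDerivWithinAt (d2 k α β)
      (4 * α * β * (α ^ 2 * (1 + β ^ 2)) * k * Real.exp (β * Real.pi / 2)) (Iic 0) 0 :=
    hasDerivWithinAt_Iic_of_tendsto_deriv
      (fun x hx => (hasDerivAt_d2_ne k α β hα (ne_of_lt hx)).differentiableAt.differentiableWithinAt)
      ((continuous_d2 k α β hα).continuousAt.continuousWithinAt)
      self_mem_nhdsWithin (tendsto_deriv_d2_left k α β hα)
  have e1 := hIci.derivWithin huniqR
  have e2 := (h.hasDerivAt.hasDerivWithinAt (s := Ici 0)).derivWithin huniqR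
  have e3 := hIic.derivWithin huniqL
  have e4 := (h.hasDerivAt.hasDerivWithinAt (s := Iic 0)).derivWithin huniqL
  have heq : -4 * α * β * (α ^ 2 * (1 + β ^ 2)) * k * Real.exp (β * Real.pi / 2)
      = 4 * α * β * (α ^ 2 * (1 + β ^ 2)) * k * Real.exp (β * Real.pi / 2) := by
    rw [← e1, e2, ← e4, e3]
  have hX : 4 * α * β * (α ^ 2 * (1 + β ^ 2)) * k * Real.exp (β * Real.pi / 2) ≠ 0 :=
    mul_ne_zero (mul_ne_zero (mul_ne_zero (mul_ne_zero
      (by positivity : (0:ℝ) < 4 * α).ne' hβ)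
      (by positivity : (0:ℝ) < α ^ 2 * (1 + β ^ 2)).ne') hk.ne') (Real.exp_pos _).ne'
  apply hX
  linarith

theorem stmt_19 (k α β : ℝ) (hk : 0 < k) (hα : 0 < α) (hβ : β ≠ 0) :
    ContDiff ℝ 2 (thetaFun k α β) ∧
      deriv (thetaFun k α β) 0 = 0 ∧
      deriv (deriv (thetaFun k α β)) 0
        = α ^ 2 * (1 + β ^ 2) * k * Real.exp (β * Real.pi / 2) ∧
      Tendsto (deriv (deriv (deriv (thetaFun k α β)))) (nhdsWithin 0 (Ioi 0))
        (nhds (-4 * α * β * (α ^ 2 * (1 + β ^ 2)) * k * Real.exp (β * Real.pi / 2))) ∧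
      Tendsto (deriv (deriv (deriv (thetaFun k α β)))) (nhdsWithin 0 (Iio 0))
        (nhds (4 * α * β * (α ^ 2 * (1 + β ^ 2)) * k * Real.exp (β * Real.pi / 2))) ∧
      ¬ DifferentiableAt ℝ (deriv (deriv (thetaFun k α β))) 0 ∧
      ¬ ContDiff ℝ 3 (thetaFun k α β) := by
  have hdiffθ : Differentiable ℝ (thetaFun k α β) := by
    intro t
    rcases eq_or_ne t 0 with h | h
    · rw [h]; exact (hasDerivAt_theta_zero k α β hα).differentiableAt
    · exact (hasDerivAt_theta_ne k α β hα h).differentiableAt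
  have hdiffd1 : Differentiable ℝ (d1 k α β) := by
    intro t
    rcases eq_or_ne t 0 with h | h
    · rw [h]; exact (hasDerivAt_d1_zero k α β hα).differentiableAt
    · exact (hasDerivAt_d1_ne k α β hα h).differentiableAt
  refine ⟨?_, ?_, ?_, ?_, ?_, ?_, ?_⟩
  · rw [show (2 : WithTop ℕ∞) = 1 + 1 from by norm_num, contDiff_succ_iff_deriv]
    refine ⟨hdiffθ, by simp, ?_⟩
    rw [contDiff_one_iff_deriv, deriv_theta k α β hα]
    exact ⟨hdiffd1, by rw [deriv_d1 k α β hα]; exact continuous_d2 k α β hα⟩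
  · rw [deriv_theta k α β hα, d1_zero]
  · rw [deriv_theta k α β hα, deriv_d1 k α β hα, d2_zero]
  · rw [deriv_theta k α β hα, deriv_d1 k α β hα]
    exact tendsto_deriv_d2_right k α β hα
  · rw [deriv_theta k α β hα, deriv_d1 k α β hα]
    exact tendsto_deriv_d2_left k α β hα
  · rw [deriv_theta k α β hα, deriv_d1 k α β hα]
    exact not_differentiableAt_d2 k α β hk hα hβ
  · intro h
    rw [show (3 : WithTop ℕ∞) = 2 + 1 from by norm_num, contDiff_succ_iff_deriv] at h
    have h2 := h.2.2
    rw [show (2 : WithTop ℕ∞) = 1 + 1 from by norm_num, contDiff_succ_iff_deriv] at h2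
    have h4 := (h2.2.2.differentiable one_ne_zero) 0
    rw [deriv_theta k α β hα, deriv_d1 k α β hα] at h4
    exact not_differentiableAt_d2 k α β hk hα hβ h4
end
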